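/- arXiv:1611.05398 — 6 statements merged into one kernel-verified Lean document; each statement's English description precedes it below -/
import Mathlib

section
/- Let U ⊆ ℝ² be open and let ψ and L be real-analytic functions on U satisfying ∂^{1,1}ψ = L·∂²_tψ on U. Then there exist real-analytic functions Q^{k,ℓ}_j on U, defined for all integers k,ℓ ≥ 1 and 2 ≤ j ≤ k+ℓ, such that ∂^{k,ℓ}ψ = Σ_{j=2}^{k+ℓ} Q^{k,ℓ}_j ∂^j_tψ on U, and which satisfy the relations: Q^{1,1}_2 = L; for every k ≥ 2: Q^{k,1}_2 = ∂_s Q^{k−1,1}_2 + Σ_{j=2}^{k} Q^{k−1,1}_j ∂^{j−1}_t L, Q^{k,1}_j = ∂_s Q^{k−1,1}_j + Σ_{r=j−1}^{k} C(r−1, j−2) Q^{k−1,1}_r ∂^{r+1−j}_t L for 3 ≤ j ≤ k, and Q^{k,1}_{k+1} = L^k; and for every ℓ ≥ 2 and k ≥ 1: Q^{k,ℓ}_2 = ∂_t Q^{k,ℓ−1}_2, Q^{k,ℓ}_j = ∂_t Q^{k,ℓ−1}_j + Q^{k,ℓ−1}_{j−1} for 3 ≤ j ≤ k+ℓ−1,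 and Q^{k,ℓ}_{k+ℓ} = L^k. -/
open MeasureTheory Filter

/-- mixed partial derivative ∂^{k,ℓ}ψ = ∂^{k+ℓ}ψ/∂s^k∂t^ℓ. -/
noncomputable def pd (ψ : ℝ → ℝ → ℝ) (k l : ℕ) (s t : ℝ) : ℝ :=
  iteratedDeriv k (fun s' => iteratedDeriv l (ψ s') t) s

namespace S5
noncomputable def dd (v : ℝ × ℝ) (F : ℝ × ℝ → ℝ) : ℝ × ℝ → ℝ := fun p => fderiv ℝ F p v

lemma dd_analyticAt {F : ℝ × ℝ → ℝ} {p : ℝ × ℝ} (h : AnalyticAt ℝ F p) (v : ℝ × ℝ) :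
    AnalyticAt ℝ (dd v F) p := by
  have h1 : AnalyticAt ℝ (fderiv ℝ F) p := h.fderiv
  have h2 := ((ContinuousLinearMap.apply ℝ ℝ v).analyticAt (fderiv ℝ F p)).comp h1
  exact h2

lemma dd_congr_nhds {F G : ℝ × ℝ → ℝ} {p : ℝ × ℝ} (v : ℝ × ℝ) (h : F =ᶠ[nhds p] G) :
    dd v F p = dd v G p := by
  simp only [dd]; rw [h.fderiv_eq]

lemma eqOn_nhds {U : Set (ℝ × ℝ)} (hU : IsOpen U) {p : ℝ × ℝ} (hp : p ∈ U)
    {F G : ℝ × ℝ → ℝ} (h : ∀ q ∈ U, F q = G q) : F =ᶠ[nhds p] G :=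
  Filter.eventually_of_mem (hU.mem_nhds hp) h

lemma dd_zero {F : ℝ × ℝ → ℝ} (h : ∀ q, F q = 0) (v : ℝ × ℝ) (p : ℝ × ℝ) :
    dd v F p = 0 := by
  have : F = fun _ => (0 : ℝ) := funext h
  simp [dd, this]

lemma dd_dd_eq {F : ℝ × ℝ → ℝ} {p : ℝ × ℝ} (h : AnalyticAt ℝ F p) (v w : ℝ × ℝ) :
    dd v (dd w F) p = fderiv ℝ (fderiv ℝ F) p v w := by
  have h1 : HasFDerivAt (fderiv ℝ F) (fderiv ℝ (fderiv ℝ F) p) p :=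
    h.fderiv.differentiableAt.hasFDerivAt
  have h2 : HasFDerivAt (dd w F)
      ((ContinuousLinearMap.apply ℝ ℝ w).comp (fderiv ℝ (fderiv ℝ F) p)) p :=
    (ContinuousLinearMap.apply ℝ ℝ w).hasFDerivAt.comp p h1
  simp only [dd]
  rw [h2.fderiv]
  rfl

lemma clairaut {F : ℝ × ℝ → ℝ} {p : ℝ × ℝ} (h : AnalyticAt ℝ F p) (v w : ℝ × ℝ) :
    dd v (dd w F) p = dd w (dd v F) p := by
  rw [dd_dd_eq h, dd_dd_eq h]
  exact (h.contDiffAt.isSymmSndFDerivAt (n := 2) (by simp)) v w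

lemma deriv_sect_t {F : ℝ × ℝ → ℝ} {p : ℝ × ℝ} (h : AnalyticAt ℝ F p) :
    deriv (fun t => F (p.1, t)) p.2 = dd (0, 1) F p := by
  have h1 : HasDerivAt (fun t : ℝ => ((p.1, t) : ℝ × ℝ)) ((0 : ℝ), (1 : ℝ)) p.2 :=
    (hasDerivAt_const _ _).prodMk (hasDerivAt_id _)
  have h0 : HasFDerivAt F (fderiv ℝ F p) ((fun t : ℝ => ((p.1, t) : ℝ × ℝ)) p.2) := by
    simpa using h.differentiableAt.hasFDerivAt
  have h2 := h0.comp_hasDerivAt p.2 h1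
  exact h2.deriv

lemma deriv_sect_s {F : ℝ × ℝ → ℝ} {p : ℝ × ℝ} (h : AnalyticAt ℝ F p) :
    deriv (fun s => F (s, p.2)) p.1 = dd (1, 0) F p := by
  have h1 : HasDerivAt (fun s : ℝ => ((s, p.2) : ℝ × ℝ)) ((1 : ℝ), (0 : ℝ)) p.1 :=
    (hasDerivAt_id _).prodMk (hasDerivAt_const _ _)
  have h0 : HasFDerivAt F (fderiv ℝ F p) ((fun s : ℝ => ((s, p.2) : ℝ × ℝ)) p.1) := by
    simpa using h.differentiableAt.hasFDerivAt
  have h2 := h0.comp_hasDerivAt p.1 h1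
  exact h2.deriv

lemma deriv_congr_slice_t {U : Set (ℝ × ℝ)} (hU : IsOpen U) {s t : ℝ} (hst : (s, t) ∈ U)
    {f g : ℝ → ℝ} (h : ∀ t', (s, t') ∈ U → f t' = g t') : deriv f t = deriv g t := by
  have hop : IsOpen {t' : ℝ | (s, t') ∈ U} :=
    hU.preimage (Continuous.prodMk_right s)
  exact EventuallyEq.deriv_eq (Filter.eventually_of_mem (hop.mem_nhds hst) h)

lemma deriv_congr_slice_s {U : Set (ℝ × ℝ)} (hU : IsOpen U) {s t : ℝ} (hst : (s, t) ∈ U)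
    {f g : ℝ → ℝ} (h : ∀ s', (s', t) ∈ U → f s' = g s') : deriv f s = deriv g s := by
  have hop : IsOpen {s' : ℝ | (s', t) ∈ U} :=
    hU.preimage (continuous_id.prodMk continuous_const)
  exact EventuallyEq.deriv_eq (Filter.eventually_of_mem (hop.mem_nhds hst) h)
lemma iter_analyticAt {F : ℝ × ℝ → ℝ} {p : ℝ × ℝ} (h : AnalyticAt ℝ F p) (v : ℝ × ℝ) :
    ∀ m, AnalyticAt ℝ ((dd v)^[m] F) p := by
  intro m
  induction m with
  | zero => simpa using h
  | succ m ih => rw [Function.iterate_succ_apply']; exact dd_analyticAt ih v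

lemma iter_congrU {U : Set (ℝ × ℝ)} (hU : IsOpen U) {F G : ℝ × ℝ → ℝ} (v : ℝ × ℝ)
    (h : ∀ q ∈ U, F q = G q) : ∀ m, ∀ p ∈ U, (dd v)^[m] F p = (dd v)^[m] G p := by
  intro m
  induction m with
  | zero => simpa using h
  | succ m ih =>
    intro p hp
    rw [Function.iterate_succ_apply', Function.iterate_succ_apply']
    exact dd_congr_nhds v (eqOn_nhds hU hp ih)

lemma comm_iter {U : Set (ℝ × ℝ)} (hU : IsOpen U) {F : ℝ × ℝ → ℝ} (v w : ℝ × ℝ)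
    (hF : ∀ q ∈ U, AnalyticAt ℝ F q) :
    ∀ m, ∀ p ∈ U, (dd w)^[m] (dd v F) p = dd v ((dd w)^[m] F) p := by
  intro m
  induction m generalizing F with
  | zero => intro p hp; simp
  | succ m ih =>
    intro p hp
    rw [Function.iterate_succ_apply]
    have h1 : ∀ q ∈ U, dd w (dd v F) q = dd v (dd w F) q := fun q hq => clairaut (hF q hq) w v
    rw [iter_congrU hU w h1 m p hp]
    rw [ih (fun q hq => dd_analyticAt (hF q hq) w) p hp]
    rw [← Function.iterate_succ_apply]

lemma dd_sum_cmul {ι : Type*} {s : Finset ι} (c : ι → ℝ) {A B : ι → ℝ × ℝ → ℝ} {p : ℝ × ℝ}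
    (hA : ∀ i ∈ s, AnalyticAt ℝ (A i) p) (hB : ∀ i ∈ s, AnalyticAt ℝ (B i) p) (v : ℝ × ℝ) :
    dd v (fun q => ∑ i ∈ s, c i * (A i q * B i q)) p =
      ∑ i ∈ s, c i * (dd v (A i) p * B i p + A i p * dd v (B i) p) := by
  have H : ∀ i ∈ s, HasFDerivAt (fun q => c i * (A i q * B i q))
      (c i • (A i p • fderiv ℝ (B i) p + B i p • fderiv ℝ (A i) p)) p := fun i hi =>
    (((hA i hi).differentiableAt.hasFDerivAt.mul
      (hB i hi).differentiableAt.hasFDerivAt).const_mul (c i))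
  have := (HasFDerivAt.fun_sum H).fderiv
  simp only [dd]
  rw [this]
  simp only [ContinuousLinearMap.coe_sum', Finset.sum_apply, ContinuousLinearMap.coe_smul',
    Pi.smul_apply, ContinuousLinearMap.add_apply, smul_eq_mul]
  refine Finset.sum_congr rfl fun i hi => ?_
  ring

lemma pascal_sum (m : ℕ) (a b : ℕ → ℝ) :
    ∑ i ∈ Finset.range (m + 2), (Nat.choose (m + 1) i : ℝ) * (a i * b (m + 1 - i)) =
      ∑ i ∈ Finset.range (m + 1), (Nat.choose m i : ℝ) * (a (i + 1) * b (m - i)) +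
        ∑ i ∈ Finset.range (m + 1), (Nat.choose m i : ℝ) * (a i * b (m + 1 - i)) := by
  rw [Finset.sum_range_succ' _ (m + 1)]
  conv_rhs => rw [Finset.sum_range_succ' (fun i => (Nat.choose m i : ℝ) * (a i * b (m + 1 - i))) m]
  have h1 : ∀ i ∈ Finset.range (m + 1), (Nat.choose (m + 1) (i + 1) : ℝ) * (a (i + 1) * b (m + 1 - (i + 1))) =
      (Nat.choose m i : ℝ) * (a (i + 1) * b (m - i)) + (Nat.choose m (i + 1) : ℝ) * (a (i + 1) * b (m - i)) := by
    intro i _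
    rw [Nat.choose_succ_succ, Nat.succ_sub_succ]
    push_cast
    ring
  rw [Finset.sum_congr rfl h1, Finset.sum_add_distrib]
  have h2 : ∑ i ∈ Finset.range (m + 1), (Nat.choose m (i + 1) : ℝ) * (a (i + 1) * b (m - i)) =
      ∑ i ∈ Finset.range m, (Nat.choose m (i + 1) : ℝ) * (a (i + 1) * b (m - i)) := by
    rw [Finset.sum_range_succ, Nat.choose_succ_self]
    simp
  have h3 : ∀ i ∈ Finset.range m, (Nat.choose m (i + 1) : ℝ) * (a (i + 1) * b (m - i)) =
      (Nat.choose m (i + 1) : ℝ) * (a (i + 1) * b (m + 1 - (i + 1))) := by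
    intro i _; rw [Nat.succ_sub_succ]
  rw [h2, Finset.sum_congr rfl h3]
  simp [Nat.choose_zero_right]
  ring

lemma leibniz {U : Set (ℝ × ℝ)} (hU : IsOpen U) {A B : ℝ × ℝ → ℝ}
    (hA : ∀ q ∈ U, AnalyticAt ℝ A q) (hB : ∀ q ∈ U, AnalyticAt ℝ B q) :
    ∀ m, ∀ p ∈ U, (dd (0, 1))^[m] (fun q => A q * B q) p =
      ∑ i ∈ Finset.range (m + 1),
        (Nat.choose m i : ℝ) * ((dd (0, 1))^[i] A p * (dd (0, 1))^[m - i] B p) := by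
  intro m
  induction m with
  | zero => intro p hp; simp
  | succ m ih =>
    intro p hp
    rw [Function.iterate_succ_apply']
    rw [dd_congr_nhds _ (eqOn_nhds hU hp ih)]
    rw [dd_sum_cmul (fun i => (Nat.choose m i : ℝ))
      (fun i _ => iter_analyticAt (hA p hp) _ i) (fun i _ => iter_analyticAt (hB p hp) _ _) (0, 1)]
    have h4 : ∀ i ∈ Finset.range (m + 1),
        (Nat.choose m i : ℝ) * (dd (0, 1) ((dd (0, 1))^[i] A) p * (dd (0, 1))^[m - i] B p +
          (dd (0, 1))^[i] A p * dd (0, 1) ((dd (0, 1))^[m - i] B) p) =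
        (Nat.choose m i : ℝ) * ((dd (0, 1))^[i + 1] A p * (dd (0, 1))^[m - i] B p) +
          (Nat.choose m i : ℝ) * ((dd (0, 1))^[i] A p * (dd (0, 1))^[m + 1 - i] B p) := by
      intro i hi
      rw [← Function.iterate_succ_apply' (dd (0, 1)) i A,
        ← Function.iterate_succ_apply' (dd (0, 1)) (m - i) B]
      have h5 : (m - i).succ = m + 1 - i := by
        have := Finset.mem_range.mp hi; omega
      rw [h5, Nat.succ_eq_add_one]; ring
    rw [Finset.sum_congr rfl h4, Finset.sum_add_distrib]
    rw [pascal_sum m (fun i => (dd (0, 1))^[i] A p) (fun i => (dd (0, 1))^[i] B p)]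

lemma dd_sum_mul {ι : Type*} {s : Finset ι} {A B : ι → ℝ × ℝ → ℝ} {p : ℝ × ℝ}
    (hA : ∀ i ∈ s, AnalyticAt ℝ (A i) p) (hB : ∀ i ∈ s, AnalyticAt ℝ (B i) p) (v : ℝ × ℝ) :
    dd v (fun q => ∑ i ∈ s, A i q * B i q) p =
      ∑ i ∈ s, (dd v (A i) p * B i p + A i p * dd v (B i) p) := by
  have H : ∀ i ∈ s, HasFDerivAt (fun q => A i q * B i q)
      (A i p • fderiv ℝ (B i) p + B i p • fderiv ℝ (A i) p) p := fun i hi =>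
    ((hA i hi).differentiableAt.hasFDerivAt.mul (hB i hi).differentiableAt.hasFDerivAt)
  have := (HasFDerivAt.fun_sum H).fderiv
  simp only [dd]
  rw [this]
  simp only [ContinuousLinearMap.coe_sum', Finset.sum_apply, ContinuousLinearMap.add_apply,
    ContinuousLinearMap.coe_smul', Pi.smul_apply, smul_eq_mul]
  refine Finset.sum_congr rfl fun i hi => ?_
  ring

noncomputable def Qu (Lu : ℝ × ℝ → ℝ) : ℕ → ℕ → ℕ → ℝ × ℝ → ℝ
  | _, 0, _ => fun _ => 0
  | 0, _ + 1, _ => fun _ => 0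
  | 1, 1, j => if j = 2 then Lu else fun _ => 0
  | k + 2, 1, j =>
      if j < 2 then fun _ => 0
      else dd (1, 0) (Qu Lu (k + 1) 1 j) + fun p =>
        ∑ r ∈ Finset.Icc (j - 1) (k + 2),
          (Nat.choose (r - 1) (j - 2) : ℝ) * (Qu Lu (k + 1) 1 r p * (dd (0, 1))^[r + 1 - j] Lu p)
  | k + 1, l + 2, j =>
      if j < 2 then fun _ => 0
      else dd (0, 1) (Qu Lu (k + 1) (l + 1) j) + Qu Lu (k + 1) (l + 1) (j - 1)
  termination_by k l _ => (k, l)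

lemma Qu_11 (Lu : ℝ × ℝ → ℝ) (j : ℕ) :
    Qu Lu 1 1 j = if j = 2 then Lu else fun _ => 0 := by
  simp only [Qu]

lemma Qu_l1 (Lu : ℝ × ℝ → ℝ) {k : ℕ} (hk : 2 ≤ k) (j : ℕ) :
    Qu Lu k 1 j = if j < 2 then (fun _ => 0) else
      dd (1, 0) (Qu Lu (k - 1) 1 j) + fun p =>
        ∑ r ∈ Finset.Icc (j - 1) k,
          (Nat.choose (r - 1) (j - 2) : ℝ) * (Qu Lu (k - 1) 1 r p * (dd (0, 1))^[r + 1 - j] Lu p) := by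
  obtain ⟨m, rfl⟩ : ∃ m, k = m + 2 := ⟨k - 2, by omega⟩
  have h1 : m + 2 - 1 = m + 1 := by omega
  rw [h1]
  simp only [Qu]

lemma Qu_l2 (Lu : ℝ × ℝ → ℝ) {k l : ℕ} (hk : 1 ≤ k) (hl : 2 ≤ l) (j : ℕ) :
    Qu Lu k l j = if j < 2 then (fun _ => 0) else
      dd (0, 1) (Qu Lu k (l - 1) j) + Qu Lu k (l - 1) (j - 1) := by
  obtain ⟨m, rfl⟩ : ∃ m, k = m + 1 := ⟨k - 1, by omega⟩
  obtain ⟨n, rfl⟩ : ∃ n, l = n + 2 := ⟨l - 2, by omega⟩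
  have h1 : n + 2 - 1 = n + 1 := by omega
  rw [h1]
  simp only [Qu]

lemma Qu_zero1 (Lu : ℝ × ℝ → ℝ) :
    ∀ k, 1 ≤ k → ∀ j, (j < 2 ∨ k + 1 < j) → ∀ x, Qu Lu k 1 j x = 0 := by
  intro k hk
  induction k, hk using Nat.le_induction with
  | base => intro j hj x; rw [Qu_11, if_neg (by omega)]
  | succ k hk ih =>
    intro j hj x
    rw [Qu_l1 Lu (by omega) j]
    have h1 : k + 1 - 1 = k := by omega
    rw [h1]
    by_cases h2 : j < 2
    · rw [if_pos h2]
    · rw [if_neg h2]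
      have hj' : k + 2 < j := by omega
      have hz : ∀ q, Qu Lu k 1 j q = 0 := fun q => ih j (Or.inr (by omega)) q
      have he : Finset.Icc (j - 1) (k + 1) = ∅ := Finset.Icc_eq_empty (by omega)
      simp [Pi.add_apply, dd_zero hz, he]

lemma Qu_top1 (Lu : ℝ × ℝ → ℝ) :
    ∀ k, 1 ≤ k → ∀ x, Qu Lu k 1 (k + 1) x = Lu x ^ k := by
  intro k hk
  induction k, hk using Nat.le_induction with
  | base => intro x; rw [Qu_11, if_pos rfl, pow_one]
  | succ k hk ih =>
    intro x
    rw [Qu_l1 Lu (by omega), if_neg (by omega)]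
    have h1 : k + 1 - 1 = k := by omega
    rw [h1]
    have hz : ∀ q, Qu Lu k 1 (k + 1 + 1) q = 0 := fun q => Qu_zero1 Lu k hk _ (Or.inr (by omega)) q
    have he : Finset.Icc (k + 1 + 1 - 1) (k + 1) = {k + 1} := by
      rw [show k + 1 + 1 - 1 = k + 1 from by omega, Finset.Icc_self]
    rw [Pi.add_apply, dd_zero hz, he, Finset.sum_singleton]
    rw [show k + 1 - 1 = k from by omega, show k + 1 + 1 - 2 = k from by omega,
      show k + 1 + 1 - (k + 1 + 1) = 0 from by omega, Nat.choose_self]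
    simp only [Function.iterate_zero_apply, Nat.cast_one, one_mul, zero_add]
    rw [ih x, pow_succ]

lemma Qu_zero (Lu : ℝ × ℝ → ℝ) :
    ∀ l, 1 ≤ l → ∀ k, 1 ≤ k → ∀ j, (j < 2 ∨ k + l < j) → ∀ x, Qu Lu k l j x = 0 := by
  intro l hl
  induction l, hl using Nat.le_induction with
  | base => exact fun k hk => Qu_zero1 Lu k hk
  | succ l hl ih =>
    intro k hk j hj x
    rw [Qu_l2 Lu hk (by omega), show l + 1 - 1 = l from by omega]
    by_cases h2 : j < 2
    · rw [if_pos h2]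
    · rw [if_neg h2]
      have hz : ∀ q, Qu Lu k l j q = 0 := fun q => ih k hk j (Or.inr (by omega)) q
      rw [Pi.add_apply, dd_zero hz, ih k hk (j - 1) (Or.inr (by omega)) x, add_zero]

lemma Qu_top (Lu : ℝ × ℝ → ℝ) :
    ∀ l, 1 ≤ l → ∀ k, 1 ≤ k → ∀ x, Qu Lu k l (k + l) x = Lu x ^ k := by
  intro l hl
  induction l, hl using Nat.le_induction with
  | base => exact fun k hk => Qu_top1 Lu k hk
  | succ l hl ih =>
    intro k hk x
    rw [Qu_l2 Lu hk (by omega), if_neg (by omega), show l + 1 - 1 = l from by omega]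
    have hz : ∀ q, Qu Lu k l (k + (l + 1)) q = 0 :=
      fun q => Qu_zero Lu l hl k hk _ (Or.inr (by omega)) q
    rw [Pi.add_apply, dd_zero hz, show k + (l + 1) - 1 = k + l from by omega, ih k hk x, zero_add]

lemma Qu_analyticAt1 {Lu : ℝ × ℝ → ℝ} {p : ℝ × ℝ} (hLu : AnalyticAt ℝ Lu p) :
    ∀ k, 1 ≤ k → ∀ j, AnalyticAt ℝ (Qu Lu k 1 j) p := by
  intro k hk
  induction k, hk using Nat.le_induction with
  | base =>
    intro j; rw [Qu_11]
    by_cases h : j = 2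
    · rw [if_pos h]; exact hLu
    · rw [if_neg h]; exact analyticAt_const
  | succ k hk ih =>
    intro j
    rw [Qu_l1 Lu (by omega), show k + 1 - 1 = k from by omega]
    by_cases h : j < 2
    · rw [if_pos h]; exact analyticAt_const
    · rw [if_neg h]
      refine (dd_analyticAt (ih j) _).add ?_
      exact Finset.analyticAt_fun_sum _ fun r _ =>
        analyticAt_const.mul ((ih r).mul (iter_analyticAt hLu _ _))

lemma Qu_analyticAt {Lu : ℝ × ℝ → ℝ} {p : ℝ × ℝ} (hLu : AnalyticAt ℝ Lu p) :
    ∀ l, 1 ≤ l → ∀ k, 1 ≤ k → ∀ j, AnalyticAt ℝ (Qu Lu k l j) p := by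
  intro l hl
  induction l, hl using Nat.le_induction with
  | base => exact fun k hk => Qu_analyticAt1 hLu k hk
  | succ l hl ih =>
    intro k hk j
    rw [Qu_l2 Lu hk (by omega), show l + 1 - 1 = l from by omega]
    by_cases h : j < 2
    · rw [if_pos h]; exact analyticAt_const
    · rw [if_neg h]
      exact (dd_analyticAt (ih k hk j) _).add (ih k hk (j - 1))

lemma double_reindex (k : ℕ) (Q Li T : ℕ → ℝ) (hQ1 : Q 1 = 0) :
    ∑ j ∈ Finset.Icc 2 (k + 1), ∑ i ∈ Finset.range j,
        (Nat.choose (j - 1) i : ℝ) * (Q j * (Li i * T (j + 1 - i))) =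
      ∑ m ∈ Finset.Icc 2 (k + 2),
        (∑ r ∈ Finset.Icc (m - 1) (k + 1),
          (Nat.choose (r - 1) (m - 2) : ℝ) * (Q r * Li (r + 1 - m))) * T m := by
  have stepA : ∀ j ∈ Finset.Icc 2 (k + 1),
      ∑ i ∈ Finset.range j, (Nat.choose (j - 1) i : ℝ) * (Q j * (Li i * T (j + 1 - i))) =
      ∑ m ∈ Finset.Icc 2 (k + 2),
        (Nat.choose (j - 1) (m - 2) : ℝ) * (Q j * (Li (j + 1 - m) * T m)) := by
    intro j hj
    obtain ⟨hj2, hjk⟩ := Finset.mem_Icc.mp hj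
    have e1 : ∑ i ∈ Finset.range j, (Nat.choose (j - 1) i : ℝ) * (Q j * (Li i * T (j + 1 - i))) =
        ∑ m ∈ Finset.Icc 2 (j + 1),
          (Nat.choose (j - 1) (m - 2) : ℝ) * (Q j * (Li (j + 1 - m) * T m)) := by
      refine Finset.sum_nbij' (fun i => j + 1 - i) (fun m => j + 1 - m) ?_ ?_ ?_ ?_ ?_
      · intro a ha; simp only [Finset.mem_Icc, Finset.mem_range] at *; omega
      · intro a ha; simp only [Finset.mem_Icc, Finset.mem_range] at *; omega
      · intro a ha; simp only [Finset.mem_Icc, Finset.mem_range] at *; omega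
      · intro a ha; simp only [Finset.mem_Icc, Finset.mem_range] at *; omega
      · intro a ha
        have haj := Finset.mem_range.mp ha
        have h1 : j + 1 - a - 2 = j - 1 - a := by omega
        have h2 : j + 1 - (j + 1 - a) = a := by omega
        rw [h1, h2, Nat.choose_symm (by omega)]
    rw [e1]
    refine Finset.sum_subset (Finset.Icc_subset_Icc_right (by omega)) ?_
    intro m hm hnot
    have h1 := Finset.mem_Icc.mp hm
    have h2 : j + 1 < m := by
      by_contra h
      exact hnot (Finset.mem_Icc.mpr (by omega))
    rw [Nat.choose_eq_zero_of_lt (by omega), Nat.cast_zero, zero_mul]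
  rw [Finset.sum_congr rfl stepA, Finset.sum_comm]
  refine Finset.sum_congr rfl fun m hm => ?_
  obtain ⟨hm2, hmk⟩ := Finset.mem_Icc.mp hm
  rw [Finset.sum_mul]
  have e2 : ∑ j ∈ Finset.Icc 2 (k + 1),
      (Nat.choose (j - 1) (m - 2) : ℝ) * (Q j * (Li (j + 1 - m) * T m)) =
      ∑ j ∈ Finset.Icc 1 (k + 1),
      (Nat.choose (j - 1) (m - 2) : ℝ) * (Q j * (Li (j + 1 - m) * T m)) := by
    refine Finset.sum_subset (Finset.Icc_subset_Icc_left (by omega)) ?_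
    intro r hr hnot
    have h1 := Finset.mem_Icc.mp hr
    have hr1 : r = 1 := by
      by_contra h
      exact hnot (Finset.mem_Icc.mpr (by omega))
    subst hr1
    rcases Nat.lt_or_ge 2 m with h | h
    · rw [Nat.choose_eq_zero_of_lt (by omega), Nat.cast_zero, zero_mul]
    · have hm2' : m = 2 := by omega
      subst hm2'
      rw [hQ1]
      ring
  have e3 : ∑ r ∈ Finset.Icc (m - 1) (k + 1),
      (Nat.choose (r - 1) (m - 2) : ℝ) * (Q r * Li (r + 1 - m)) * T m =
      ∑ r ∈ Finset.Icc 1 (k + 1),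
      (Nat.choose (r - 1) (m - 2) : ℝ) * (Q r * Li (r + 1 - m)) * T m := by
    refine Finset.sum_subset (Finset.Icc_subset_Icc_left (by omega)) ?_
    intro r hr hnot
    have h1 := Finset.mem_Icc.mp hr
    have h2 : r < m - 1 := by
      by_contra h
      exact hnot (Finset.mem_Icc.mpr (by omega))
    rw [Nat.choose_eq_zero_of_lt (by omega), Nat.cast_zero, zero_mul, zero_mul]
  rw [e2, e3]
  exact Finset.sum_congr rfl fun r _ => by ring

lemma shift_reindex (n : ℕ) (C B T : ℕ → ℝ) (hB1 : B 1 = 0) (hC : C (n + 1) = 0) :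
    ∑ j ∈ Finset.Icc 2 n, (C j * T j + B j * T (j + 1)) =
      ∑ m ∈ Finset.Icc 2 (n + 1), (C m + B (m - 1)) * T m := by
  have hsplit : ∑ m ∈ Finset.Icc 2 (n + 1), (C m + B (m - 1)) * T m =
      ∑ m ∈ Finset.Icc 2 (n + 1), C m * T m + ∑ m ∈ Finset.Icc 2 (n + 1), B (m - 1) * T m := by
    rw [← Finset.sum_add_distrib]
    exact Finset.sum_congr rfl fun m _ => by ring
  rw [hsplit]
  rcases Nat.eq_zero_or_pos n with hn | hn
  · subst hn
    have h1 : Finset.Icc 2 0 = (∅ : Finset ℕ) := Finset.Icc_eq_empty (by omega)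
    have h2 : Finset.Icc 2 (0 + 1) = (∅ : Finset ℕ) := Finset.Icc_eq_empty (by omega)
    rw [h1, h2]
    simp
  · have e1 : ∑ m ∈ Finset.Icc 2 (n + 1), C m * T m =
        ∑ m ∈ Finset.Icc 2 n, C m * T m := by
      rw [Finset.sum_Icc_succ_top (by omega), hC, zero_mul, add_zero]
    have e2 : ∑ m ∈ Finset.Icc 2 (n + 1), B (m - 1) * T m =
        ∑ m ∈ Finset.Icc 3 (n + 1), B (m - 1) * T m := by
      refine (Finset.sum_subset (Finset.Icc_subset_Icc_left (by omega)) ?_).symm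
      intro m hm hnot
      have h1 := Finset.mem_Icc.mp hm
      have h2 : m = 2 := by
        by_contra h
        exact hnot (Finset.mem_Icc.mpr (by omega))
      subst h2
      rw [show (2:ℕ) - 1 = 1 from rfl, hB1, zero_mul]
    have e3 : ∑ j ∈ Finset.Icc 2 n, B j * T (j + 1) =
        ∑ m ∈ Finset.Icc 3 (n + 1), B (m - 1) * T m := by
      refine Finset.sum_nbij' (fun j => j + 1) (fun m => m - 1) ?_ ?_ ?_ ?_ ?_
      · intro a ha; simp only [Finset.mem_Icc] at *; omega
      · intro a ha; simp only [Finset.mem_Icc] at *; omega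
      · intro a ha; omega
      · intro a ha; simp only [Finset.mem_Icc] at *; omega
      · intro a ha; rw [show a + 1 - 1 = a from by omega]
    rw [e1, e2, ← e3, ← Finset.sum_add_distrib]

lemma itd_t {U : Set (ℝ × ℝ)} (hU : IsOpen U) {F : ℝ × ℝ → ℝ}
    (hF : ∀ q ∈ U, AnalyticAt ℝ F q) {f : ℝ → ℝ → ℝ} (hf : ∀ s t, f s t = F (s, t)) :
    ∀ m s t, (s, t) ∈ U → iteratedDeriv m (f s) t = (dd (0, 1))^[m] F (s, t) := by
  intro m
  induction m with
  | zero => intro s t _; simpa [iteratedDeriv_zero] using hf s t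
  | succ m ih =>
    intro s t hst
    rw [iteratedDeriv_succ]
    rw [deriv_congr_slice_t hU hst (fun t' ht' => ih s t' ht')]
    rw [Function.iterate_succ_apply']
    exact deriv_sect_t (iter_analyticAt (hF (s, t) hst) (0, 1) m)

lemma itd_s {U : Set (ℝ × ℝ)} (hU : IsOpen U) {G : ℝ × ℝ → ℝ}
    (hG : ∀ q ∈ U, AnalyticAt ℝ G q) {h : ℝ → ℝ → ℝ}
    (hh : ∀ s t, (s, t) ∈ U → h s t = G (s, t)) :
    ∀ k s t, (s, t) ∈ U → iteratedDeriv k (fun s' => h s' t) s = (dd (1, 0))^[k] G (s, t) := by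
  intro k
  induction k with
  | zero => intro s t hst; simpa [iteratedDeriv_zero] using hh s t hst
  | succ k ih =>
    intro s t hst
    rw [iteratedDeriv_succ]
    rw [deriv_congr_slice_s hU hst (fun s' hs' => ih s' t hs')]
    rw [Function.iterate_succ_apply']
    exact deriv_sect_s (iter_analyticAt (hG (s, t) hst) (1, 0) k)

lemma pd_0m {U : Set (ℝ × ℝ)} (hU : IsOpen U) {F : ℝ × ℝ → ℝ}
    (hF : ∀ q ∈ U, AnalyticAt ℝ F q) {f : ℝ → ℝ → ℝ} (hf : ∀ s t, f s t = F (s, t))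
    (m : ℕ) {s t : ℝ} (hst : (s, t) ∈ U) : pd f 0 m s t = (dd (0, 1))^[m] F (s, t) := by
  have e : pd f 0 m s t = iteratedDeriv m (f s) t := by simp [pd, iteratedDeriv_zero]
  rw [e]
  exact itd_t hU hF hf m s t hst

lemma pd_kl {U : Set (ℝ × ℝ)} (hU : IsOpen U) {F : ℝ × ℝ → ℝ}
    (hF : ∀ q ∈ U, AnalyticAt ℝ F q) {f : ℝ → ℝ → ℝ} (hf : ∀ s t, f s t = F (s, t))
    (k l : ℕ) {s t : ℝ} (hst : (s, t) ∈ U) :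
    pd f k l s t = (dd (1, 0))^[k] ((dd (0, 1))^[l] F) (s, t) := by
  have hG : ∀ q ∈ U, AnalyticAt ℝ ((dd (0, 1))^[l] F) q :=
    fun q hq => iter_analyticAt (hF q hq) _ l
  have hh : ∀ s t, (s, t) ∈ U → iteratedDeriv l (f s) t = (dd (0, 1))^[l] F (s, t) :=
    fun s t h => itd_t hU hF hf l s t h
  simp only [pd]
  exact itd_s hU hG hh k s t hst

lemma pd_10 {F : ℝ × ℝ → ℝ} {f : ℝ → ℝ → ℝ} (hf : ∀ s t, f s t = F (s, t)) {p : ℝ × ℝ}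
    (h : AnalyticAt ℝ F p) : pd f 1 0 p.1 p.2 = dd (1, 0) F p := by
  have e : (fun s' => iteratedDeriv 0 (f s') p.2) = fun s' => F (s', p.2) :=
    funext fun s' => by simp [iteratedDeriv_zero, hf]
  simp only [pd, e, iteratedDeriv_one]
  exact deriv_sect_s h

lemma pd_01 {F : ℝ × ℝ → ℝ} {f : ℝ → ℝ → ℝ} (hf : ∀ s t, f s t = F (s, t)) {p : ℝ × ℝ}
    (h : AnalyticAt ℝ F p) : pd f 0 1 p.1 p.2 = dd (0, 1) F p := by
  have e : f p.1 = fun t => F (p.1, t) := funext fun t => hf p.1 t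
  simp only [pd, iteratedDeriv_zero, iteratedDeriv_one]
  rw [e]
  exact deriv_sect_t h

lemma dsT {U : Set (ℝ × ℝ)} (hU : IsOpen U) {Ψ Lu : ℝ × ℝ → ℝ}
    (hΨ : ∀ q ∈ U, AnalyticAt ℝ Ψ q) (hLu : ∀ q ∈ U, AnalyticAt ℝ Lu q)
    (hfac' : ∀ p ∈ U, dd (1, 0) (dd (0, 1) Ψ) p = Lu p * (dd (0, 1))^[2] Ψ p) :
    ∀ j, 1 ≤ j → ∀ p ∈ U, dd (1, 0) ((dd (0, 1))^[j] Ψ) p =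
      ∑ i ∈ Finset.range j, (Nat.choose (j - 1) i : ℝ) *
        ((dd (0, 1))^[i] Lu p * (dd (0, 1))^[j + 1 - i] Ψ p) := by
  intro j hj p hp
  obtain ⟨m, rfl⟩ : ∃ m, j = m + 1 := ⟨j - 1, by omega⟩
  have hdt : ∀ q ∈ U, AnalyticAt ℝ (dd (0, 1) Ψ) q := fun q hq => dd_analyticAt (hΨ q hq) _
  rw [Function.iterate_succ_apply]
  rw [← comm_iter hU (1, 0) (0, 1) hdt m p hp]
  rw [iter_congrU hU (0, 1) (fun q hq => hfac' q hq) m p hp]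
  rw [leibniz hU hLu (fun q hq => iter_analyticAt (hΨ q hq) _ 2) m p hp]
  refine Finset.sum_congr rfl fun i hi => ?_
  have him := Finset.mem_range.mp hi
  rw [← Function.iterate_add_apply (dd (0, 1)) (m - i) 2 Ψ]
  rw [show m - i + 2 = m + 1 + 1 - i from by omega, show m + 1 - 1 = m from by omega]

lemma main1 {U : Set (ℝ × ℝ)} (hU : IsOpen U) {Ψ Lu : ℝ × ℝ → ℝ}
    (hΨ : ∀ q ∈ U, AnalyticAt ℝ Ψ q) (hLu : ∀ q ∈ U, AnalyticAt ℝ Lu q)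
    (hfac' : ∀ p ∈ U, dd (1, 0) (dd (0, 1) Ψ) p = Lu p * (dd (0, 1))^[2] Ψ p) :
    ∀ k, 1 ≤ k → ∀ p ∈ U, (dd (1, 0))^[k] ((dd (0, 1))^[1] Ψ) p =
      ∑ j ∈ Finset.Icc 2 (k + 1), Qu Lu k 1 j p * (dd (0, 1))^[j] Ψ p := by
  intro k hk
  induction k, hk using Nat.le_induction with
  | base =>
    intro p hp
    rw [show (1 : ℕ) + 1 = 2 from rfl, Finset.Icc_self, Finset.sum_singleton]
    rw [Qu_11, if_pos rfl]
    simpa [Function.iterate_one] using hfac' p hp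
  | succ k hk ih =>
    intro p hp
    rw [Function.iterate_succ_apply']
    rw [dd_congr_nhds (1, 0) (eqOn_nhds hU hp ih)]
    rw [dd_sum_mul (fun j _ => Qu_analyticAt (hLu p hp) 1 le_rfl k hk j)
      (fun j _ => iter_analyticAt (hΨ p hp) _ j) (1, 0)]
    have step1 : ∀ j ∈ Finset.Icc 2 (k + 1),
        dd (1, 0) (Qu Lu k 1 j) p * (dd (0, 1))^[j] Ψ p +
          Qu Lu k 1 j p * dd (1, 0) ((dd (0, 1))^[j] Ψ) p =
        dd (1, 0) (Qu Lu k 1 j) p * (dd (0, 1))^[j] Ψ p +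
          ∑ i ∈ Finset.range j, (Nat.choose (j - 1) i : ℝ) *
            (Qu Lu k 1 j p * ((dd (0, 1))^[i] Lu p * (dd (0, 1))^[j + 1 - i] Ψ p)) := by
      intro j hj
      have hj1 : 1 ≤ j := by have := Finset.mem_Icc.mp hj; omega
      rw [dsT hU hΨ hLu hfac' j hj1 p hp, Finset.mul_sum]
      congr 1
      exact Finset.sum_congr rfl fun i _ => by ring
    rw [Finset.sum_congr rfl step1, Finset.sum_add_distrib]
    rw [double_reindex k (fun r => Qu Lu k 1 r p) (fun i => (dd (0, 1))^[i] Lu p)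
      (fun j => (dd (0, 1))^[j] Ψ p) (Qu_zero1 Lu k hk 1 (Or.inl (by omega)) p)]
    have e1 : ∑ j ∈ Finset.Icc 2 (k + 1), dd (1, 0) (Qu Lu k 1 j) p * (dd (0, 1))^[j] Ψ p =
        ∑ j ∈ Finset.Icc 2 (k + 2), dd (1, 0) (Qu Lu k 1 j) p * (dd (0, 1))^[j] Ψ p := by
      rw [Finset.sum_Icc_succ_top (by omega : 2 ≤ k + 1 + 1)]
      rw [dd_zero (Qu_zero1 Lu k hk (k + 2) (Or.inr (by omega))) (1, 0) p, zero_mul, add_zero]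
    rw [e1, ← Finset.sum_add_distrib]
    refine Finset.sum_congr (by rw [show k + 1 + 1 = k + 2 from by omega]) fun m hm => ?_
    have hm2 := (Finset.mem_Icc.mp hm).1
    rw [Qu_l1 Lu (by omega : 2 ≤ k + 1) m, if_neg (by omega),
      show k + 1 - 1 = k from by omega, Pi.add_apply]
    ring

lemma mainrep {U : Set (ℝ × ℝ)} (hU : IsOpen U) {Ψ Lu : ℝ × ℝ → ℝ}
    (hΨ : ∀ q ∈ U, AnalyticAt ℝ Ψ q) (hLu : ∀ q ∈ U, AnalyticAt ℝ Lu q)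
    (hfac' : ∀ p ∈ U, dd (1, 0) (dd (0, 1) Ψ) p = Lu p * (dd (0, 1))^[2] Ψ p) :
    ∀ l, 1 ≤ l → ∀ k, 1 ≤ k → ∀ p ∈ U, (dd (1, 0))^[k] ((dd (0, 1))^[l] Ψ) p =
      ∑ j ∈ Finset.Icc 2 (k + l), Qu Lu k l j p * (dd (0, 1))^[j] Ψ p := by
  intro l hl
  induction l, hl using Nat.le_induction with
  | base => exact fun k hk => main1 hU hΨ hLu hfac' k hk
  | succ l hl ih =>
    intro k hk p hp
    rw [show (dd (0, 1))^[l + 1] Ψ = dd (0, 1) ((dd (0, 1))^[l] Ψ) from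
      Function.iterate_succ_apply' _ _ _]
    rw [comm_iter hU (0, 1) (1, 0) (fun q hq => iter_analyticAt (hΨ q hq) _ l) k p hp]
    rw [dd_congr_nhds (0, 1) (eqOn_nhds hU hp (ih k hk))]
    rw [dd_sum_mul (fun j _ => Qu_analyticAt (hLu p hp) l hl k hk j)
      (fun j _ => iter_analyticAt (hΨ p hp) _ j) (0, 1)]
    have step : ∀ j ∈ Finset.Icc 2 (k + l),
        dd (0, 1) (Qu Lu k l j) p * (dd (0, 1))^[j] Ψ p +
          Qu Lu k l j p * dd (0, 1) ((dd (0, 1))^[j] Ψ) p =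
        dd (0, 1) (Qu Lu k l j) p * (dd (0, 1))^[j] Ψ p +
          Qu Lu k l j p * (dd (0, 1))^[j + 1] Ψ p := by
      intro j _
      rw [← Function.iterate_succ_apply' (dd (0, 1)) j Ψ]
    rw [Finset.sum_congr rfl step]
    rw [shift_reindex (k + l) (fun j => dd (0, 1) (Qu Lu k l j) p) (fun j => Qu Lu k l j p)
      (fun j => (dd (0, 1))^[j] Ψ p) (Qu_zero Lu l hl k hk 1 (Or.inl (by omega)) p)
      (dd_zero (Qu_zero Lu l hl k hk (k + l + 1) (Or.inr (by omega))) (0, 1) p)]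
    refine Finset.sum_congr (by rw [show k + (l + 1) = k + l + 1 from by omega]) fun m hm => ?_
    have hm2 := (Finset.mem_Icc.mp hm).1
    rw [Qu_l2 Lu hk (by omega : 2 ≤ l + 1) m, if_neg (by omega),
      show l + 1 - 1 = l from by omega, Pi.add_apply]

end S5

open S5 in
/-- Existence of the coefficients Q^{k,ℓ}_j with ∂^{k,ℓ}ψ = Σ_{j=2}^{k+ℓ} Q^{k,ℓ}_j ∂^j_tψ,
satisfying the stated recursive relations. -/
theorem stmt5 (U : Set (ℝ × ℝ)) (hU : IsOpen U)
    (ψ L : ℝ → ℝ → ℝ)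
    (hψ : ∀ p ∈ U, AnalyticAt ℝ (fun q : ℝ × ℝ => ψ q.1 q.2) p)
    (hL : ∀ p ∈ U, AnalyticAt ℝ (fun q : ℝ × ℝ => L q.1 q.2) p)
    (hfac : ∀ p ∈ U, pd ψ 1 1 p.1 p.2 = L p.1 p.2 * pd ψ 0 2 p.1 p.2) :
    ∃ Q : ℕ → ℕ → ℕ → ℝ → ℝ → ℝ,
      -- analyticity of the coefficients on U
      (∀ k l j : ℕ, 1 ≤ k → 1 ≤ l → 2 ≤ j → j ≤ k + l →
        ∀ p ∈ U, AnalyticAt ℝ (fun q : ℝ × ℝ => Q k l j q.1 q.2) p) ∧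
      -- the representation ∂^{k,ℓ}ψ = Σ_{j=2}^{k+ℓ} Q^{k,ℓ}_j ∂^j_tψ on U
      (∀ k l : ℕ, 1 ≤ k → 1 ≤ l → ∀ p ∈ U,
        pd ψ k l p.1 p.2 =
          ∑ j ∈ Finset.Icc 2 (k + l), Q k l j p.1 p.2 * pd ψ 0 j p.1 p.2) ∧
      -- Q^{1,1}_2 = L
      (∀ p ∈ U, Q 1 1 2 p.1 p.2 = L p.1 p.2) ∧
      -- ℓ = 1, j = 2 relation, k ≥ 2
      (∀ k : ℕ, 2 ≤ k → ∀ p ∈ U,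
        Q k 1 2 p.1 p.2 =
          pd (Q (k - 1) 1 2) 1 0 p.1 p.2 +
            ∑ j ∈ Finset.Icc 2 k, Q (k - 1) 1 j p.1 p.2 * pd L 0 (j - 1) p.1 p.2) ∧
      -- ℓ = 1, 3 ≤ j ≤ k relation
      (∀ k j : ℕ, 2 ≤ k → 3 ≤ j → j ≤ k → ∀ p ∈ U,
        Q k 1 j p.1 p.2 =
          pd (Q (k - 1) 1 j) 1 0 p.1 p.2 +
            ∑ r ∈ Finset.Icc (j - 1) k,
              (Nat.choose (r - 1) (j - 2) : ℝ) * Q (k - 1) 1 r p.1 p.2 *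
                pd L 0 (r + 1 - j) p.1 p.2) ∧
      -- ℓ = 1, j = k + 1 relation
      (∀ k : ℕ, 1 ≤ k → ∀ p ∈ U, Q k 1 (k + 1) p.1 p.2 = (L p.1 p.2) ^ k) ∧
      -- ℓ ≥ 2, j = 2 relation
      (∀ k l : ℕ, 1 ≤ k → 2 ≤ l → ∀ p ∈ U,
        Q k l 2 p.1 p.2 = pd (Q k (l - 1) 2) 0 1 p.1 p.2) ∧
      -- ℓ ≥ 2, 3 ≤ j ≤ k + ℓ − 1 relation
      (∀ k l j : ℕ, 1 ≤ k → 2 ≤ l → 3 ≤ j → j ≤ k + l - 1 → ∀ p ∈ U,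
        Q k l j p.1 p.2 =
          pd (Q k (l - 1) j) 0 1 p.1 p.2 + Q k (l - 1) (j - 1) p.1 p.2) ∧
      -- ℓ ≥ 2, j = k + ℓ relation
      (∀ k l : ℕ, 1 ≤ k → 2 ≤ l → ∀ p ∈ U,
        Q k l (k + l) p.1 p.2 = (L p.1 p.2) ^ k) := by
  have hfac' : ∀ p ∈ U, dd (1, 0) (dd (0, 1) (fun q : ℝ × ℝ => ψ q.1 q.2)) p =
      (fun q : ℝ × ℝ => L q.1 q.2) p * (dd (0, 1))^[2] (fun q : ℝ × ℝ => ψ q.1 q.2) p := by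
    intro p hp
    have hst : (p.1, p.2) ∈ U := by rw [Prod.mk.eta]; exact hp
    have h3 := hfac p hp
    rw [pd_kl hU hψ (fun _ _ => rfl) 1 1 hst, pd_0m hU hψ (fun _ _ => rfl) 2 hst] at h3
    simpa [Function.iterate_one, Prod.mk.eta] using h3
  refine ⟨fun k l j s t => Qu (fun q : ℝ × ℝ => L q.1 q.2) k l j (s, t),
    ?_, ?_, ?_, ?_, ?_, ?_, ?_, ?_, ?_⟩
  · -- analyticity
    intro k l j hk hl _ _ p hp
    have he : (fun q : ℝ × ℝ => Qu (fun q : ℝ × ℝ => L q.1 q.2) k l j (q.1, q.2)) =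
        Qu (fun q : ℝ × ℝ => L q.1 q.2) k l j := funext fun q => by rw [Prod.mk.eta]
    dsimp only
    rw [he]
    exact Qu_analyticAt (hL p hp) l hl k hk j
  · -- representation
    intro k l hk hl p hp
    dsimp only
    have hst : (p.1, p.2) ∈ U := by rw [Prod.mk.eta]; exact hp
    rw [pd_kl hU hψ (fun _ _ => rfl) k l hst, Prod.mk.eta]
    rw [mainrep hU hψ hL hfac' l hl k hk p hp]
    refine Finset.sum_congr rfl fun j hj => ?_
    rw [pd_0m hU hψ (fun _ _ => rfl) j hst, Prod.mk.eta]
  · -- Q 1 1 2 = L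
    intro p hp
    dsimp only
    rw [Qu_11, if_pos rfl]
  · -- l = 1, j = 2
    intro k hk2 p hp
    dsimp only
    have hst : (p.1, p.2) ∈ U := by rw [Prod.mk.eta]; exact hp
    rw [Prod.mk.eta]
    rw [Qu_l1 _ hk2 2, if_neg (by omega), Pi.add_apply]
    rw [pd_10 (fun _ _ => rfl) (Qu_analyticAt (hL p hp) 1 le_rfl (k - 1) (by omega) 2)]
    congr 1
    have e0 : ∀ j ∈ Finset.Icc 2 k,
        Qu (fun q : ℝ × ℝ => L q.1 q.2) (k - 1) 1 j p * pd L 0 (j - 1) p.1 p.2 =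
        (Nat.choose (j - 1) (2 - 2) : ℝ) *
          (Qu (fun q : ℝ × ℝ => L q.1 q.2) (k - 1) 1 j p *
            (dd (0, 1))^[j + 1 - 2] (fun q : ℝ × ℝ => L q.1 q.2) p) := by
      intro j hj
      rw [pd_0m hU hL (fun _ _ => rfl) (j - 1) hst, Prod.mk.eta,
        show (2 : ℕ) - 2 = 0 from rfl, Nat.choose_zero_right,
        show j + 1 - 2 = j - 1 from by omega, Nat.cast_one, one_mul]
    rw [Finset.sum_congr rfl e0]
    refine (Finset.sum_subset (Finset.Icc_subset_Icc_left (by omega)) ?_).symm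
    intro r hr hnot
    have h1 := Finset.mem_Icc.mp hr
    have hr1 : r = 1 := by by_contra h; exact hnot (Finset.mem_Icc.mpr (by omega))
    subst hr1
    rw [Qu_zero1 _ (k - 1) (by omega) 1 (Or.inl (by omega)) p]
    ring
  · -- l = 1, 3 ≤ j ≤ k
    intro k j hk2 hj3 hjk p hp
    dsimp only
    have hst : (p.1, p.2) ∈ U := by rw [Prod.mk.eta]; exact hp
    rw [Prod.mk.eta]
    rw [Qu_l1 _ hk2 j, if_neg (by omega), Pi.add_apply]
    rw [pd_10 (fun _ _ => rfl) (Qu_analyticAt (hL p hp) 1 le_rfl (k - 1) (by omega) j)]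
    congr 1
    refine Finset.sum_congr rfl fun r hr => ?_
    rw [pd_0m hU hL (fun _ _ => rfl) (r + 1 - j) hst, Prod.mk.eta]
    ring
  · -- l = 1, j = k + 1
    intro k hk p hp
    dsimp only
    exact Qu_top1 _ k hk (p.1, p.2)
  · -- l ≥ 2, j = 2
    intro k l hk hl2 p hp
    dsimp only
    rw [Prod.mk.eta]
    rw [Qu_l2 _ hk hl2 2, if_neg (by omega), Pi.add_apply]
    rw [pd_01 (fun _ _ => rfl) (Qu_analyticAt (hL p hp) (l - 1) (by omega) k hk 2)]
    rw [show (2 : ℕ) - 1 = 1 from rfl,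
      Qu_zero _ (l - 1) (by omega) k hk 1 (Or.inl (by omega)) p, add_zero]
  · -- l ≥ 2, 3 ≤ j ≤ k + l - 1
    intro k l j hk hl2 hj3 hjk p hp
    dsimp only
    rw [Prod.mk.eta]
    rw [Qu_l2 _ hk hl2 j, if_neg (by omega), Pi.add_apply]
    rw [pd_01 (fun _ _ => rfl) (Qu_analyticAt (hL p hp) (l - 1) (by omega) k hk j)]
  · -- l ≥ 2, j = k + l
    intro k l hk hl2 p hp
    dsimp only
    exact Qu_top _ l (by omega) k hk (p.1, p.2)
end

section
/- Let U ⊆ ℝ² be open and let ψ and L be real-analytic functions on U satisfying ∂^{1,1}ψ = L·∂²_tψ on U. Then for every integer j ≥ 1, the identity ∂^{1,j}ψ = Σ_{r=2}^{j+1} C(j−1, r−2) (∂^{j+1−r}_t L)·∂^r_tψ holds on U. -/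
open MeasureTheory Filter

namespace Stmt6Aux

/-- partial derivative in the second variable, as an operator. -/
noncomputable def pt (F : ℝ × ℝ → ℝ) : ℝ × ℝ → ℝ := fun q => fderiv ℝ F q (0, 1)

lemma pt_analytic {U : Set (ℝ × ℝ)} {F : ℝ × ℝ → ℝ} (hF : AnalyticOnNhd ℝ F U) :
    AnalyticOnNhd ℝ (pt F) U := fun p hp =>
  ((ContinuousLinearMap.apply ℝ ℝ ((0, 1) : ℝ × ℝ)).analyticAt _).comp (hF.fderiv p hp)

lemma pt_iter_analytic {U : Set (ℝ × ℝ)} {F : ℝ × ℝ → ℝ} (hF : AnalyticOnNhd ℝ F U) :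
    ∀ m : ℕ, AnalyticOnNhd ℝ (pt^[m] F) U := by
  intro m
  induction m with
  | zero => simpa using hF
  | succ m ih => rw [Function.iterate_succ_apply']; exact pt_analytic ih

lemma hasDerivAt_t {F : ℝ × ℝ → ℝ} {s t : ℝ} (hF : DifferentiableAt ℝ F (s, t)) :
    HasDerivAt (fun t' => F (s, t')) (pt F (s, t)) t :=
  hF.hasFDerivAt.comp_hasDerivAt t ((hasDerivAt_const t s).prodMk (hasDerivAt_id t))

lemma hasDerivAt_s {F : ℝ × ℝ → ℝ} {s t : ℝ} (hF : DifferentiableAt ℝ F (s, t)) :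
    HasDerivAt (fun s' => F (s', t)) (fderiv ℝ F (s, t) (1, 0)) s :=
  hF.hasFDerivAt.comp_hasDerivAt s ((hasDerivAt_id s).prodMk (hasDerivAt_const s t))

lemma section_eq {U : Set (ℝ × ℝ)} (hU : IsOpen U) {F : ℝ × ℝ → ℝ}
    (hF : AnalyticOnNhd ℝ F U) :
    ∀ m : ℕ, ∀ s t : ℝ, (s, t) ∈ U →
      iteratedDeriv m (fun t' => F (s, t')) t = pt^[m] F (s, t) := by
  intro m
  induction m with
  | zero => intro s t _; simp
  | succ m ih =>
    intro s t hst
    rw [iteratedDeriv_succ]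
    have hev : (fun t' => iteratedDeriv m (fun t'' => F (s, t'')) t') =ᶠ[nhds t]
        (fun t' => pt^[m] F (s, t')) := by
      have hmem : ∀ᶠ t' in nhds t, (s, t') ∈ U :=
        (Continuous.prodMk_right s).continuousAt.preimage_mem_nhds (hU.mem_nhds hst)
      filter_upwards [hmem] with t' ht' using ih s t' ht'
    rw [hev.deriv_eq, Function.iterate_succ_apply']
    exact (hasDerivAt_t ((pt_iter_analytic hF m (s, t) hst).differentiableAt)).deriv

lemma clairaut {U : Set (ℝ × ℝ)} {F : ℝ × ℝ → ℝ} (hF : AnalyticOnNhd ℝ F U)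
    {p : ℝ × ℝ} (hp : p ∈ U) :
    fderiv ℝ (pt F) p (1, 0) = pt (fun q => fderiv ℝ F q (1, 0)) p := by
  have hd2 : DifferentiableAt ℝ (fderiv ℝ F) p := (hF.fderiv p hp).differentiableAt
  have hsym : IsSymmSndFDerivAt ℝ F p :=
    ((hF p hp).contDiffAt (n := 2)).isSymmSndFDerivAt (by simp)
  have h1 : fderiv ℝ (pt F) p (1, 0) = fderiv ℝ (fderiv ℝ F) p (1, 0) (0, 1) := by
    have h := ((ContinuousLinearMap.apply ℝ ℝ ((0, 1) : ℝ × ℝ)).hasFDerivAt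
        (x := fderiv ℝ F p)).comp p hd2.hasFDerivAt
    have h' : fderiv ℝ (pt F) p =
        (ContinuousLinearMap.apply ℝ ℝ ((0, 1) : ℝ × ℝ)).comp (fderiv ℝ (fderiv ℝ F) p) :=
      h.fderiv
    rw [h']; rfl
  have h2 : pt (fun q => fderiv ℝ F q (1, 0)) p = fderiv ℝ (fderiv ℝ F) p (0, 1) (1, 0) := by
    have h := ((ContinuousLinearMap.apply ℝ ℝ ((1, 0) : ℝ × ℝ)).hasFDerivAt
        (x := fderiv ℝ F p)).comp p hd2.hasFDerivAt
    have h' : fderiv ℝ (fun q => fderiv ℝ F q (1, 0)) p =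
        (ContinuousLinearMap.apply ℝ ℝ ((1, 0) : ℝ × ℝ)).comp (fderiv ℝ (fderiv ℝ F) p) :=
      h.fderiv
    show fderiv ℝ (fun q => fderiv ℝ F q (1, 0)) p (0, 1) = _
    rw [h']; rfl
  rw [h1, h2, hsym (1, 0) (0, 1)]

lemma pascal (a b : ℕ → ℝ) (m : ℕ) :
    ∑ i ∈ Finset.range (m + 1), ((m.choose i : ℝ) * b (m + 1 - i) * a (i + 2)
        + (m.choose i : ℝ) * b (m - i) * a (i + 3)) =
    ∑ i ∈ Finset.range (m + 2), ((m + 1).choose i : ℝ) * b (m + 1 - i) * a (i + 2) := by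
  rw [Finset.sum_add_distrib]
  rw [Finset.sum_range_succ' (fun i => ((m + 1).choose i : ℝ) * b (m + 1 - i) * a (i + 2)) (m + 1)]
  rw [Finset.sum_range_succ' (fun i => ((m).choose i : ℝ) * b (m + 1 - i) * a (i + 2)) m]
  have e1 : ∀ i : ℕ, m + 1 - (i + 1) = m - i := fun i => by omega
  simp only [e1, Nat.choose_succ_succ, Nat.cast_add, Nat.choose_zero_right, Nat.cast_one,
    Nat.sub_zero, add_mul, Nat.succ_eq_add_one]
  rw [Finset.sum_add_distrib,
    Finset.sum_range_succ (fun x => ((m.choose (x + 1) : ℝ)) * b (m - x) * a (x + 1 + 2)) m]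
  simp only [Nat.choose_succ_self, Nat.cast_zero, zero_mul, add_zero]
  simp only [show ∀ x : ℕ, x + 1 + 2 = x + 3 from fun _ => rfl]
  ring

lemma pd_zero_eq {U : Set (ℝ × ℝ)} (hU : IsOpen U) {φ : ℝ → ℝ → ℝ}
    (hφ : AnalyticOnNhd ℝ (fun q : ℝ × ℝ => φ q.1 q.2) U) (m : ℕ) {p : ℝ × ℝ} (h : p ∈ U) :
    pd φ 0 m p.1 p.2 = pt^[m] (fun q : ℝ × ℝ => φ q.1 q.2) p := by
  have h' : ((p.1, p.2) : ℝ × ℝ) ∈ U := h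
  have := section_eq hU hφ m p.1 p.2 h'
  simpa [pd, iteratedDeriv_zero] using this

lemma pd_one_eq {U : Set (ℝ × ℝ)} (hU : IsOpen U) {φ : ℝ → ℝ → ℝ}
    (hφ : AnalyticOnNhd ℝ (fun q : ℝ × ℝ => φ q.1 q.2) U) (j : ℕ) {p : ℝ × ℝ} (h : p ∈ U) :
    pd φ 1 j p.1 p.2 = fderiv ℝ (pt^[j] (fun q : ℝ × ℝ => φ q.1 q.2)) p (1, 0) := by
  have h' : ((p.1, p.2) : ℝ × ℝ) ∈ U := h
  have hev : (fun s' => iteratedDeriv j (φ s') p.2) =ᶠ[nhds p.1]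
      (fun s' => pt^[j] (fun q : ℝ × ℝ => φ q.1 q.2) (s', p.2)) := by
    have hmem : ∀ᶠ s' in nhds p.1, ((s', p.2) : ℝ × ℝ) ∈ U :=
      (continuous_id.prodMk continuous_const).continuousAt.preimage_mem_nhds (hU.mem_nhds h')
    filter_upwards [hmem] with s' hs' using section_eq hU hφ j s' p.2 hs'
  simp only [pd, iteratedDeriv_one]
  rw [hev.deriv_eq]
  exact (hasDerivAt_s ((pt_iter_analytic hφ j (p.1, p.2) h').differentiableAt)).deriv

end Stmt6Aux

open Stmt6Aux in
/-- The useful identity: if ∂^{1,1}ψ = L·∂²_tψ on the open set U, then for every j ≥ 1,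
∂^{1,j}ψ = Σ_{r=2}^{j+1} C(j−1, r−2) (∂^{j+1−r}_t L)·∂^r_tψ on U. -/
theorem stmt6 (U : Set (ℝ × ℝ)) (hU : IsOpen U)
    (ψ L : ℝ → ℝ → ℝ)
    (hψ : ∀ p ∈ U, AnalyticAt ℝ (fun q : ℝ × ℝ => ψ q.1 q.2) p)
    (hL : ∀ p ∈ U, AnalyticAt ℝ (fun q : ℝ × ℝ => L q.1 q.2) p)
    (hfac : ∀ p ∈ U, pd ψ 1 1 p.1 p.2 = L p.1 p.2 * pd ψ 0 2 p.1 p.2) :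
    ∀ j : ℕ, 1 ≤ j → ∀ p ∈ U,
      pd ψ 1 j p.1 p.2 =
        ∑ r ∈ Finset.Icc 2 (j + 1),
          (Nat.choose (j - 1) (r - 2) : ℝ) * pd L 0 (j + 1 - r) p.1 p.2 *
            pd ψ 0 r p.1 p.2 := by
  have hF : AnalyticOnNhd ℝ (fun q : ℝ × ℝ => ψ q.1 q.2) U := hψ
  have hG : AnalyticOnNhd ℝ (fun q : ℝ × ℝ => L q.1 q.2) U := hL
  set F : ℝ × ℝ → ℝ := fun q : ℝ × ℝ => ψ q.1 q.2 with hFdef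
  set G : ℝ × ℝ → ℝ := fun q : ℝ × ℝ => L q.1 q.2 with hGdef
  have key : ∀ m : ℕ, ∀ q ∈ U, fderiv ℝ (pt^[m + 1] F) q (1, 0) =
      ∑ i ∈ Finset.range (m + 1), (m.choose i : ℝ) * pt^[m - i] G q * pt^[i + 2] F q := by
    intro m
    induction m with
    | zero =>
      intro q hq
      have h1 := pd_one_eq hU hF 1 hq
      have h2 := pd_zero_eq hU hF 2 hq
      have h3 := hfac q hq
      simp only [zero_add, Finset.range_one, Finset.sum_singleton, Nat.choose_self,
        Nat.cast_one, Nat.sub_zero, Function.iterate_zero, id_eq, one_mul, Nat.zero_sub]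
      rw [← h1, h3, h2]
    | succ m ih =>
      intro q hq
      have h1 : fderiv ℝ (pt^[m + 1 + 1] F) q (1, 0) =
          pt (fun r => fderiv ℝ (pt^[m + 1] F) r (1, 0)) q := by
        rw [show pt^[m + 1 + 1] F = pt (pt^[m + 1] F) from Function.iterate_succ_apply' pt (m + 1) F]
        exact clairaut (pt_iter_analytic hF (m + 1)) hq
      have h2 : fderiv ℝ (fun r => fderiv ℝ (pt^[m + 1] F) r (1, 0)) q =
          fderiv ℝ (fun r => ∑ i ∈ Finset.range (m + 1),
            (m.choose i : ℝ) * pt^[m - i] G r * pt^[i + 2] F r) q :=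
        (Filter.eventuallyEq_of_mem (hU.mem_nhds hq) (fun r hr => ih r hr)).fderiv_eq
      have hdiffY : DifferentiableAt ℝ (fun r => ∑ i ∈ Finset.range (m + 1),
          (m.choose i : ℝ) * pt^[m - i] G r * pt^[i + 2] F r) q := by
        apply DifferentiableAt.fun_sum
        intro i _
        exact ((pt_iter_analytic hG (m - i) q hq).differentiableAt.const_mul _).mul
          (pt_iter_analytic hF (i + 2) q hq).differentiableAt
      have hY1 : HasDerivAt (fun t' => ∑ i ∈ Finset.range (m + 1),
          (m.choose i : ℝ) * pt^[m - i] G (q.1, t') * pt^[i + 2] F (q.1, t'))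
          (pt (fun r => ∑ i ∈ Finset.range (m + 1),
            (m.choose i : ℝ) * pt^[m - i] G r * pt^[i + 2] F r) q) q.2 :=
        hasDerivAt_t hdiffY
      have hY2 : HasDerivAt (fun t' => ∑ i ∈ Finset.range (m + 1),
          (m.choose i : ℝ) * pt^[m - i] G (q.1, t') * pt^[i + 2] F (q.1, t'))
          (∑ i ∈ Finset.range (m + 1), ((m.choose i : ℝ) * pt^[m - i + 1] G q * pt^[i + 2] F q
            + (m.choose i : ℝ) * pt^[m - i] G q * pt^[i + 2 + 1] F q)) q.2 := by
        apply HasDerivAt.fun_sum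
        intro i _
        have hb : HasDerivAt (fun t' => pt^[m - i] G (q.1, t')) (pt^[m - i + 1] G q) q.2 := by
          rw [Function.iterate_succ_apply' pt (m - i) G]
          exact hasDerivAt_t (F := pt^[m - i] G) (s := q.1) (t := q.2)
            ((pt_iter_analytic hG (m - i) q hq).differentiableAt)
        have ha : HasDerivAt (fun t' => pt^[i + 2] F (q.1, t')) (pt^[i + 2 + 1] F q) q.2 := by
          rw [Function.iterate_succ_apply' pt (i + 2) F]
          exact hasDerivAt_t (F := pt^[i + 2] F) (s := q.1) (t := q.2)
            ((pt_iter_analytic hF (i + 2) q hq).differentiableAt)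
        exact (hb.const_mul _).mul ha
      have h3 := hY1.unique hY2
      rw [h1]
      show fderiv ℝ (fun r => fderiv ℝ (pt^[m + 1] F) r (1, 0)) q (0, 1) = _
      rw [h2]
      show pt (fun r => ∑ i ∈ Finset.range (m + 1),
        (m.choose i : ℝ) * pt^[m - i] G r * pt^[i + 2] F r) q = _
      rw [h3]
      have hcong : ∑ i ∈ Finset.range (m + 1), ((m.choose i : ℝ) * pt^[m - i + 1] G q *
            pt^[i + 2] F q + (m.choose i : ℝ) * pt^[m - i] G q * pt^[i + 2 + 1] F q) =
          ∑ i ∈ Finset.range (m + 1), ((m.choose i : ℝ) * pt^[m + 1 - i] G q * pt^[i + 2] F q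
            + (m.choose i : ℝ) * pt^[m - i] G q * pt^[i + 3] F q) := by
        refine Finset.sum_congr rfl fun i hi => ?_
        have hi' : i ≤ m := Nat.lt_succ_iff.mp (Finset.mem_range.mp hi)
        rw [show m - i + 1 = m + 1 - i from by omega]
      rw [hcong]
      exact pascal (fun k => pt^[k] F q) (fun k => pt^[k] G q) m
  intro j hj p hp
  obtain ⟨m, rfl⟩ : ∃ m, j = m + 1 := ⟨j - 1, by omega⟩
  rw [pd_one_eq hU hF (m + 1) hp, key m p hp, ← Finset.Ico_add_one_right_eq_Icc,
    Finset.sum_Ico_eq_sum_range]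
  rw [show m + 1 + 1 + 1 - 2 = m + 1 from by omega]
  refine Finset.sum_congr rfl fun i hi => ?_
  have hi' : i ≤ m := Nat.lt_succ_iff.mp (Finset.mem_range.mp hi)
  rw [show 2 + i - 2 = i from by omega, show m + 1 + 1 - (2 + i) = m - i from by omega,
    show m + 1 - 1 = m from by omega, pd_zero_eq hU hG (m - i) hp,
    pd_zero_eq hU hF (2 + i) hp, Nat.add_comm 2 i]
end

section
/- Let ψ : ℝ² → ℝ be real-analytic, 1-periodic in each variable, and satisfy the factorisation hypothesis (FH). If there exists a point (x₀,y₀) ∈ ℝ² such that ∂^m_tψ(x₀,y₀) = 0 for every integer m ≥ 2, then ψ(x,y) = ψ(x,y₀) for all (x,y) ∈ ℝ². -/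
open MeasureTheory Filter

/-- The factorisation hypothesis (FH) for a scalar function ψ on ℝ²: every point has a
neighbourhood on which ψ_{st} = K·ψ_{ss} and ψ_{st} = L·ψ_{tt} for analytic K, L. -/
def FH1 (ψ : ℝ → ℝ → ℝ) : Prop :=
  ∀ p : ℝ × ℝ, ∃ U : Set (ℝ × ℝ), IsOpen U ∧ p ∈ U ∧
    ∃ K L : ℝ × ℝ → ℝ,
      (∀ q ∈ U, AnalyticAt ℝ K q) ∧ (∀ q ∈ U, AnalyticAt ℝ L q) ∧
      ∀ q ∈ U, pd ψ 1 1 q.1 q.2 = K q * pd ψ 2 0 q.1 q.2 ∧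
               pd ψ 1 1 q.1 q.2 = L q * pd ψ 0 2 q.1 q.2

/-- directional derivative operator -/
noncomputable def DD (v : ℝ × ℝ) (f : ℝ × ℝ → ℝ) : ℝ × ℝ → ℝ := fun q => fderiv ℝ f q v

lemma DD_analyticAt {f : ℝ × ℝ → ℝ} {q : ℝ × ℝ} (hf : AnalyticAt ℝ f q) (v : ℝ × ℝ) :
    AnalyticAt ℝ (DD v f) q :=
  ((ContinuousLinearMap.apply ℝ ℝ v).analyticAt _).comp hf.fderiv

lemma DD_iter_analytic {f : ℝ × ℝ → ℝ} (hf : ∀ p, AnalyticAt ℝ f p) (v : ℝ × ℝ) (n : ℕ) :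
    ∀ p, AnalyticAt ℝ ((DD v)^[n] f) p := by
  induction n with
  | zero => simpa using hf
  | succ n ih =>
    intro p
    rw [Function.iterate_succ_apply']
    exact DD_analyticAt (ih p) v

lemma hasDerivAt_slice_t {f : ℝ × ℝ → ℝ} {s t : ℝ} (hf : DifferentiableAt ℝ f (s, t)) :
    HasDerivAt (fun t' => f (s, t')) (DD (0, 1) f (s, t)) t := by
  have h1 : HasFDerivAt (fun t' : ℝ => ((s, t') : ℝ × ℝ))
      ((0 : ℝ →L[ℝ] ℝ).prod (ContinuousLinearMap.id ℝ ℝ)) t :=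
    (hasFDerivAt_const s t).prodMk (hasFDerivAt_id t)
  have h2 := (hf.hasFDerivAt.comp t h1).hasDerivAt
  simpa [DD, Function.comp_def] using h2

lemma hasDerivAt_slice_s {f : ℝ × ℝ → ℝ} {s t : ℝ} (hf : DifferentiableAt ℝ f (s, t)) :
    HasDerivAt (fun s' => f (s', t)) (DD (1, 0) f (s, t)) s := by
  have h1 : HasFDerivAt (fun s' : ℝ => ((s', t) : ℝ × ℝ))
      ((ContinuousLinearMap.id ℝ ℝ).prod (0 : ℝ →L[ℝ] ℝ)) s :=
    (hasFDerivAt_id s).prodMk (hasFDerivAt_const t s)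
  have h2 := (hf.hasFDerivAt.comp s h1).hasDerivAt
  simpa [DD, Function.comp_def] using h2

lemma deriv_slice_t {f : ℝ × ℝ → ℝ} {s t : ℝ} (hf : DifferentiableAt ℝ f (s, t)) :
    deriv (fun t' => f (s, t')) t = DD (0, 1) f (s, t) := (hasDerivAt_slice_t hf).deriv

lemma deriv_slice_s {f : ℝ × ℝ → ℝ} {s t : ℝ} (hf : DifferentiableAt ℝ f (s, t)) :
    deriv (fun s' => f (s', t)) s = DD (1, 0) f (s, t) := (hasDerivAt_slice_s hf).deriv

lemma analyticAt_slice_t {f : ℝ × ℝ → ℝ} {s t : ℝ} (hf : AnalyticAt ℝ f (s, t)) :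
    AnalyticAt ℝ (fun t' => f (s, t')) t :=
  hf.comp ((analyticAt_const).prod analyticAt_id)

lemma analyticAt_slice_s {f : ℝ × ℝ → ℝ} {s t : ℝ} (hf : AnalyticAt ℝ f (s, t)) :
    AnalyticAt ℝ (fun s' => f (s', t)) s := by
  have h : AnalyticAt ℝ (fun s' : ℝ => ((s', t) : ℝ × ℝ)) s := analyticAt_id.prod analyticAt_const
  exact AnalyticAt.comp (x := s) hf h

lemma iteratedDeriv_slice_t {f : ℝ × ℝ → ℝ} (hf : ∀ p, AnalyticAt ℝ f p) (n : ℕ) (s : ℝ) :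
    ∀ t, iteratedDeriv n (fun t' => f (s, t')) t = (DD (0, 1))^[n] f (s, t) := by
  induction n with
  | zero => intro t; simp
  | succ n ih =>
    intro t
    rw [iteratedDeriv_succ, funext ih, Function.iterate_succ_apply']
    exact deriv_slice_t ((DD_iter_analytic hf _ n (s, t)).differentiableAt)

lemma iteratedDeriv_slice_s {f : ℝ × ℝ → ℝ} (hf : ∀ p, AnalyticAt ℝ f p) (n : ℕ) (t : ℝ) :
    ∀ s, iteratedDeriv n (fun s' => f (s', t)) s = (DD (1, 0))^[n] f (s, t) := by
  induction n with
  | zero => intro s; simp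
  | succ n ih =>
    intro s
    rw [iteratedDeriv_succ, funext ih, Function.iterate_succ_apply']
    exact deriv_slice_s ((DD_iter_analytic hf _ n (s, t)).differentiableAt)

lemma clairaut {f : ℝ × ℝ → ℝ} {q : ℝ × ℝ} (hf : AnalyticAt ℝ f q) (v w : ℝ × ℝ) :
    DD v (DD w f) q = DD w (DD v f) q := by
  have hsym : IsSymmSndFDerivAt ℝ f q :=
    (hf.contDiffAt (n := 2)).isSymmSndFDerivAt (by simp)
  have hd : AnalyticAt ℝ (fderiv ℝ f) q := hf.fderiv
  have key : ∀ a b : ℝ × ℝ, DD a (DD b f) q = fderiv ℝ (fderiv ℝ f) q a b := by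
    intro a b
    have h1 : HasFDerivAt (fun p => (ContinuousLinearMap.apply ℝ ℝ b) (fderiv ℝ f p))
        ((ContinuousLinearMap.apply ℝ ℝ b).comp (fderiv ℝ (fderiv ℝ f) q)) q :=
      ((ContinuousLinearMap.apply ℝ ℝ b).hasFDerivAt).comp q
        hd.differentiableAt.hasFDerivAt
    have h2 : DD b f = fun p => (ContinuousLinearMap.apply ℝ ℝ b) (fderiv ℝ f p) := rfl
    show fderiv ℝ (DD b f) q a = _
    rw [h2, h1.fderiv]
    simp
  rw [key, key]
  exact hsym v w

lemma DD_mul {A f : ℝ × ℝ → ℝ} {q : ℝ × ℝ} (hA : DifferentiableAt ℝ A q)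
    (hf : DifferentiableAt ℝ f q) (v : ℝ × ℝ) :
    DD v (fun p => A p * f p) q = DD v A q * f q + A q * DD v f q := by
  show fderiv ℝ (fun p => A p * f p) q v = _
  rw [fderiv_fun_mul hA hf]
  simp [DD]
  ring

lemma DD_add {f g : ℝ × ℝ → ℝ} {q : ℝ × ℝ} (hf : DifferentiableAt ℝ f q)
    (hg : DifferentiableAt ℝ g q) (v : ℝ × ℝ) :
    DD v (fun p => f p + g p) q = DD v f q + DD v g q := by
  show fderiv ℝ (fun p => f p + g p) q v = _
  rw [fderiv_fun_add hf hg]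
  simp [DD]

lemma DD_congr_nhds {f g : ℝ × ℝ → ℝ} {q : ℝ × ℝ} (h : f =ᶠ[nhds q] g) (v : ℝ × ℝ) :
    DD v f q = DD v g q := by
  show fderiv ℝ f q v = fderiv ℝ g q v
  rw [h.fderiv_eq]

lemma key1d {f : ℝ → ℝ} {x : ℝ} (hf : AnalyticAt ℝ f x) (h : ∀ n, iteratedDeriv n f x = 0) :
    f =ᶠ[nhds x] 0 := by
  obtain ⟨p, r, hr⟩ : ∃ p r, HasFPowerSeriesOnBall f p x r := by
    obtain ⟨p, hp⟩ := hf
    obtain ⟨r, hr⟩ := hp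
    exact ⟨p, r, hr⟩
  have hz : ∀ y ∈ EMetric.ball (0 : ℝ) r, f (x + y) = 0 := by
    intro y hy
    have hs := hr.hasSum_iteratedFDeriv hy
    have h0 : ∀ n : ℕ, (((n.factorial : ℝ))⁻¹ • iteratedFDeriv ℝ n f x fun _ => y) = 0 := by
      intro n
      rw [iteratedFDeriv_apply_eq_iteratedDeriv_mul_prod, h n]
      simp
    simp only [h0] at hs
    exact (hs.unique hasSum_zero)
  have hball := EMetric.ball_mem_nhds x hr.r_pos
  filter_upwards [hball] with z hz'
  have h1 : z - x ∈ Metric.eball (0 : ℝ) r := by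
    rw [Metric.mem_eball, show (0 : ℝ) = x - x by ring, edist_sub_right]
    exact hz'
  simpa using hz _ h1

lemma eq_zero_global {f : ℝ → ℝ} (hf : ∀ t, AnalyticAt ℝ f t) {x : ℝ} (h : f =ᶠ[nhds x] 0) :
    ∀ y, f y = 0 := by
  have := AnalyticOnNhd.eqOn_zero_of_preconnected_of_eventuallyEq_zero
    (f := f) (U := Set.univ) (fun t _ => hf t) isPreconnected_univ (Set.mem_univ x) h
  exact fun y => this (Set.mem_univ y)

/-- closure system of functions generated by `u` under `∂_t`, multiplication by functions
analytic on `U`, and addition. -/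
inductive GoodS (U : Set (ℝ × ℝ)) (u : ℝ × ℝ → ℝ) : (ℝ × ℝ → ℝ) → Prop
  | base : GoodS U u u
  | dt {f : ℝ × ℝ → ℝ} : GoodS U u f → GoodS U u (DD (0, 1) f)
  | mul {A f : ℝ × ℝ → ℝ} : (∀ q ∈ U, AnalyticAt ℝ A q) → GoodS U u f →
      GoodS U u (fun q => A q * f q)
  | add {f g : ℝ × ℝ → ℝ} : GoodS U u f → GoodS U u g → GoodS U u (fun q => f q + g q)

lemma goodS_analytic {U : Set (ℝ × ℝ)} {u : ℝ × ℝ → ℝ} (hu : ∀ p, AnalyticAt ℝ u p)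
    {f : ℝ × ℝ → ℝ} (hf : GoodS U u f) : ∀ q ∈ U, AnalyticAt ℝ f q := by
  induction hf with
  | base => exact fun q _ => hu q
  | dt hf ih => exact fun q hq => DD_analyticAt (ih q hq) _
  | mul hA hf ih => exact fun q hq => (hA q hq).mul (ih q hq)
  | add hf1 hf2 ih1 ih2 => exact fun q hq => (ih1 q hq).add (ih2 q hq)

lemma goodS_slice {U : Set (ℝ × ℝ)} (hUo : IsOpen U) {u : ℝ × ℝ → ℝ}
    (hu : ∀ p, AnalyticAt ℝ u p) {x₀ : ℝ} (hu0 : ∀ t, u (x₀, t) = 0)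
    {f : ℝ × ℝ → ℝ} (hf : GoodS U u f) :
    ∀ t : ℝ, (x₀, t) ∈ U → (fun t' => f (x₀, t')) =ᶠ[nhds t] 0 := by
  induction hf with
  | base => exact fun t _ => Filter.Eventually.of_forall fun t' => hu0 t'
  | @dt f hf ih =>
    intro t ht
    have hev : ∀ᶠ t' in nhds t, (x₀, t') ∈ U := by
      have hc : Continuous (fun t' : ℝ => ((x₀, t') : ℝ × ℝ)) :=
        continuous_const.prodMk continuous_id
      exact hc.continuousAt.preimage_mem_nhds (hUo.mem_nhds ht)
    have hder := (ih t ht).deriv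
    filter_upwards [hev, hder] with t' h1 h2
    have h3 : deriv (fun t'' => f (x₀, t'')) t' = 0 := by
      rw [show (fun t'' => f (x₀, t'')) = fun t' => f (x₀, t') from rfl, h2,
        show (0 : ℝ → ℝ) = fun _ : ℝ => (0 : ℝ) from rfl, deriv_const]
    show DD (0, 1) f (x₀, t') = (0 : ℝ → ℝ) t'
    rw [← deriv_slice_t ((goodS_analytic hu hf _ h1).differentiableAt), h3]
    simp
  | mul hA hf ih =>
    intro t ht
    filter_upwards [ih t ht] with t' h
    simp only [Pi.zero_apply] at h ⊢
    rw [h, mul_zero]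
  | add hf1 hf2 ih1 ih2 =>
    intro t ht
    filter_upwards [ih1 t ht, ih2 t ht] with t' h1 h2
    simp only [Pi.zero_apply] at h1 h2 ⊢
    rw [h1, h2, add_zero]

lemma goodS_ds {U : Set (ℝ × ℝ)} (hUo : IsOpen U) {u L : ℝ × ℝ → ℝ}
    (hu : ∀ p, AnalyticAt ℝ u p) (hL : ∀ q ∈ U, AnalyticAt ℝ L q)
    (hPDE : ∀ q ∈ U, DD (1, 0) u q = L q * DD (0, 1) u q)
    {f : ℝ × ℝ → ℝ} (hf : GoodS U u f) :
    ∃ g, GoodS U u g ∧ Set.EqOn (DD (1, 0) f) g U := by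
  induction hf with
  | base =>
    exact ⟨fun q => L q * DD (0, 1) u q, GoodS.mul hL (GoodS.dt GoodS.base),
      fun q hq => hPDE q hq⟩
  | @dt f hf ih =>
    obtain ⟨g, hg, hEq⟩ := ih
    refine ⟨DD (0, 1) g, GoodS.dt hg, fun q hq => ?_⟩
    have hfa : AnalyticAt ℝ f q := goodS_analytic hu hf q hq
    calc DD (1, 0) (DD (0, 1) f) q = DD (0, 1) (DD (1, 0) f) q := clairaut hfa _ _
      _ = DD (0, 1) g q :=
        DD_congr_nhds (Filter.eventuallyEq_of_mem (hUo.mem_nhds hq) hEq) _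
  | @mul A f hA hf ih =>
    obtain ⟨g, hg, hEq⟩ := ih
    refine ⟨fun q => (fun q => DD (1, 0) A q * f q) q + (fun q => A q * g q) q,
      GoodS.add (GoodS.mul (fun q hq => DD_analyticAt (hA q hq) _) hf) (GoodS.mul hA hg),
      fun q hq => ?_⟩
    have hfa : AnalyticAt ℝ f q := goodS_analytic hu hf q hq
    have h := DD_mul (hA q hq).differentiableAt hfa.differentiableAt (1, 0)
    show DD (1, 0) (fun p => A p * f p) q = DD (1, 0) A q * f q + A q * g q
    rw [h, hEq hq]
  | @add f g hf1 hf2 ih1 ih2 =>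
    obtain ⟨g1, hg1, hEq1⟩ := ih1
    obtain ⟨g2, hg2, hEq2⟩ := ih2
    refine ⟨fun q => g1 q + g2 q, GoodS.add hg1 hg2, fun q hq => ?_⟩
    have h1 : AnalyticAt ℝ f q := goodS_analytic hu hf1 q hq
    have h2 : AnalyticAt ℝ g q := goodS_analytic hu hf2 q hq
    show DD (1, 0) (fun p => f p + g p) q = g1 q + g2 q
    rw [DD_add h1.differentiableAt h2.differentiableAt, hEq1 hq, hEq2 hq]

/-- Degeneracy under (FH): if all pure t-derivatives of order ≥ 2 vanish at one point,
then ψ(x,y) = ψ(x,y₀) identically. -/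
theorem stmt7 (ψ : ℝ → ℝ → ℝ)
    (hψa : ∀ p : ℝ × ℝ, AnalyticAt ℝ (fun q : ℝ × ℝ => ψ q.1 q.2) p)
    (hp1 : ∀ s t : ℝ, ψ (s + 1) t = ψ s t)
    (hp2 : ∀ s t : ℝ, ψ s (t + 1) = ψ s t)
    (hFH : FH1 ψ)
    (x₀ y₀ : ℝ)
    (hzero : ∀ m : ℕ, 2 ≤ m → pd ψ 0 m x₀ y₀ = 0) :
    ∀ x y : ℝ, ψ x y = ψ x y₀ := by
  classical
  set F : ℝ × ℝ → ℝ := fun q : ℝ × ℝ => ψ q.1 q.2 with hFdef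
  have hslice_an : ∀ s t : ℝ, AnalyticAt ℝ (ψ s) t := by
    intro s t
    exact analyticAt_slice_t (hψa (s, t))
  -- Step A : the slice at x₀ is constant
  have hg2zero : ∀ n : ℕ, iteratedDeriv n (deriv (deriv (ψ x₀))) y₀ = 0 := by
    intro n
    have h1 : iteratedDeriv (n + 2) (ψ x₀) y₀ = iteratedDeriv n (deriv (deriv (ψ x₀))) y₀ := by
      rw [show n + 2 = n + 1 + 1 from rfl, iteratedDeriv_succ', iteratedDeriv_succ']
    have h2 := hzero (n + 2) (by omega)
    have hpd : pd ψ 0 (n + 2) x₀ y₀ = iteratedDeriv (n + 2) (ψ x₀) y₀ := by simp [pd]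
    rw [hpd, h1] at h2
    exact h2
  have hAOn : AnalyticOnNhd ℝ (ψ x₀) Set.univ := fun t _ => hslice_an x₀ t
  have hA1 : AnalyticOnNhd ℝ (deriv (ψ x₀)) Set.univ := hAOn.deriv
  have hA2 : AnalyticOnNhd ℝ (deriv (deriv (ψ x₀))) Set.univ := hA1.deriv
  have h2z : ∀ t, deriv (deriv (ψ x₀)) t = 0 :=
    eq_zero_global (fun t => hA2 t (Set.mem_univ t)) (key1d (hA2 y₀ (Set.mem_univ y₀)) hg2zero)
  have hconst : ∀ t, deriv (ψ x₀) t = deriv (ψ x₀) y₀ :=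
    fun t => is_const_of_deriv_eq_zero (fun t' => (hA1 t' (Set.mem_univ t')).differentiableAt)
      h2z t y₀
  set c := deriv (ψ x₀) y₀ with hc
  have hGd : ∀ t : ℝ, HasDerivAt (fun t' => ψ x₀ t' - c * t') 0 t := by
    intro t
    have h1 : HasDerivAt (ψ x₀) c t := by
      have h := (hslice_an x₀ t).differentiableAt.hasDerivAt
      rwa [hconst t] at h
    have h2 : HasDerivAt (fun t' : ℝ => c * t') c t := by
      simpa using (hasDerivAt_id t).const_mul c
    simpa using h1.fun_sub h2
  have hGconst : ∀ a b : ℝ, ψ x₀ a - c * a = ψ x₀ b - c * b :=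
    fun a b => is_const_of_deriv_eq_zero (fun t => (hGd t).differentiableAt)
      (fun t => (hGd t).deriv) a b
  have hc0 : c = 0 := by
    have h1 := hGconst (y₀ + 1) y₀
    rw [hp2 x₀ y₀] at h1
    linarith
  have hu0 : ∀ t, deriv (ψ x₀) t = 0 := fun t => by rw [hconst t, hc0]
  -- the function u = ∂ψ/∂t
  set u := DD (0, 1) F with hudef
  have hu_an : ∀ p, AnalyticAt ℝ u p := fun p => DD_analyticAt (hψa p) _
  have hu_slice : ∀ s t : ℝ, deriv (ψ s) t = u (s, t) := by
    intro s t
    exact deriv_slice_t (hψa (s, t)).differentiableAt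
  have hux₀ : ∀ t, u (x₀, t) = 0 := fun t => by rw [← hu_slice x₀ t]; exact hu0 t
  -- pd conversions
  have hpd11 : ∀ q : ℝ × ℝ, pd ψ 1 1 q.1 q.2 = DD (1, 0) u q := by
    rintro ⟨s, t⟩
    show iteratedDeriv 1 (fun s' => iteratedDeriv 1 (ψ s') t) s = DD (1, 0) u (s, t)
    have h1 : (fun s' => iteratedDeriv 1 (ψ s') t) = fun s' => u (s', t) := by
      funext s'
      rw [iteratedDeriv_one]
      exact hu_slice s' t
    rw [h1, iteratedDeriv_one]
    exact deriv_slice_s (hu_an (s, t)).differentiableAt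
  have hpd02 : ∀ q : ℝ × ℝ, pd ψ 0 2 q.1 q.2 = DD (0, 1) u q := by
    rintro ⟨s, t⟩
    have h1 : pd ψ 0 2 s t = iteratedDeriv 2 (ψ s) t := by simp [pd]
    rw [h1]
    exact iteratedDeriv_slice_t hψa 2 s t
  -- Step B : all s-derivatives of u vanish on the line s = x₀
  have hB : ∀ t₀ : ℝ, ∀ n : ℕ, (DD (1, 0))^[n] u (x₀, t₀) = 0 := by
    intro t₀
    obtain ⟨U, hUo, hUm, K, L, hK, hL, hKL⟩ := hFH (x₀, t₀)
    have hPDE : ∀ q ∈ U, DD (1, 0) u q = L q * DD (0, 1) u q := by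
      intro q hq
      have h := (hKL q hq).2
      rw [hpd11 q, hpd02 q] at h
      exact h
    have main : ∀ n : ℕ, ∃ g, GoodS U u g ∧ Set.EqOn ((DD (1, 0))^[n] u) g U := by
      intro n
      induction n with
      | zero => exact ⟨u, GoodS.base, fun q hq => by simp⟩
      | succ n ih =>
        obtain ⟨g, hg, hEq⟩ := ih
        obtain ⟨g', hg', hEq'⟩ := goodS_ds hUo hu_an hL hPDE hg
        refine ⟨g', hg', fun q hq => ?_⟩
        rw [Function.iterate_succ_apply']
        have h1 : DD (1, 0) ((DD (1, 0))^[n] u) q = DD (1, 0) g q :=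
          DD_congr_nhds (Filter.eventuallyEq_of_mem (hUo.mem_nhds hq) hEq) _
        exact h1.trans (hEq' hq)
    intro n
    obtain ⟨g, hg, hEq⟩ := main n
    have hs := goodS_slice hUo hu_an hux₀ hg t₀ hUm
    have h0 : g (x₀, t₀) = 0 := by simpa using hs.eq_of_nhds
    rw [hEq hUm]
    exact h0
  -- u vanishes identically
  have huz : ∀ s t : ℝ, u (s, t) = 0 := by
    intro s t
    have hw_an : ∀ s' : ℝ, AnalyticAt ℝ (fun s'' => u (s'', t)) s' :=
      fun s' => analyticAt_slice_s (hu_an (s', t))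
    have hw_d : ∀ n, iteratedDeriv n (fun s' => u (s', t)) x₀ = 0 := by
      intro n
      rw [iteratedDeriv_slice_s hu_an n t x₀]
      exact hB t n
    exact eq_zero_global hw_an (key1d (hw_an x₀) hw_d) s
  intro x y
  have hd : ∀ t, deriv (ψ x) t = 0 := fun t => by rw [hu_slice x t]; exact huz x t
  exact is_const_of_deriv_eq_zero (fun t => (hslice_an x t).differentiableAt) hd y y₀
end

section
/- Let ψ : ℝ² → ℝ be real-analytic, 1-periodic in each variable, and satisfy the factorisation hypothesis (FH). Suppose that at some point (x,y) ∈ ℝ² there are integers m,n ≥ 2 such that ∂^k_sψ(x,y) = 0 for all 2 ≤ k < n and ∂^ℓ_tψ(x,y) = 0 for all 2 ≤ ℓ < m (the corresponding condition being vacuous when n = 2 or m = 2). Then ∂^{k,ℓ}ψ(x,y) = 0 for all integers k,ℓ ≥ 1 with k+ℓ < max(m,n). -/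
open MeasureTheory Filter

open Topology

section Stmt8Aux

def unc (f : ℝ → ℝ → ℝ) : ℝ × ℝ → ℝ := fun q => f q.1 q.2
def AnOn (U : Set (ℝ × ℝ)) (f : ℝ → ℝ → ℝ) : Prop := ∀ q ∈ U, AnalyticAt ℝ (unc f) q
noncomputable def D1 (f : ℝ → ℝ → ℝ) : ℝ → ℝ → ℝ := fun s t => deriv (fun s' => f s' t) s
noncomputable def D2 (f : ℝ → ℝ → ℝ) : ℝ → ℝ → ℝ := fun s t => deriv (f s) t

lemma pd_zero_right (f : ℝ → ℝ → ℝ) (k : ℕ) (s t : ℝ) :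
    pd f k 0 s t = iteratedDeriv k (fun s' => f s' t) s := by
  simp only [pd, iteratedDeriv_zero]

lemma pd_zero_left (f : ℝ → ℝ → ℝ) (l : ℕ) (s t : ℝ) :
    pd f 0 l s t = iteratedDeriv l (f s) t := by
  simp only [pd, iteratedDeriv_zero]

lemma pd_peel_t (f : ℝ → ℝ → ℝ) (k l : ℕ) (s t : ℝ) :
    pd f k (l + 1) s t = pd (D2 f) k l s t := by
  simp only [pd, iteratedDeriv_succ']
  rfl

lemma pd_peel_s (f : ℝ → ℝ → ℝ) (k l : ℕ) (s t : ℝ) :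
    pd f (k + 1) l s t = iteratedDeriv k (fun s' => pd f 1 l s' t) s := by
  simp only [pd, iteratedDeriv_succ', iteratedDeriv_one, iteratedDeriv_zero]

lemma pd_one_zero (f : ℝ → ℝ → ℝ) (s t : ℝ) : pd f 1 0 s t = D1 f s t := by
  rw [pd_zero_right, iteratedDeriv_one]; rfl

lemma pd_peel_s0 (f : ℝ → ℝ → ℝ) (k : ℕ) (s t : ℝ) :
    pd f (k + 1) 0 s t = pd (D1 f) k 0 s t := by
  rw [pd_peel_s, pd_zero_right]
  congr 1
  funext s'
  rw [pd_one_zero]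

lemma pd_eq_itd (f : ℝ → ℝ → ℝ) (k l : ℕ) (s t : ℝ) :
    pd f k l s t = iteratedDeriv k (fun s' => pd f 0 l s' t) s := by
  simp only [pd_zero_left]
  rfl

lemma pd_zero_left_iter : ∀ (l : ℕ) (f : ℝ → ℝ → ℝ) (s t : ℝ), pd f 0 l s t = (D2^[l] f) s t := by
  intro l
  induction l with
  | zero => intro f s t; simp [pd_zero_left, iteratedDeriv_zero]
  | succ l ih => intro f s t; rw [pd_peel_t, ih (D2 f), Function.iterate_succ_apply]

lemma itd_add : ∀ (n : ℕ) {V : Set ℝ}, IsOpen V → ∀ {f g : ℝ → ℝ},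
    AnalyticOnNhd ℝ f V → AnalyticOnNhd ℝ g V → ∀ {x : ℝ}, x ∈ V →
    iteratedDeriv n (fun y => f y + g y) x = iteratedDeriv n f x + iteratedDeriv n g x := by
  intro n
  induction n with
  | zero => intro V hV f g hf hg x hx; simp
  | succ n ih =>
    intro V hV f g hf hg x hx
    rw [iteratedDeriv_succ', iteratedDeriv_succ', iteratedDeriv_succ']
    have hev : deriv (fun y => f y + g y) =ᶠ[𝓝 x] fun y => deriv f y + deriv g y := by
      filter_upwards [hV.mem_nhds hx] with y hy
      exact deriv_add (hf y hy).differentiableAt (hg y hy).differentiableAt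
    rw [hev.iteratedDeriv_eq n]
    exact ih hV hf.deriv hg.deriv hx

lemma sliceS {f : ℝ → ℝ → ℝ} {s t : ℝ} (hf : AnalyticAt ℝ (unc f) (s, t)) :
    AnalyticAt ℝ (fun s' => f s' t) s := by
  have hc : AnalyticAt ℝ (fun s' : ℝ => (s', t)) s := analyticAt_id.prod analyticAt_const
  exact AnalyticAt.comp (f := fun s' : ℝ => (s', t)) (x := s) hf hc

lemma sliceT {f : ℝ → ℝ → ℝ} {s t : ℝ} (hf : AnalyticAt ℝ (unc f) (s, t)) :
    AnalyticAt ℝ (f s) t := by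
  have hc : AnalyticAt ℝ (fun t' : ℝ => (s, t')) t := analyticAt_const.prod analyticAt_id
  exact AnalyticAt.comp (f := fun t' : ℝ => (s, t')) (x := t) hf hc

lemma hasDerivAt_curve1 {G : ℝ × ℝ → ℝ} {G' : ℝ × ℝ →L[ℝ] ℝ} {q : ℝ × ℝ}
    (h : HasFDerivAt G G' q) : HasDerivAt (fun s' => G (s', q.2)) (G' (1, 0)) q.1 := by
  have h' : HasFDerivAt G G' (q.1, q.2) := by rw [Prod.mk.eta]; exact h
  exact h'.comp_hasDerivAt q.1 (HasDerivAt.prodMk (hasDerivAt_id q.1) (hasDerivAt_const q.1 q.2))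

lemma hasDerivAt_curve2 {G : ℝ × ℝ → ℝ} {G' : ℝ × ℝ →L[ℝ] ℝ} {q : ℝ × ℝ}
    (h : HasFDerivAt G G' q) : HasDerivAt (fun t' => G (q.1, t')) (G' (0, 1)) q.2 := by
  have h' : HasFDerivAt G G' (q.1, q.2) := by rw [Prod.mk.eta]; exact h
  exact h'.comp_hasDerivAt q.2 (HasDerivAt.prodMk (hasDerivAt_const q.2 q.1) (hasDerivAt_id q.2))

lemma D1_eq_fderiv {f : ℝ → ℝ → ℝ} {q : ℝ × ℝ} (hf : DifferentiableAt ℝ (unc f) q) :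
    D1 f q.1 q.2 = fderiv ℝ (unc f) q (1, 0) :=
  (hasDerivAt_curve1 hf.hasFDerivAt).deriv

lemma D2_eq_fderiv {f : ℝ → ℝ → ℝ} {q : ℝ × ℝ} (hf : DifferentiableAt ℝ (unc f) q) :
    D2 f q.1 q.2 = fderiv ℝ (unc f) q (0, 1) :=
  (hasDerivAt_curve2 hf.hasFDerivAt).deriv

lemma AnOn_D1 {U : Set (ℝ × ℝ)} (hU : IsOpen U) {f : ℝ → ℝ → ℝ} (hf : AnOn U f) :
    AnOn U (D1 f) := by
  intro q hq
  have h1 : AnalyticAt ℝ (fun q' : ℝ × ℝ => fderiv ℝ (unc f) q' ((1 : ℝ), (0 : ℝ))) q :=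
    ((ContinuousLinearMap.apply ℝ ℝ ((1 : ℝ), (0 : ℝ))).analyticAt _).comp (hf q hq).fderiv
  apply h1.congr
  filter_upwards [hU.mem_nhds hq] with q' hq'
  exact (D1_eq_fderiv (hf q' hq').differentiableAt).symm

lemma AnOn_D2 {U : Set (ℝ × ℝ)} (hU : IsOpen U) {f : ℝ → ℝ → ℝ} (hf : AnOn U f) :
    AnOn U (D2 f) := by
  intro q hq
  have h1 : AnalyticAt ℝ (fun q' : ℝ × ℝ => fderiv ℝ (unc f) q' ((0 : ℝ), (1 : ℝ))) q :=
    ((ContinuousLinearMap.apply ℝ ℝ ((0 : ℝ), (1 : ℝ))).analyticAt _).comp (hf q hq).fderiv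
  apply h1.congr
  filter_upwards [hU.mem_nhds hq] with q' hq'
  exact (D2_eq_fderiv (hf q' hq').differentiableAt).symm

lemma D12_swap {U : Set (ℝ × ℝ)} (hU : IsOpen U) {f : ℝ → ℝ → ℝ} (hf : AnOn U f)
    {q : ℝ × ℝ} (hq : q ∈ U) : D1 (D2 f) q.1 q.2 = D2 (D1 f) q.1 q.2 := by
  set F := unc f with hF
  have hdiff : ∀ᶠ q' in 𝓝 q, HasFDerivAt F (fderiv ℝ F q') q' := by
    filter_upwards [hU.mem_nhds hq] with q' hq'
    exact ((hf q' hq').differentiableAt).hasFDerivAt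
  have hF2 : HasFDerivAt (fderiv ℝ F) (fderiv ℝ (fderiv ℝ F) q) q :=
    ((hf q hq).fderiv.differentiableAt).hasFDerivAt
  set f'' := fderiv ℝ (fderiv ℝ F) q with hf''
  have symm := second_derivative_symmetric_of_eventually hdiff hF2 (1, 0) (0, 1)
  have happ : ∀ v : ℝ × ℝ, HasFDerivAt (fun q' => fderiv ℝ F q' v)
      ((ContinuousLinearMap.apply ℝ ℝ v).comp f'') q := fun v =>
    (ContinuousLinearMap.apply ℝ ℝ v).hasFDerivAt.comp q hF2
  have hs1 : IsOpen {s' : ℝ | (s', q.2) ∈ U} := hU.preimage (by fun_prop)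
  have hs2 : IsOpen {t' : ℝ | (q.1, t') ∈ U} := hU.preimage (by fun_prop)
  have hmem : (q.1, q.2) ∈ U := by rw [Prod.mk.eta]; exact hq
  have left : D1 (D2 f) q.1 q.2 = f'' (1, 0) (0, 1) := by
    have e1 : (fun s' => D2 f s' q.2) =ᶠ[𝓝 q.1] fun s' => fderiv ℝ F (s', q.2) (0, 1) := by
      filter_upwards [hs1.mem_nhds hmem] with s' hs'
      exact D2_eq_fderiv (q := (s', q.2)) (hf _ hs').differentiableAt
    have e2 : deriv (fun s' => fderiv ℝ F (s', q.2) (0, 1)) q.1 = f'' (1, 0) (0, 1) :=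
      (hasDerivAt_curve1 (happ (0, 1))).deriv
    calc D1 (D2 f) q.1 q.2 = deriv (fun s' => D2 f s' q.2) q.1 := rfl
      _ = deriv (fun s' => fderiv ℝ F (s', q.2) (0, 1)) q.1 := e1.deriv_eq
      _ = f'' (1, 0) (0, 1) := e2
  have right : D2 (D1 f) q.1 q.2 = f'' (0, 1) (1, 0) := by
    have e1 : (D1 f q.1) =ᶠ[𝓝 q.2] fun t' => fderiv ℝ F (q.1, t') (1, 0) := by
      filter_upwards [hs2.mem_nhds hmem] with t' ht'
      exact D1_eq_fderiv (q := (q.1, t')) (hf _ ht').differentiableAt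
    have e2 : deriv (fun t' => fderiv ℝ F (q.1, t') (1, 0)) q.2 = f'' (0, 1) (1, 0) :=
      (hasDerivAt_curve2 (happ (1, 0))).deriv
    calc D2 (D1 f) q.1 q.2 = deriv (D1 f q.1) q.2 := rfl
      _ = deriv (fun t' => fderiv ℝ F (q.1, t') (1, 0)) q.2 := e1.deriv_eq
      _ = f'' (0, 1) (1, 0) := e2
  rw [left, right, symm]

lemma mem_slice1 {U : Set (ℝ × ℝ)} {q : ℝ × ℝ} (hq : q ∈ U) : (q.1, q.2) ∈ U := by
  rw [Prod.mk.eta]; exact hq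

lemma comm_one {U : Set (ℝ × ℝ)} (hU : IsOpen U) :
    ∀ (l : ℕ) (f : ℝ → ℝ → ℝ), AnOn U f → ∀ q ∈ U,
      pd f 1 l q.1 q.2 = pd (D1 f) 0 l q.1 q.2 := by
  intro l
  induction l with
  | zero =>
    intro f hf q hq
    rw [pd_one_zero, pd_zero_left, iteratedDeriv_zero]
  | succ l ih =>
    intro f hf q hq
    rw [pd_peel_t, ih (D2 f) (AnOn_D2 hU hf) q hq, pd_peel_t, pd_zero_left, pd_zero_left]
    apply Filter.EventuallyEq.iteratedDeriv_eq
    have hs2 : IsOpen {t' : ℝ | (q.1, t') ∈ U} := hU.preimage (by fun_prop)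
    filter_upwards [hs2.mem_nhds (mem_slice1 hq)] with t' ht'
    exact D12_swap hU hf (q := (q.1, t')) ht'

lemma comm_s {U : Set (ℝ × ℝ)} (hU : IsOpen U) {f : ℝ → ℝ → ℝ} (hf : AnOn U f)
    (k l : ℕ) {q : ℝ × ℝ} (hq : q ∈ U) :
    pd f (k + 1) l q.1 q.2 = pd (D1 f) k l q.1 q.2 := by
  rw [pd_peel_s, pd_eq_itd]
  apply Filter.EventuallyEq.iteratedDeriv_eq
  have hs1 : IsOpen {s' : ℝ | (s', q.2) ∈ U} := hU.preimage (by fun_prop)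
  filter_upwards [hs1.mem_nhds (mem_slice1 hq)] with s' hs'
  exact comm_one hU l f hf (s', q.2) hs'

lemma pd_congr {U : Set (ℝ × ℝ)} (hU : IsOpen U) {f g : ℝ → ℝ → ℝ}
    (hfg : ∀ q ∈ U, f q.1 q.2 = g q.1 q.2) (k l : ℕ) {q : ℝ × ℝ} (hq : q ∈ U) :
    pd f k l q.1 q.2 = pd g k l q.1 q.2 := by
  unfold pd
  apply Filter.EventuallyEq.iteratedDeriv_eq
  have hs1 : IsOpen {s' : ℝ | (s', q.2) ∈ U} := hU.preimage (by fun_prop)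
  filter_upwards [hs1.mem_nhds (mem_slice1 hq)] with s' hs'
  apply Filter.EventuallyEq.iteratedDeriv_eq
  have hs2 : IsOpen {t' : ℝ | (s', t') ∈ U} := hU.preimage (by fun_prop)
  filter_upwards [hs2.mem_nhds hs'] with t' ht'
  exact hfg (s', t') ht'

lemma AnOn_D2_iter {U : Set (ℝ × ℝ)} (hU : IsOpen U) {f : ℝ → ℝ → ℝ} (hf : AnOn U f) :
    ∀ l, AnOn U (D2^[l] f) := by
  intro l
  induction l with
  | zero => exact hf
  | succ l ih => rw [Function.iterate_succ']; exact AnOn_D2 hU ih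

lemma pd_add {U : Set (ℝ × ℝ)} (hU : IsOpen U) {f g : ℝ → ℝ → ℝ}
    (hf : AnOn U f) (hg : AnOn U g) (k l : ℕ) {q : ℝ × ℝ} (hq : q ∈ U) :
    pd (fun a b => f a b + g a b) k l q.1 q.2 = pd f k l q.1 q.2 + pd g k l q.1 q.2 := by
  have hs1 : IsOpen {s' : ℝ | (s', q.2) ∈ U} := hU.preimage (by fun_prop)
  have inner : ∀ q' ∈ U, pd (fun a b => f a b + g a b) 0 l q'.1 q'.2
      = pd f 0 l q'.1 q'.2 + pd g 0 l q'.1 q'.2 := by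
    intro q' hq'
    rw [pd_zero_left, pd_zero_left, pd_zero_left]
    have hV : IsOpen {t' : ℝ | (q'.1, t') ∈ U} := hU.preimage (by fun_prop)
    exact itd_add l hV (fun t' ht' => sliceT (hf _ ht')) (fun t' ht' => sliceT (hg _ ht'))
      (mem_slice1 hq')
  rw [pd_eq_itd, pd_eq_itd, pd_eq_itd]
  have congr1 : iteratedDeriv k (fun s' => pd (fun a b => f a b + g a b) 0 l s' q.2) q.1
      = iteratedDeriv k (fun s' => pd f 0 l s' q.2 + pd g 0 l s' q.2) q.1 := by
    apply Filter.EventuallyEq.iteratedDeriv_eq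
    filter_upwards [hs1.mem_nhds (mem_slice1 hq)] with s' hs'
    exact inner (s', q.2) hs'
  rw [congr1]
  have hFa : AnalyticOnNhd ℝ (fun s' => pd f 0 l s' q.2) {s' : ℝ | (s', q.2) ∈ U} := by
    have : (fun s' => pd f 0 l s' q.2) = fun s' => (D2^[l] f) s' q.2 := by
      funext s'; exact pd_zero_left_iter l f s' q.2
    rw [this]
    exact fun s' hs' => sliceS (AnOn_D2_iter hU hf l _ hs')
  have hGa : AnalyticOnNhd ℝ (fun s' => pd g 0 l s' q.2) {s' : ℝ | (s', q.2) ∈ U} := by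
    have : (fun s' => pd g 0 l s' q.2) = fun s' => (D2^[l] g) s' q.2 := by
      funext s'; exact pd_zero_left_iter l g s' q.2
    rw [this]
    exact fun s' hs' => sliceS (AnOn_D2_iter hU hg l _ hs')
  exact itd_add k hs1 hFa hGa (mem_slice1 hq)

lemma hasDerivAt_D1 {U : Set (ℝ × ℝ)} {f : ℝ → ℝ → ℝ} (hf : AnOn U f)
    {q : ℝ × ℝ} (hq : q ∈ U) :
    HasDerivAt (fun s' => f s' q.2) (D1 f q.1 q.2) q.1 := by
  rw [D1_eq_fderiv (hf q hq).differentiableAt]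
  exact hasDerivAt_curve1 (hf q hq).differentiableAt.hasFDerivAt

lemma hasDerivAt_D2 {U : Set (ℝ × ℝ)} {f : ℝ → ℝ → ℝ} (hf : AnOn U f)
    {q : ℝ × ℝ} (hq : q ∈ U) :
    HasDerivAt (fun t' => f q.1 t') (D2 f q.1 q.2) q.2 := by
  rw [D2_eq_fderiv (hf q hq).differentiableAt]
  exact hasDerivAt_curve2 (hf q hq).differentiableAt.hasFDerivAt

lemma D1_mul {U : Set (ℝ × ℝ)} {f g : ℝ → ℝ → ℝ} (hf : AnOn U f) (hg : AnOn U g)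
    {q : ℝ × ℝ} (hq : q ∈ U) :
    D1 (fun a b => f a b * g a b) q.1 q.2
      = D1 f q.1 q.2 * g q.1 q.2 + f q.1 q.2 * D1 g q.1 q.2 :=
  ((hasDerivAt_D1 hf hq).mul (hasDerivAt_D1 hg hq)).deriv

lemma D2_mul {U : Set (ℝ × ℝ)} {f g : ℝ → ℝ → ℝ} (hf : AnOn U f) (hg : AnOn U g)
    {q : ℝ × ℝ} (hq : q ∈ U) :
    D2 (fun a b => f a b * g a b) q.1 q.2
      = D2 f q.1 q.2 * g q.1 q.2 + f q.1 q.2 * D2 g q.1 q.2 :=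
  ((hasDerivAt_D2 hf hq).mul (hasDerivAt_D2 hg hq)).deriv

lemma AnOn_mul {U : Set (ℝ × ℝ)} {f g : ℝ → ℝ → ℝ} (hf : AnOn U f) (hg : AnOn U g) :
    AnOn U (fun a b => f a b * g a b) :=
  fun q hq => (hf q hq).mul (hg q hq)

lemma L2D {U : Set (ℝ × ℝ)} (hU : IsOpen U) {q : ℝ × ℝ} (hq : q ∈ U) :
    ∀ (N : ℕ) (f g : ℝ → ℝ → ℝ), AnOn U f → AnOn U g → ∀ a b, a + b ≤ N →
      (∀ a' b', a' ≤ a → b' ≤ b → pd g a' b' q.1 q.2 = 0) →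
      pd (fun s t => f s t * g s t) a b q.1 q.2 = 0 := by
  intro N
  induction N with
  | zero =>
    intro f g hf hg a b hab hvan
    have ha : a = 0 := by omega
    have hb : b = 0 := by omega
    subst ha; subst hb
    have h0 := hvan 0 0 le_rfl le_rfl
    rw [pd_zero_left, iteratedDeriv_zero] at h0 ⊢
    rw [h0, mul_zero]
  | succ N ih =>
    intro f g hf hg a b hab hvan
    rcases b with _ | b'
    · rcases a with _ | a'
      · have h0 := hvan 0 0 le_rfl le_rfl
        rw [pd_zero_left, iteratedDeriv_zero] at h0 ⊢
        rw [h0, mul_zero]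
      · -- b = 0, a = a'+1 : peel an s-derivative
        rw [pd_peel_s0]
        have e1 : pd (D1 fun s t => f s t * g s t) a' 0 q.1 q.2
            = pd (fun s t => (D1 f s t * g s t) + (f s t * D1 g s t)) a' 0 q.1 q.2 :=
          pd_congr hU (fun q' hq' => D1_mul hf hg hq') a' 0 hq
        rw [e1, pd_add hU (AnOn_mul (AnOn_D1 hU hf) hg) (AnOn_mul hf (AnOn_D1 hU hg)) a' 0 hq]
        have t1 : pd (fun s t => D1 f s t * g s t) a' 0 q.1 q.2 = 0 :=
          ih (D1 f) g (AnOn_D1 hU hf) hg a' 0 (by omega)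
            (fun a'' b'' ha hb => hvan a'' b'' (by omega) hb)
        have t2 : pd (fun s t => f s t * D1 g s t) a' 0 q.1 q.2 = 0 := by
          apply ih f (D1 g) hf (AnOn_D1 hU hg) a' 0 (by omega)
          intro a'' b'' ha hb
          have hb0 : b'' = 0 := by omega
          subst hb0
          rw [← comm_s hU hg a'' 0 hq]
          exact hvan (a'' + 1) 0 (by omega) le_rfl
        rw [t1, t2, add_zero]
    · -- b = b'+1 : peel a t-derivative
      rw [pd_peel_t]
      have e1 : pd (D2 fun s t => f s t * g s t) a b' q.1 q.2
          = pd (fun s t => (D2 f s t * g s t) + (f s t * D2 g s t)) a b' q.1 q.2 :=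
        pd_congr hU (fun q' hq' => D2_mul hf hg hq') a b' hq
      rw [e1, pd_add hU (AnOn_mul (AnOn_D2 hU hf) hg) (AnOn_mul hf (AnOn_D2 hU hg)) a b' hq]
      have t1 : pd (fun s t => D2 f s t * g s t) a b' q.1 q.2 = 0 :=
        ih (D2 f) g (AnOn_D2 hU hf) hg a b' (by omega)
          (fun a'' b'' ha hb => hvan a'' b'' ha (by omega))
      have t2 : pd (fun s t => f s t * D2 g s t) a b' q.1 q.2 = 0 := by
        apply ih f (D2 g) hf (AnOn_D2 hU hg) a b' (by omega)
        intro a'' b'' ha hb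
        rw [← pd_peel_t]
        exact hvan a'' (b'' + 1) ha (by omega)
      rw [t1, t2, add_zero]

lemma ML {U : Set (ℝ × ℝ)} (hU : IsOpen U) {x y : ℝ} (hq : (x, y) ∈ U)
    {ψ K : ℝ → ℝ → ℝ} (hψ : AnOn Set.univ ψ) (hK : AnOn U K)
    (hfac : ∀ q ∈ U, pd ψ 1 1 q.1 q.2 = K q.1 q.2 * pd ψ 2 0 q.1 q.2)
    (n : ℕ) (hs : ∀ k, 2 ≤ k → k < n → pd ψ k 0 x y = 0) :
    ∀ l k, 1 ≤ k → 1 ≤ l → k + l < n → pd ψ k l x y = 0 := by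
  intro l
  induction l using Nat.strong_induction_on with
  | _ l IH =>
  intro k hk hl hkl
  obtain ⟨k0, rfl⟩ : ∃ k0, k = k0 + 1 := ⟨k - 1, by omega⟩
  obtain ⟨l0, rfl⟩ : ∃ l0, l = l0 + 1 := ⟨l - 1, by omega⟩
  have hψ2 : AnOn Set.univ (D2 ψ) := AnOn_D2 isOpen_univ hψ
  have step1 : pd ψ (k0 + 1) (l0 + 1) x y = pd (D1 (D2 ψ)) k0 l0 x y := by
    rw [pd_peel_t]
    exact comm_s isOpen_univ hψ2 k0 l0 (q := (x, y)) trivial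
  set g2 : ℝ → ℝ → ℝ := D1 (D1 ψ) with hg2
  have hG_eq : ∀ q' ∈ U, D1 (D2 ψ) q'.1 q'.2 = K q'.1 q'.2 * g2 q'.1 q'.2 := by
    intro q' hq'
    have e1 : pd ψ 1 1 q'.1 q'.2 = D1 (D2 ψ) q'.1 q'.2 := by
      rw [pd_peel_t, pd_one_zero]
    have e2 : pd ψ 2 0 q'.1 q'.2 = g2 q'.1 q'.2 := by
      rw [show (2 : ℕ) = 1 + 1 from rfl, pd_peel_s0, pd_one_zero]
    rw [← e1, ← e2]
    exact hfac q' hq'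
  have step2 : pd (D1 (D2 ψ)) k0 l0 x y = pd (fun s t => K s t * g2 s t) k0 l0 x y :=
    pd_congr hU hG_eq k0 l0 hq
  have hg2an : AnOn U g2 :=
    fun q' _ => (AnOn_D1 isOpen_univ (AnOn_D1 isOpen_univ hψ)) q' trivial
  have hvan : ∀ a b, a ≤ k0 → b ≤ l0 → pd g2 a b x y = 0 := by
    intro a b ha hb
    have e3 : pd g2 a b x y = pd ψ (a + 2) b x y := by
      rw [hg2, ← comm_s isOpen_univ (AnOn_D1 isOpen_univ hψ) a b (q := (x, y)) trivial,
        ← comm_s isOpen_univ hψ (a + 1) b (q := (x, y)) trivial]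
    rw [e3]
    rcases Nat.eq_zero_or_pos b with hb0 | hbpos
    · subst hb0
      exact hs (a + 2) (by omega) (by omega)
    · exact IH b (by omega) (a + 2) (by omega) (by omega) (by omega)
  have final := L2D hU hq (k0 + l0) K g2 hK hg2an k0 l0 le_rfl hvan
  rw [step1, step2]
  exact final

lemma pd_comm : ∀ (k : ℕ) (ψ : ℝ → ℝ → ℝ), AnOn Set.univ ψ → ∀ (l : ℕ) (s t : ℝ),
    pd ψ k l s t = pd (fun a b => ψ b a) l k t s := by
  intro k
  induction k with
  | zero =>
    intro ψ hψ l s t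
    rw [pd_zero_left, pd_zero_right]
  | succ k ihk =>
    intro ψ hψ l s t
    rw [comm_s isOpen_univ hψ k l (q := (s, t)) trivial,
      ihk (D1 ψ) (AnOn_D1 isOpen_univ hψ) l s t, pd_peel_t]
    rfl


end Stmt8Aux

/-- Under (FH), if all pure derivatives of order < n in s and < m in t (of order ≥ 2)
vanish at (x,y), then all mixed derivatives ∂^{k,ℓ}ψ(x,y) with k,ℓ ≥ 1 and
k+ℓ < max(m,n) vanish. -/
theorem stmt8 (ψ : ℝ → ℝ → ℝ)
    (hψa : ∀ p : ℝ × ℝ, AnalyticAt ℝ (fun q : ℝ × ℝ => ψ q.1 q.2) p)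
    (hp1 : ∀ s t : ℝ, ψ (s + 1) t = ψ s t)
    (hp2 : ∀ s t : ℝ, ψ s (t + 1) = ψ s t)
    (hFH : FH1 ψ)
    (x y : ℝ) (m n : ℕ) (hm : 2 ≤ m) (hn : 2 ≤ n)
    (hs : ∀ k : ℕ, 2 ≤ k → k < n → pd ψ k 0 x y = 0)
    (ht : ∀ l : ℕ, 2 ≤ l → l < m → pd ψ 0 l x y = 0) :
    ∀ k l : ℕ, 1 ≤ k → 1 ≤ l → k + l < max m n → pd ψ k l x y = 0 := by
  obtain ⟨U, hUo, hpU, K, L, hKa, hLa, hfac⟩ := hFH (x, y)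
  have hψ : AnOn Set.univ ψ := fun q _ => hψa q
  intro k l hk hl hkl
  rcases le_or_gt m n with hmn | hnm
  · -- max = n : use the K-factorisation
    rw [max_eq_right hmn] at hkl
    have hK' : AnOn U (fun s t => K (s, t)) := by
      intro q hq
      apply (hKa q hq).congr
      filter_upwards with q'
      show K q' = K (q'.1, q'.2)
      rw [Prod.mk.eta]
    have hfacK : ∀ q ∈ U, pd ψ 1 1 q.1 q.2
        = (fun s t => K (s, t)) q.1 q.2 * pd ψ 2 0 q.1 q.2 := by
      intro q hq
      have := (hfac q hq).1
      rwa [show K q = K (q.1, q.2) by rw [Prod.mk.eta]] at this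
    exact ML hUo hpU hψ hK' hfacK n hs l k hk hl hkl
  · -- max = m : flip the two variables and use the L-factorisation
    have hnm' : n ≤ m := le_of_lt hnm
    rw [max_eq_left hnm'] at hkl
    set ψ' : ℝ → ℝ → ℝ := fun a b => ψ b a with hψ'def
    have hsw : ∀ q : ℝ × ℝ, AnalyticAt ℝ (fun q' : ℝ × ℝ => (q'.2, q'.1)) q :=
      fun q => analyticAt_snd.prod analyticAt_fst
    have hψ' : AnOn Set.univ ψ' := by
      intro q _
      exact AnalyticAt.comp (f := fun q' : ℝ × ℝ => (q'.2, q'.1)) (x := q)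
        (hψa (q.2, q.1)) (hsw q)
    set U' : Set (ℝ × ℝ) := (fun q' : ℝ × ℝ => (q'.2, q'.1)) ⁻¹' U with hU'def
    have hU'o : IsOpen U' := hUo.preimage (by fun_prop)
    have hq' : (y, x) ∈ U' := hpU
    have hKf : AnOn U' (fun b a => L (a, b)) := by
      intro q hq
      exact AnalyticAt.comp (f := fun q' : ℝ × ℝ => (q'.2, q'.1)) (x := q)
        (hLa (q.2, q.1) hq) (hsw q)
    have hfac' : ∀ q ∈ U', pd ψ' 1 1 q.1 q.2
        = (fun b a => L (a, b)) q.1 q.2 * pd ψ' 2 0 q.1 q.2 := by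
      intro q hq
      have h1 : pd ψ' 1 1 q.1 q.2 = pd ψ 1 1 q.2 q.1 :=
        (pd_comm 1 ψ hψ 1 q.2 q.1).symm
      have h2 : pd ψ' 2 0 q.1 q.2 = pd ψ 0 2 q.2 q.1 :=
        (pd_comm 0 ψ hψ 2 q.2 q.1).symm
      rw [h1, h2]
      have := (hfac (q.2, q.1) hq).2
      simpa using this
    have hs' : ∀ k', 2 ≤ k' → k' < m → pd ψ' k' 0 y x = 0 := by
      intro k' h2 hlt
      rw [← pd_comm 0 ψ hψ k' x y]
      exact ht k' h2 hlt
    have := ML hU'o hq' hψ' hKf hfac' m hs' k l hl hk (by omega)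
    rw [pd_comm k ψ hψ l x y]
    exact this
end

section
/- Let ψ : ℝ² → ℝ be real-analytic, 1-periodic in each variable, and satisfy the factorisation hypothesis (FH). Suppose that at a point (x,y) ∈ ℝ² there exist integers m,n ≥ 2 such that ∂^m_tψ(x,y) ≠ 0, ∂^n_sψ(x,y) ≠ 0, ∂^k_sψ(x,y) = 0 for all 2 ≤ k < n, and ∂^ℓ_tψ(x,y) = 0 for all 2 ≤ ℓ < m. Fix an integer r ≥ 0 with m + r < n, and let L be any real-analytic function on a neighbourhood of (x,y) satisfying ∂^{1,1}ψ = L·∂²_tψ on that neighbourhood. Then ∂^{k,ℓ}L(x,y) = 0 for all integers k,ℓ ≥ 0 with k+ℓ ≤ r. -/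
open MeasureTheory Filter

namespace Stmt9Aux

open Set


/-- directional derivative -/
noncomputable def dv (v : ℝ × ℝ) (F : ℝ × ℝ → ℝ) : ℝ × ℝ → ℝ := fun q => fderiv ℝ F q v

noncomputable def dS (F : ℝ × ℝ → ℝ) : ℝ × ℝ → ℝ := dv (1, 0) F
noncomputable def dT (F : ℝ × ℝ → ℝ) : ℝ × ℝ → ℝ := dv (0, 1) F

/-- mixed iterated directional derivatives -/
noncomputable def dd (k l : ℕ) (F : ℝ × ℝ → ℝ) : ℝ × ℝ → ℝ := dS^[k] (dT^[l] F)

variable {U : Set (ℝ × ℝ)} {F G : ℝ × ℝ → ℝ} {v w : ℝ × ℝ}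

lemma dv_analytic (hF : AnalyticOnNhd ℝ F U) (v : ℝ × ℝ) :
    AnalyticOnNhd ℝ (dv v F) U := by
  intro q hq
  have h1 : AnalyticAt ℝ (fderiv ℝ F) q := hF.fderiv q hq
  have h2 : AnalyticAt ℝ ((ContinuousLinearMap.apply ℝ ℝ v) ∘ (fderiv ℝ F)) q :=
    ((ContinuousLinearMap.apply ℝ ℝ v).analyticAt _).comp h1
  exact h2

lemma dviter_analytic (hF : AnalyticOnNhd ℝ F U) (v : ℝ × ℝ) (n : ℕ) :
    AnalyticOnNhd ℝ ((dv v)^[n] F) U := by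
  induction n with
  | zero => exact hF
  | succ n ih => rw [Function.iterate_succ_apply']; exact dv_analytic ih v

lemma dd_analytic (hF : AnalyticOnNhd ℝ F U) (k l : ℕ) :
    AnalyticOnNhd ℝ (dd k l F) U :=
  dviter_analytic (dviter_analytic hF _ l) _ k

lemma dv_congr (hU : IsOpen U) (h : EqOn F G U) (v : ℝ × ℝ) : EqOn (dv v F) (dv v G) U := by
  intro q hq
  have : F =ᶠ[nhds q] G := h.eventuallyEq_of_mem (hU.mem_nhds hq)
  simp only [dv, this.fderiv_eq]

lemma dviter_congr (hU : IsOpen U) (h : EqOn F G U) (v : ℝ × ℝ) (n : ℕ) :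
    EqOn ((dv v)^[n] F) ((dv v)^[n] G) U := by
  induction n with
  | zero => exact h
  | succ n ih =>
    rw [Function.iterate_succ_apply', Function.iterate_succ_apply']
    exact dv_congr hU ih v

lemma dd_congr (hU : IsOpen U) (h : EqOn F G U) (k l : ℕ) :
    EqOn (dd k l F) (dd k l G) U :=
  dviter_congr hU (dviter_congr hU h _ l) _ k

lemma dv_add (hU : IsOpen U) (hF : AnalyticOnNhd ℝ F U) (hG : AnalyticOnNhd ℝ G U) (v : ℝ × ℝ) :
    EqOn (dv v (fun q => F q + G q)) (fun q => dv v F q + dv v G q) U := by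
  intro q hq
  simp only [dv, fderiv_fun_add ((hF q hq).differentiableAt) ((hG q hq).differentiableAt),
    ContinuousLinearMap.add_apply]

lemma dv_const_mul (hU : IsOpen U) (hF : AnalyticOnNhd ℝ F U) (c : ℝ) (v : ℝ × ℝ) :
    EqOn (dv v (fun q => c * F q)) (fun q => c * dv v F q) U := by
  intro q hq
  simp only [dv, fderiv_const_mul ((hF q hq).differentiableAt) c,
    ContinuousLinearMap.coe_smul', Pi.smul_apply, smul_eq_mul]

lemma dviter_add (hU : IsOpen U) (hF : AnalyticOnNhd ℝ F U) (hG : AnalyticOnNhd ℝ G U)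
    (v : ℝ × ℝ) (n : ℕ) :
    EqOn ((dv v)^[n] (fun q => F q + G q)) (fun q => (dv v)^[n] F q + (dv v)^[n] G q) U := by
  induction n with
  | zero => intro q hq; rfl
  | succ n ih =>
    rw [Function.iterate_succ_apply', Function.iterate_succ_apply', Function.iterate_succ_apply']
    intro q hq
    have h1 := dv_congr hU ih v hq
    rw [h1, dv_add hU (dviter_analytic hF v n) (dviter_analytic hG v n) v hq]

lemma dviter_const_mul (hU : IsOpen U) (hF : AnalyticOnNhd ℝ F U) (c : ℝ) (v : ℝ × ℝ) (n : ℕ) :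
    EqOn ((dv v)^[n] (fun q => c * F q)) (fun q => c * (dv v)^[n] F q) U := by
  induction n with
  | zero => intro q hq; rfl
  | succ n ih =>
    rw [Function.iterate_succ_apply', Function.iterate_succ_apply']
    intro q hq
    have h1 := dv_congr hU ih v hq
    rw [h1, dv_const_mul hU (dviter_analytic hF v n) c v hq]

lemma dd_add (hU : IsOpen U) (hF : AnalyticOnNhd ℝ F U) (hG : AnalyticOnNhd ℝ G U) (k l : ℕ) :
    EqOn (dd k l (fun q => F q + G q)) (fun q => dd k l F q + dd k l G q) U := by
  intro q hq
  have h1 : EqOn (dT^[l] (fun q => F q + G q)) (fun q => dT^[l] F q + dT^[l] G q) U :=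
    dviter_add hU hF hG _ l
  have h2 := dviter_congr hU h1 (1, 0) k hq
  unfold dd dS
  rw [h2]
  exact dviter_add hU (dviter_analytic hF _ l) (dviter_analytic hG _ l) _ k hq

lemma dd_const_mul (hU : IsOpen U) (hF : AnalyticOnNhd ℝ F U) (c : ℝ) (k l : ℕ) :
    EqOn (dd k l (fun q => c * F q)) (fun q => c * dd k l F q) U := by
  intro q hq
  have h1 : EqOn (dT^[l] (fun q => c * F q)) (fun q => c * dT^[l] F q) U :=
    dviter_const_mul hU hF c _ l
  have h2 := dviter_congr hU h1 (1, 0) k hq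
  unfold dd dS
  rw [h2]
  exact dviter_const_mul hU (dviter_analytic hF _ l) c _ k hq

lemma dv_mul (hU : IsOpen U) (hF : AnalyticOnNhd ℝ F U) (hG : AnalyticOnNhd ℝ G U) (v : ℝ × ℝ) :
    EqOn (dv v (fun q => F q * G q)) (fun q => dv v F q * G q + F q * dv v G q) U := by
  intro q hq
  simp only [dv, fderiv_fun_mul ((hF q hq).differentiableAt) ((hG q hq).differentiableAt)]
  simp only [ContinuousLinearMap.add_apply, ContinuousLinearMap.coe_smul', Pi.smul_apply,
    smul_eq_mul]
  ring


lemma dv_comm (hU : IsOpen U) (hF : AnalyticOnNhd ℝ F U) (v w : ℝ × ℝ) :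
    EqOn (dv v (dv w F)) (dv w (dv v F)) U := by
  intro q hq
  have hdF : AnalyticAt ℝ (fderiv ℝ F) q := hF.fderiv q hq
  have key : ∀ u : ℝ × ℝ, fderiv ℝ (dv u F) q =
      (ContinuousLinearMap.apply ℝ ℝ u).comp (fderiv ℝ (fderiv ℝ F) q) := by
    intro u
    have : dv u F = (ContinuousLinearMap.apply ℝ ℝ u) ∘ (fderiv ℝ F) := rfl
    rw [this]
    exact ((ContinuousLinearMap.apply ℝ ℝ u).hasFDerivAt.comp q
      hdF.differentiableAt.hasFDerivAt).fderiv
  have hsymm : IsSymmSndFDerivAt ℝ F q := by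
    have : ContDiffAt ℝ 2 F q := (hF q hq).contDiffAt
    exact this.isSymmSndFDerivAt (by simp)
  show fderiv ℝ (dv w F) q v = fderiv ℝ (dv v F) q w
  rw [key w, key v]
  simpa using hsymm.eq v w

lemma dviter_comm (hU : IsOpen U) (hF : AnalyticOnNhd ℝ F U) (v w : ℝ × ℝ) (n : ℕ) :
    EqOn ((dv w)^[n] (dv v F)) (dv v ((dv w)^[n] F)) U := by
  induction n generalizing F with
  | zero => intro q hq; rfl
  | succ n ih =>
    intro q hq
    rw [Function.iterate_succ_apply, Function.iterate_succ_apply]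
    have h1 : EqOn ((dv w)^[n] (dv w (dv v F))) ((dv w)^[n] (dv v (dv w F))) U :=
      dviter_congr hU (dv_comm hU hF v w).symm w n
    rw [h1 hq]
    exact ih (dv_analytic hF w) hq

/-- `dd k (l+1) F = dd k l (dT F)` -/
lemma dd_dT (k l : ℕ) (F : ℝ × ℝ → ℝ) : dd k l (dT F) = dd k (l + 1) F := by
  unfold dd
  rw [← Function.iterate_succ_apply]

lemma dd_dS (hU : IsOpen U) (hF : AnalyticOnNhd ℝ F U) (k l : ℕ) :
    EqOn (dd k l (dS F)) (dd (k + 1) l F) U := by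
  intro q hq
  unfold dd dS dT
  have h1 : EqOn ((dv (0,1))^[l] (dv (1,0) F)) (dv (1,0) ((dv (0,1))^[l] F)) U :=
    dviter_comm hU hF _ _ l
  rw [dviter_congr hU h1 (1,0) k hq, ← Function.iterate_succ_apply]

lemma dd_zero_zero (F : ℝ × ℝ → ℝ) : dd 0 0 F = F := rfl

lemma dd_succ_k (k : ℕ) (F : ℝ × ℝ → ℝ) : dd (k + 1) 0 F = dd k 0 (dS F) := by
  unfold dd
  rw [Function.iterate_succ_apply]
  rfl


lemma dT_analytic (hF : AnalyticOnNhd ℝ F U) : AnalyticOnNhd ℝ (dT F) U := dv_analytic hF _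
lemma dS_analytic (hF : AnalyticOnNhd ℝ F U) : AnalyticOnNhd ℝ (dS F) U := dv_analytic hF _

lemma dT_mul (hU : IsOpen U) (hF : AnalyticOnNhd ℝ F U) (hG : AnalyticOnNhd ℝ G U) :
    EqOn (dT (fun q => F q * G q)) (fun q => dT F q * G q + F q * dT G q) U :=
  dv_mul hU hF hG (0, 1)

lemma dS_mul (hU : IsOpen U) (hF : AnalyticOnNhd ℝ F U) (hG : AnalyticOnNhd ℝ G U) :
    EqOn (dS (fun q => F q * G q)) (fun q => dS F q * G q + F q * dS G q) U :=
  dv_mul hU hF hG (1, 0)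

/-- Key Leibniz-type vanishing lemma: if for each splitting of the derivative indices,
one of the two factors' corresponding derivatives vanishes at `p`, then the mixed
derivative of the product vanishes at `p`. -/
lemma Q2 (d : ℕ) : ∀ {U : Set (ℝ × ℝ)}, IsOpen U → ∀ H G : ℝ × ℝ → ℝ,
    AnalyticOnNhd ℝ H U → AnalyticOnNhd ℝ G U → ∀ p ∈ U, ∀ k N : ℕ, k + N ≤ d →
    (∀ i j : ℕ, i ≤ k → j ≤ N → dd i j G p = 0 ∨ dd (k - i) (N - j) H p = 0) →
    dd k N (fun q => H q * G q) p = 0 := by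
  induction d with
  | zero =>
    intro U hU H G hH hG p hp k N hkN hsplit
    have hk : k = 0 := by omega
    have hN : N = 0 := by omega
    subst hk; subst hN
    have := hsplit 0 0 le_rfl le_rfl
    rw [dd_zero_zero]
    rcases this with h | h
    · rw [dd_zero_zero] at h; simp [h]
    · rw [dd_zero_zero] at h; simp [h]
  | succ d ih =>
    intro U hU H G hH hG p hp k N hkN hsplit
    match N, k with
    | 0, 0 =>
      have := hsplit 0 0 le_rfl le_rfl
      rw [dd_zero_zero]
      rcases this with h | h
      · rw [dd_zero_zero] at h; simp [h]
      · rw [dd_zero_zero] at h; simp [h]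
    | 0, k + 1 =>
      rw [dd_succ_k]
      have hmul : EqOn (dS (fun q => H q * G q))
          (fun q => (fun q => dS H q * G q) q + (fun q => H q * dS G q) q) U :=
        dS_mul hU hH hG
      rw [dd_congr hU hmul k 0 hp,
        dd_add hU ((dS_analytic hH).mul hG) (hH.mul (dS_analytic hG)) k 0 hp]
      have h1 : dd k 0 (fun q => dS H q * G q) p = 0 := by
        apply ih hU (dS H) G (dS_analytic hH) hG p hp k 0 (by omega)
        intro i j hi hj
        have hj0 : j = 0 := by omega
        subst hj0
        rcases hsplit i 0 (by omega) le_rfl with h | h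
        · exact Or.inl h
        · right
          simp only [Nat.sub_self] at h ⊢
          have heq : k + 1 - i = (k - i) + 1 := by omega
          rw [heq, dd_succ_k] at h
          exact h
      have h2 : dd k 0 (fun q => H q * dS G q) p = 0 := by
        apply ih hU H (dS G) hH (dS_analytic hG) p hp k 0 (by omega)
        intro i j hi hj
        have hj0 : j = 0 := by omega
        subst hj0
        rcases hsplit (i + 1) 0 (by omega) le_rfl with h | h
        · left
          rw [dd_succ_k] at h
          exact h
        · right
          simp only [Nat.sub_self] at h ⊢
          have heq : k + 1 - (i + 1) = k - i := by omega
          rw [heq] at h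
          exact h
      show dd k 0 (fun q => dS H q * G q) p + dd k 0 (fun q => H q * dS G q) p = 0
      rw [h1, h2]; ring
    | N + 1, k =>
      rw [← dd_dT]
      have hmul : EqOn (dT (fun q => H q * G q))
          (fun q => (fun q => dT H q * G q) q + (fun q => H q * dT G q) q) U :=
        dT_mul hU hH hG
      rw [dd_congr hU hmul k N hp,
        dd_add hU ((dT_analytic hH).mul hG) (hH.mul (dT_analytic hG)) k N hp]
      have h1 : dd k N (fun q => dT H q * G q) p = 0 := by
        apply ih hU (dT H) G (dT_analytic hH) hG p hp k N (by omega)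
        intro i j hi hj
        rcases hsplit i j hi (by omega) with h | h
        · exact Or.inl h
        · right
          have heq : N + 1 - j = (N - j) + 1 := by omega
          rw [heq, ← dd_dT] at h
          exact h
      have h2 : dd k N (fun q => H q * dT G q) p = 0 := by
        apply ih hU H (dT G) hH (dT_analytic hG) p hp k N (by omega)
        intro i j hi hj
        rcases hsplit i (j + 1) hi (by omega) with h | h
        · left
          rw [← dd_dT] at h
          exact h
        · right
          have heq : N + 1 - (j + 1) = N - j := by omega
          rw [heq] at h
          exact h
      show dd k N (fun q => dT H q * G q) p + dd k N (fun q => H q * dT G q) p = 0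
      rw [h1, h2]; ring


/-- the monomial `(t - y)^E` as a function on `ℝ²` -/
noncomputable def chi (y : ℝ) (E : ℕ) : ℝ × ℝ → ℝ := fun q => (q.2 - y) ^ E

lemma chi_analytic (y : ℝ) (E : ℕ) (U : Set (ℝ × ℝ)) : AnalyticOnNhd ℝ (chi y E) U := by
  intro q hq
  exact (analyticAt_snd.sub analyticAt_const).pow E

lemma hasFDerivAt_chi (y : ℝ) (E : ℕ) (q : ℝ × ℝ) :
    HasFDerivAt (chi y E)
      (((ContinuousLinearMap.smulRight (1 : ℝ →L[ℝ] ℝ)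
        ((E : ℝ) * (q.2 - y) ^ (E - 1) * 1)).comp (ContinuousLinearMap.snd ℝ ℝ ℝ))) q := by
  have h1 : HasDerivAt (fun t : ℝ => (t - y) ^ E) ((E : ℝ) * (q.2 - y) ^ (E - 1) * 1) q.2 :=
    ((hasDerivAt_id q.2).sub_const y).pow E
  exact h1.hasFDerivAt.comp q hasFDerivAt_snd

lemma dT_chi (y : ℝ) (E : ℕ) : dT (chi y E) = fun q => (E : ℝ) * chi y (E - 1) q := by
  funext q
  show fderiv ℝ (chi y E) q (0, 1) = _
  rw [(hasFDerivAt_chi y E q).fderiv]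
  simp [chi]

lemma dS_chi (y : ℝ) (E : ℕ) : dS (chi y E) = fun _ => 0 := by
  funext q
  show fderiv ℝ (chi y E) q (1, 0) = _
  rw [(hasFDerivAt_chi y E q).fderiv]
  simp

lemma dS_zero : dS (fun _ : ℝ × ℝ => (0 : ℝ)) = fun _ => 0 := by
  funext q
  show fderiv ℝ (fun _ : ℝ × ℝ => (0 : ℝ)) q (1, 0) = 0
  rw [fderiv_fun_const]
  simp

lemma dT_const_mul (c : ℝ) (hF : AnalyticOnNhd ℝ F univ) :
    dT (fun q => c * F q) = fun q => c * dT F q := by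
  funext q
  exact dv_const_mul isOpen_univ hF c (0, 1) (mem_univ q)

lemma dS_const_mul (c : ℝ) (hF : AnalyticOnNhd ℝ F univ) :
    dS (fun q => c * F q) = fun q => c * dS F q := by
  funext q
  exact dv_const_mul isOpen_univ hF c (1, 0) (mem_univ q)

lemma dT_iter_chi (y : ℝ) (E j : ℕ) :
    dT^[j] (chi y E) = fun q => (E.descFactorial j : ℝ) * chi y (E - j) q := by
  induction j with
  | zero => simp [Nat.descFactorial]
  | succ j ih =>
    rw [Function.iterate_succ_apply', ih,
      dT_const_mul _ (chi_analytic y (E - j) univ), dT_chi]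
    funext q
    have : E - (j + 1) = E - j - 1 := by omega
    rw [this, Nat.descFactorial_succ]
    push_cast
    ring

lemma dd_chi_pos_i (y : ℝ) (i j E : ℕ) : dd (i + 1) j (chi y E) = fun _ => 0 := by
  have hbase : dS (dT^[j] (chi y E)) = fun _ => 0 := by
    rw [dT_iter_chi, dS_const_mul _ (chi_analytic y (E - j) univ), dS_chi]
    funext q; simp
  show dS^[i+1] (dT^[j] (chi y E)) = fun _ => 0
  rw [Function.iterate_succ_apply, hbase]
  induction i with
  | zero => rfl
  | succ i ih => rw [Function.iterate_succ_apply, dS_zero, ih]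

lemma dd_chi_0j (y : ℝ) (j E : ℕ) (hj : j < E) (p : ℝ × ℝ) (hp : p.2 = y) :
    dd 0 j (chi y E) p = 0 := by
  show dT^[j] (chi y E) p = 0
  rw [dT_iter_chi]
  have : chi y (E - j) p = 0 := by
    simp only [chi, hp, sub_self]
    exact zero_pow (by omega)
  simp [this]

lemma dd_chi_0E (y : ℝ) (E : ℕ) (p : ℝ × ℝ) (hp : p.2 = y) :
    dd 0 E (chi y E) p = (E.factorial : ℝ) := by
  show dT^[E] (chi y E) p = _
  rw [dT_iter_chi]
  simp [chi, Nat.sub_self, Nat.descFactorial_self]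

/-- the monomial lemma: multiplying by `(t-y)^e` shifts `t`-derivatives by `e`,
up to a positive constant. -/
lemma M (y : ℝ) : ∀ e l : ℕ, ∃ C : ℝ, 0 < C ∧
    ∀ (U : Set (ℝ × ℝ)), IsOpen U → ∀ H : ℝ × ℝ → ℝ, AnalyticOnNhd ℝ H U →
      ∀ (k : ℕ) (p : ℝ × ℝ), p ∈ U → p.2 = y →
        dd k (l + e) (fun q => H q * chi y e q) p = C * dd k l H p := by
  intro e
  induction e with
  | zero =>
    intro l
    refine ⟨1, one_pos, ?_⟩
    intro U hU H hH k p hp hpy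
    have h : (fun q => H q * chi y 0 q) = H := by
      funext q; simp [chi]
    rw [h, one_mul, Nat.add_zero]
  | succ e ihe =>
    have hmul : ∀ (U : Set (ℝ × ℝ)), IsOpen U → ∀ H : ℝ × ℝ → ℝ, AnalyticOnNhd ℝ H U →
        EqOn (dT (fun q => H q * chi y (e + 1) q))
          (fun q => (fun q => dT H q * chi y (e + 1) q) q
            + (fun q => ((e : ℝ) + 1) * (H q * chi y e q)) q) U := by
      intro U hU H hH q hq
      show dT (fun q => H q * chi y (e + 1) q) q
        = dT H q * chi y (e + 1) q + ((e : ℝ) + 1) * (H q * chi y e q)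
      rw [dT_mul hU hH (chi_analytic y (e + 1) U) hq]
      show dT H q * chi y (e + 1) q + H q * dT (chi y (e + 1)) q = _
      rw [dT_chi]
      show dT H q * chi y (e + 1) q
        + H q * (((e + 1 : ℕ) : ℝ) * chi y (e + 1 - 1) q) = _
      rw [Nat.add_sub_cancel]
      push_cast
      ring
    intro l
    induction l with
    | zero =>
      obtain ⟨C0, hC0, h0⟩ := ihe 0
      refine ⟨(e + 1 : ℝ) * C0, by positivity, ?_⟩
      intro U hU H hH k p hp hpy
      rw [show (0 + (e+1) : ℕ) = e + 1 by omega, ← dd_dT (F := fun q => H q * chi y (e+1) q) k e]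
      rw [dd_congr hU (hmul U hU H hH) k e hp,
        dd_add hU ((dT_analytic hH).mul (chi_analytic y (e + 1) U))
          ((analyticOnNhd_const (v := ((e : ℝ) + 1))).mul (hH.mul (chi_analytic y e U))) k e hp]
      show dd k e (fun q => dT H q * chi y (e + 1) q) p
        + dd k e (fun q => ((e : ℝ) + 1) * (H q * chi y e q)) p = _
      have hz : dd k e (fun q => dT H q * chi y (e + 1) q) p = 0 := by
        apply Q2 (k + e) hU (dT H) (chi y (e + 1)) (dT_analytic hH) (chi_analytic y (e+1) U)
          p hp k e le_rfl
        intro i j hi hj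
        left
        match i with
        | 0 => exact dd_chi_0j y j (e + 1) (by omega) p hpy
        | i + 1 => rw [dd_chi_pos_i]
      rw [hz, dd_const_mul hU (hH.mul (chi_analytic y e U)) ((e : ℝ) + 1) k e hp]
      show 0 + ((e : ℝ) + 1) * dd k e (fun q => H q * chi y e q) p = _
      have h0' := h0 U hU H hH k p hp hpy
      rw [Nat.zero_add] at h0'
      rw [h0']
      ring
    | succ l ihl =>
      obtain ⟨C1, hC1, h1⟩ := ihl
      obtain ⟨C2, hC2, h2⟩ := ihe (l + 1)
      refine ⟨C1 + (e + 1 : ℝ) * C2, by positivity, ?_⟩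
      intro U hU H hH k p hp hpy
      rw [show ((l+1) + (e+1) : ℕ) = (l + (e+1)) + 1 by omega,
        ← dd_dT (F := fun q => H q * chi y (e+1) q) k (l + (e+1))]
      rw [dd_congr hU (hmul U hU H hH) k (l + (e+1)) hp,
        dd_add hU ((dT_analytic hH).mul (chi_analytic y (e + 1) U))
          ((analyticOnNhd_const (v := ((e : ℝ) + 1))).mul (hH.mul (chi_analytic y e U)))
          k (l + (e+1)) hp]
      show dd k (l + (e+1)) (fun q => dT H q * chi y (e + 1) q) p
        + dd k (l + (e+1)) (fun q => ((e : ℝ) + 1) * (H q * chi y e q)) p = _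
      rw [h1 U hU (dT H) (dT_analytic hH) k p hp hpy,
        dd_const_mul hU (hH.mul (chi_analytic y e U)) ((e : ℝ) + 1) k (l + (e+1)) hp]
      show C1 * dd k l (dT H) p
        + ((e : ℝ) + 1) * dd k (l + (e+1)) (fun q => H q * chi y e q) p = _
      have h2' := h2 U hU H hH k p hp hpy
      rw [show ((l+1) + e : ℕ) = l + (e+1) by omega] at h2'
      rw [h2', dd_dT]
      ring


lemma hasDerivAt_slice_t {G : ℝ × ℝ → ℝ} {a b : ℝ} (hG : DifferentiableAt ℝ G (a, b)) :
    HasDerivAt (fun t => G (a, t)) (dT G (a, b)) b := by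
  have h1 : HasDerivAt (fun t : ℝ => ((a, t) : ℝ × ℝ)) ((0 : ℝ), (1 : ℝ)) b :=
    (hasDerivAt_const b a).prodMk (hasDerivAt_id b)
  exact hG.hasFDerivAt.comp_hasDerivAt b h1

lemma hasDerivAt_slice_s {G : ℝ × ℝ → ℝ} {a b : ℝ} (hG : DifferentiableAt ℝ G (a, b)) :
    HasDerivAt (fun s => G (s, b)) (dS G (a, b)) a := by
  have h1 : HasDerivAt (fun s : ℝ => ((s, b) : ℝ × ℝ)) ((1 : ℝ), (0 : ℝ)) a :=
    (hasDerivAt_id a).prodMk (hasDerivAt_const a b)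
  exact hG.hasFDerivAt.comp_hasDerivAt a h1

/-- bridge between the curried iterated derivatives `pd` and the uncurried `dd`. -/
lemma pd_eq_dd (f : ℝ → ℝ → ℝ) (U : Set (ℝ × ℝ)) (hU : IsOpen U)
    (hf : AnalyticOnNhd ℝ (fun q : ℝ × ℝ => f q.1 q.2) U) (k l : ℕ) :
    ∀ q ∈ U, iteratedDeriv k (fun s' => iteratedDeriv l (f s') q.2) q.1
      = dd k l (fun q : ℝ × ℝ => f q.1 q.2) q := by
  set F : ℝ × ℝ → ℝ := fun q => f q.1 q.2 with hF
  have step1 : ∀ l : ℕ, ∀ q ∈ U, iteratedDeriv l (f q.1) q.2 = dT^[l] F q := by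
    intro l
    induction l with
    | zero => intro q hq; simp [iteratedDeriv_zero, hF]
    | succ l ih =>
      rintro ⟨a, b⟩ hq
      rw [iteratedDeriv_succ]
      have hmem : {t : ℝ | ((a, t) : ℝ × ℝ) ∈ U} ∈ nhds b := by
        have : IsOpen {t : ℝ | ((a, t) : ℝ × ℝ) ∈ U} :=
          hU.preimage (by fun_prop : Continuous fun t : ℝ => ((a, t) : ℝ × ℝ))
        exact this.mem_nhds hq
      have hev : (fun t => iteratedDeriv l (f a) t) =ᶠ[nhds b]
          (fun t => dT^[l] F (a, t)) :=
        eventually_of_mem hmem (fun t ht => ih (a, t) ht)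
      rw [hev.deriv_eq]
      have hd : DifferentiableAt ℝ (dT^[l] F) (a, b) :=
        ((dviter_analytic hf (0, 1) l) (a, b) hq).differentiableAt
      rw [(hasDerivAt_slice_t hd).deriv]
      rw [Function.iterate_succ_apply']
  intro q hq
  obtain ⟨a, b⟩ := q
  show iteratedDeriv k (fun s' => iteratedDeriv l (f s') b) a = dd k l F (a, b)
  have step2 : ∀ k : ℕ, ∀ a b : ℝ, (a, b) ∈ U →
      iteratedDeriv k (fun s' => iteratedDeriv l (f s') b) a = dS^[k] (dT^[l] F) (a, b) := by
    intro k
    induction k with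
    | zero =>
      intro a b hq
      simp only [iteratedDeriv_zero, Function.iterate_zero, id]
      exact step1 l (a, b) hq
    | succ k ih =>
      intro a b hq
      rw [iteratedDeriv_succ]
      have hmem : {s : ℝ | ((s, b) : ℝ × ℝ) ∈ U} ∈ nhds a := by
        have : IsOpen {s : ℝ | ((s, b) : ℝ × ℝ) ∈ U} :=
          hU.preimage (by fun_prop : Continuous fun s : ℝ => ((s, b) : ℝ × ℝ))
        exact this.mem_nhds hq
      have hev : (fun s => iteratedDeriv k (fun s' => iteratedDeriv l (f s') b) s) =ᶠ[nhds a]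
          (fun s => dS^[k] (dT^[l] F) (s, b)) :=
        eventually_of_mem hmem (fun s hs => ih s b hs)
      rw [hev.deriv_eq]
      have hd : DifferentiableAt ℝ (dS^[k] (dT^[l] F)) (a, b) :=
        ((dviter_analytic (dviter_analytic hf (0, 1) l) (1, 0) k) (a, b) hq).differentiableAt
      rw [(hasDerivAt_slice_s hd).deriv]
      rw [Function.iterate_succ_apply']
  exact step2 k a b hq


lemma dd_one_one (F : ℝ × ℝ → ℝ) : dd 1 1 F = dS (dT F) := by
  unfold dd
  rw [Function.iterate_one, Function.iterate_one]

lemma dd_two_zero (F : ℝ × ℝ → ℝ) : dd 2 0 F = dS (dS F) := by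
  unfold dd
  show dS^[2] F = _
  rw [Function.iterate_succ_apply, Function.iterate_one]

lemma dd_zero_two (F : ℝ × ℝ → ℝ) : dd 0 2 F = dT (dT F) := by
  unfold dd
  show dT^[2] F = _
  rw [Function.iterate_succ_apply, Function.iterate_one]

end Stmt9Aux

open Stmt9Aux in
theorem stmt9' (ψ : ℝ → ℝ → ℝ)
    (hψa : ∀ p : ℝ × ℝ, AnalyticAt ℝ (fun q : ℝ × ℝ => ψ q.1 q.2) p)
    (hFH : FH1 ψ)
    (x y : ℝ) (m n : ℕ) (hm : 2 ≤ m) (hn : 2 ≤ n)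
    (hmt : pd ψ 0 m x y ≠ 0)
    (hs : ∀ k : ℕ, 2 ≤ k → k < n → pd ψ k 0 x y = 0)
    (ht : ∀ l : ℕ, 2 ≤ l → l < m → pd ψ 0 l x y = 0)
    (r : ℕ) (hr : m + r < n)
    (L : ℝ → ℝ → ℝ) (V : Set (ℝ × ℝ)) (hV : IsOpen V) (hxyV : (x, y) ∈ V)
    (hLa : ∀ q ∈ V, AnalyticAt ℝ (fun q' : ℝ × ℝ => L q'.1 q'.2) q)
    (hLfac : ∀ q ∈ V, pd ψ 1 1 q.1 q.2 = L q.1 q.2 * pd ψ 0 2 q.1 q.2) :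
    ∀ k l : ℕ, k + l ≤ r → pd L k l x y = 0 := by
  intro k l hkl
  set Ψ : ℝ × ℝ → ℝ := fun q => ψ q.1 q.2 with hΨdef
  have hΨ : AnalyticOnNhd ℝ Ψ Set.univ := fun q _ => hψa q
  obtain ⟨U₀, hU₀, hpU₀, K, K₂, hKa, hK₂a, hKid⟩ := hFH (x, y)
  set W := U₀ ∩ V with hWdef
  have hW : IsOpen W := hU₀.inter hV
  have hpW : (x, y) ∈ W := ⟨hpU₀, hxyV⟩
  set ℒ : ℝ × ℝ → ℝ := fun q => L q.1 q.2 with hℒdef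
  have hℒ : AnalyticOnNhd ℝ ℒ W := fun q hq => hLa q hq.2
  have hK : AnalyticOnNhd ℝ K W := fun q hq => hKa q hq.1
  have pdΨ : ∀ (a b : ℕ) (q : ℝ × ℝ), pd ψ a b q.1 q.2 = dd a b Ψ q :=
    fun a b q => pd_eq_dd ψ Set.univ isOpen_univ (fun q _ => hψa q) a b q (Set.mem_univ q)
  -- identities on W
  have hstW : Set.EqOn (dd 1 1 Ψ) (fun q => K q * dd 2 0 Ψ q) W := by
    intro q hq
    have h := (hKid q hq.1).1
    rw [pdΨ 1 1 q, pdΨ 2 0 q] at h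
    exact h
  have hltW : Set.EqOn (dd 1 1 Ψ) (fun q => ℒ q * dd 0 2 Ψ q) W := by
    intro q hq
    have h := hLfac q hq.2
    rw [pdΨ 1 1 q, pdΨ 0 2 q] at h
    exact h
  -- commutation conversions
  have c2 : ∀ (i j : ℕ) (q : ℝ × ℝ), dd i j (dd 1 1 Ψ) q = dd (i+1) (j+1) Ψ q := by
    intro i j q
    rw [dd_one_one, dd_dS isOpen_univ (dT_analytic hΨ) i j (Set.mem_univ q), dd_dT]
  have c1 : ∀ (i j : ℕ) (q : ℝ × ℝ), dd i j (dd 2 0 Ψ) q = dd (i+2) j Ψ q := by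
    intro i j q
    rw [dd_two_zero, dd_dS isOpen_univ (dS_analytic hΨ) i j (Set.mem_univ q),
      dd_dS isOpen_univ hΨ (i+1) j (Set.mem_univ q)]
  have c3 : ∀ (i j : ℕ) (q : ℝ × ℝ), dd i j (dd 0 2 Ψ) q = dd i (j+2) Ψ q := by
    intro i j q
    rw [dd_zero_two, dd_dT, dd_dT]
  -- Claim A : mixed derivatives of ψ of low order vanish at (x,y)
  have ClaimA : ∀ j i : ℕ, i + j + 3 ≤ n → dd (i+1) (j+1) Ψ (x, y) = 0 := by
    intro j
    induction j using Nat.strong_induction_on with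
    | _ j IH =>
      intro i hij
      rw [← c2 i j (x, y), dd_congr hW hstW i j hpW]
      apply Q2 (i + j) hW K (dd 2 0 Ψ) hK ((dd_analytic hΨ 2 0).mono (Set.subset_univ W))
        (x, y) hpW i j le_rfl
      intro a b ha hb
      left
      rw [c1 a b (x, y)]
      match b with
      | 0 =>
        rw [← pdΨ (a+2) 0 (x, y)]
        exact hs (a+2) (by omega) (by omega)
      | b + 1 =>
        exact IH b (by omega) (a+1) (by omega)
  -- set up the monomial decomposition
  obtain ⟨e, rfl⟩ : ∃ e, m = e + 2 := ⟨m - 2, by omega⟩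
  have hcne : pd ψ 0 (e+2) x y ≠ 0 := hmt
  have hc : dd 0 (e+2) Ψ (x, y) = pd ψ 0 (e+2) x y := (pdΨ 0 (e+2) (x, y)).symm
  set c : ℝ := pd ψ 0 (e+2) x y with hcdef
  set cc : ℝ := c / (e.factorial : ℝ) with hccdef
  have hccne : cc ≠ 0 := div_ne_zero hcne (Nat.cast_ne_zero.2 e.factorial_ne_zero)
  set Gt : ℝ × ℝ → ℝ := fun q => dd 0 2 Ψ q + (-cc) * chi y e q with hGt
  have hGta : AnalyticOnNhd ℝ Gt Set.univ :=
    (dd_analytic hΨ 0 2).add (analyticOnNhd_const.mul (chi_analytic y e Set.univ))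
  -- main induction
  have main : ∀ d k' l' : ℕ, k' + l' = d → k' + l' ≤ r → dd k' l' ℒ (x, y) = 0 := by
    intro d
    induction d using Nat.strong_induction_on with
    | _ d IH =>
      intro k' l' hd hklr
      obtain ⟨C, hCpos, hMl⟩ := M y e l'
      have h0 : dd (k'+1) ((l'+e)+1) Ψ (x, y) = 0 := ClaimA (l'+e) k' (by omega)
      have h1 : dd k' (l'+e) (dd 1 1 Ψ) (x, y) = 0 := by rw [c2 k' (l'+e) (x, y)]; exact h0
      have h2 : dd k' (l'+e) (fun q => ℒ q * dd 0 2 Ψ q) (x, y) = 0 := by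
        rw [← dd_congr hW hltW k' (l'+e) hpW]
        exact h1
      have h3 : dd k' (l'+e) (fun q => ℒ q * dd 0 2 Ψ q) (x, y)
          = dd k' (l'+e) (fun q => ℒ q * Gt q) (x, y)
            + cc * dd k' (l'+e) (fun q => ℒ q * chi y e q) (x, y) := by
        have hdecomp : (fun q => ℒ q * dd 0 2 Ψ q)
            = (fun q => (fun q => ℒ q * Gt q) q + (fun q => cc * (ℒ q * chi y e q)) q) := by
          funext q
          show ℒ q * dd 0 2 Ψ q = ℒ q * Gt q + cc * (ℒ q * chi y e q)
          rw [hGt]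
          show ℒ q * dd 0 2 Ψ q = ℒ q * (dd 0 2 Ψ q + (-cc) * chi y e q)
            + cc * (ℒ q * chi y e q)
          ring
        rw [hdecomp, dd_add hW (hℒ.mul (hGta.mono (Set.subset_univ W)))
          (analyticOnNhd_const.mul (hℒ.mul (chi_analytic y e W))) k' (l'+e) hpW]
        show dd k' (l'+e) (fun q => ℒ q * Gt q) (x, y)
          + dd k' (l'+e) (fun q => cc * (ℒ q * chi y e q)) (x, y) = _
        rw [dd_const_mul hW (hℒ.mul (chi_analytic y e W)) cc k' (l'+e) hpW]
      have h4 : dd k' (l'+e) (fun q => ℒ q * Gt q) (x, y) = 0 := by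
        apply Q2 (k' + (l'+e)) hW ℒ Gt hℒ (hGta.mono (Set.subset_univ W)) (x, y) hpW
          k' (l'+e) le_rfl
        intro i j hi hj
        by_cases hij : i + j ≤ e
        · left
          have hsplitG : dd i j Gt (x, y)
              = dd i (j+2) Ψ (x, y) + (-cc) * dd i j (chi y e) (x, y) := by
            rw [hGt, dd_add isOpen_univ (dd_analytic hΨ 0 2)
              (analyticOnNhd_const.mul (chi_analytic y e Set.univ)) i j (Set.mem_univ _)]
            show dd i j (dd 0 2 Ψ) (x, y) + dd i j (fun q => (-cc) * chi y e q) (x, y) = _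
            rw [c3 i j (x, y),
              dd_const_mul isOpen_univ (chi_analytic y e Set.univ) (-cc) i j (Set.mem_univ _)]
          rw [hsplitG]
          match i, hij with
          | 0, hij =>
            have hij' : j ≤ e := by omega
            rcases eq_or_lt_of_le hij' with hje | hjlt
            · -- j = e : the two contributions cancel
              subst hje
              rw [dd_chi_0E y j (x, y) rfl]
              rw [show dd 0 (j+2) Ψ (x, y) = c from hc]
              rw [hccdef]
              field_simp
              ring
            · -- j < e : both vanish
              rw [dd_chi_0j y j e hjlt (x, y) rfl]
              have : dd 0 (j+2) Ψ (x, y) = 0 := by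
                rw [← pdΨ 0 (j+2) (x, y)]
                exact ht (j+2) (by omega) (by omega)
              rw [this]
              ring
          | i + 1, hij =>
            rw [dd_chi_pos_i y i j e]
            have : dd (i+1) (j+2) Ψ (x, y) = 0 := ClaimA (j+1) i (by omega)
            rw [this]
            simp
        · right
          exact IH ((k' - i) + ((l' + e) - j)) (by omega) (k' - i) ((l' + e) - j) rfl (by omega)
      have h5 : dd k' (l'+e) (fun q => ℒ q * chi y e q) (x, y) = C * dd k' l' ℒ (x, y) :=
        hMl W hW ℒ hℒ k' (x, y) hpW rfl
      have hfin : cc * (C * dd k' l' ℒ (x, y)) = 0 := by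
        rw [← h5]
        have := h2
        rw [h3, h4, zero_add] at this
        exact this
      rcases mul_eq_zero.1 hfin with h | h
      · exact absurd h hccne
      rcases mul_eq_zero.1 h with h | h
      · exact absurd h (ne_of_gt hCpos)
      · exact h
  have hgoal := pd_eq_dd L W hW hℒ k l (x, y) hpW
  exact hgoal.trans (main (k + l) k l rfl hkl)

/-- Key proposition: under (FH), with ∂^m_tψ(x,y) ≠ 0, ∂^n_sψ(x,y) ≠ 0, vanishing lower
pure derivatives, and m + r < n, every factor L with ∂^{1,1}ψ = L·∂²_tψ near (x,y) has
all its derivatives of order ≤ r vanishing at (x,y). -/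
theorem stmt9 (ψ : ℝ → ℝ → ℝ)
    (hψa : ∀ p : ℝ × ℝ, AnalyticAt ℝ (fun q : ℝ × ℝ => ψ q.1 q.2) p)
    (hp1 : ∀ s t : ℝ, ψ (s + 1) t = ψ s t)
    (hp2 : ∀ s t : ℝ, ψ s (t + 1) = ψ s t)
    (hFH : FH1 ψ)
    (x y : ℝ) (m n : ℕ) (hm : 2 ≤ m) (hn : 2 ≤ n)
    (hmt : pd ψ 0 m x y ≠ 0) (hns : pd ψ n 0 x y ≠ 0)
    (hs : ∀ k : ℕ, 2 ≤ k → k < n → pd ψ k 0 x y = 0)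
    (ht : ∀ l : ℕ, 2 ≤ l → l < m → pd ψ 0 l x y = 0)
    (r : ℕ) (hr : m + r < n)
    (L : ℝ → ℝ → ℝ) (V : Set (ℝ × ℝ)) (hV : IsOpen V) (hxyV : (x, y) ∈ V)
    (hLa : ∀ q ∈ V, AnalyticAt ℝ (fun q' : ℝ × ℝ => L q'.1 q'.2) q)
    (hLfac : ∀ q ∈ V, pd ψ 1 1 q.1 q.2 = L q.1 q.2 * pd ψ 0 2 q.1 q.2) :
    ∀ k l : ℕ, k + l ≤ r → pd L k l x y = 0 :=
  stmt9' ψ hψa hFH x y m n hm hn hmt hs ht r hr L V hV hxyV hLa hLfac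
end

section
/- Let ψ : ℝ² → ℝ be real-analytic, 1-periodic in each variable, and let (x₀,y₀) be a point with ψ_{st}(x₀,y₀) ≠ 0 and ψ_{tt}(x₀,y₀) = 0. Then there exist integers m₀, n₀ ≥ 2 and r* > 0 such that for all (x,y) with |(x,y)−(x₀,y₀)| < r* the following hold: (i) either ∂^{m₀}_tψ(x₀,y₀) ≠ 0 and A/2 ≤ |∂^{m₀}_tψ(x,y)| ≤ 2A with A = |∂^{m₀}_tψ(x₀,y₀)|, or ∂^{1,m₀}ψ(x₀,y₀) ≠ 0 and (1/2)|∂^{1,m₀}ψ(x₀,y₀)|·|x−x₀| ≤ |∂^{m₀}_tψ(x,y)| ≤ 2|∂^{1,m₀}ψ(x₀,y₀)|·|x−x₀|; (ii) either ∂^{n₀}_sψ(x₀,y₀) ≠ 0 and B/2 ≤ |∂^{n₀}_sψ(x,y)| ≤ 2B with B = |∂^{n₀}_sψ(x₀,y₀)|, or ∂^{n₀,1}ψ(x₀,y₀) ≠ 0 and (1/2)|∂^{n₀,1}ψ(x₀,y₀)|·|y−y₀| ≤ |∂^{n₀}_sψ(x,y)| ≤ 2|∂^{n₀,1}ψ(x₀,y₀)|·|y−y₀|;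 and (iii) D/2 ≤ |ψ_{st}(x,y)| ≤ 2D where D = |ψ_{st}(x₀,y₀)|. -/
open MeasureTheory Filter

section Aux
open Set


noncomputable def Dx (F : ℝ × ℝ → ℝ) : ℝ × ℝ → ℝ := fun p => fderiv ℝ F p (1, 0)
noncomputable def Dy (F : ℝ × ℝ → ℝ) : ℝ × ℝ → ℝ := fun p => fderiv ℝ F p (0, 1)

lemma Dx_an {F : ℝ × ℝ → ℝ} (hF : AnalyticOnNhd ℝ F univ) : AnalyticOnNhd ℝ (Dx F) univ :=
  (ContinuousLinearMap.apply ℝ ℝ ((1:ℝ), (0:ℝ))).comp_analyticOnNhd hF.fderiv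

lemma Dy_an {F : ℝ × ℝ → ℝ} (hF : AnalyticOnNhd ℝ F univ) : AnalyticOnNhd ℝ (Dy F) univ :=
  (ContinuousLinearMap.apply ℝ ℝ ((0:ℝ), (1:ℝ))).comp_analyticOnNhd hF.fderiv

lemma slice_x {F : ℝ × ℝ → ℝ} (hF : AnalyticOnNhd ℝ F univ) (x y : ℝ) :
    HasDerivAt (fun s => F (s, y)) (Dx F (x, y)) x := by
  have hd : HasFDerivAt F (fderiv ℝ F (x, y)) (x, y) :=
    ((hF (x,y) trivial).differentiableAt).hasFDerivAt
  have h1 : HasDerivAt (fun s : ℝ => (s, y)) ((1:ℝ), (0:ℝ)) x :=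
    (hasDerivAt_id x).prodMk (hasDerivAt_const x y)
  exact hd.comp_hasDerivAt x h1

lemma slice_y {F : ℝ × ℝ → ℝ} (hF : AnalyticOnNhd ℝ F univ) (x y : ℝ) :
    HasDerivAt (fun t => F (x, t)) (Dy F (x, y)) y := by
  have hd : HasFDerivAt F (fderiv ℝ F (x, y)) (x, y) :=
    ((hF (x,y) trivial).differentiableAt).hasFDerivAt
  have h1 : HasDerivAt (fun t : ℝ => (x, t)) ((0:ℝ), (1:ℝ)) y :=
    (hasDerivAt_const y x).prodMk (hasDerivAt_id y)
  exact hd.comp_hasDerivAt y h1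

lemma clairaut_s14 {F : ℝ × ℝ → ℝ} (hF : AnalyticOnNhd ℝ F univ) : Dy (Dx F) = Dx (Dy F) := by
  funext p
  have hsym : IsSymmSndFDerivAt ℝ F p :=
    ((hF.contDiff (n := 2)).contDiffAt).isSymmSndFDerivAt (by simp)
  have hfd : HasFDerivAt (fderiv ℝ F) (fderiv ℝ (fderiv ℝ F) p) p :=
    ((hF.fderiv p trivial).differentiableAt).hasFDerivAt
  have hx : HasFDerivAt (Dx F)
      ((ContinuousLinearMap.apply ℝ ℝ ((1:ℝ), (0:ℝ))).comp (fderiv ℝ (fderiv ℝ F) p)) p :=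
    (ContinuousLinearMap.apply ℝ ℝ ((1:ℝ), (0:ℝ))).hasFDerivAt.comp p hfd
  have hy : HasFDerivAt (Dy F)
      ((ContinuousLinearMap.apply ℝ ℝ ((0:ℝ), (1:ℝ))).comp (fderiv ℝ (fderiv ℝ F) p)) p :=
    (ContinuousLinearMap.apply ℝ ℝ ((0:ℝ), (1:ℝ))).hasFDerivAt.comp p hfd
  have : Dy (Dx F) p = fderiv ℝ (fderiv ℝ F) p ((0:ℝ),(1:ℝ)) ((1:ℝ),(0:ℝ)) := by
    simp only [Dy, hx.fderiv]; rfl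
  rw [this, hsym.eq]
  simp only [Dx, hy.fderiv]; rfl

lemma Dxk_an {F : ℝ × ℝ → ℝ} (hF : AnalyticOnNhd ℝ F univ) (k : ℕ) :
    AnalyticOnNhd ℝ (Dx^[k] F) univ := by
  induction k generalizing F with
  | zero => exact hF
  | succ k ih => rw [Function.iterate_succ_apply]; exact ih (Dx_an hF)

lemma Dyl_an {F : ℝ × ℝ → ℝ} (hF : AnalyticOnNhd ℝ F univ) (l : ℕ) :
    AnalyticOnNhd ℝ (Dy^[l] F) univ := by
  induction l generalizing F with
  | zero => exact hF
  | succ l ih => rw [Function.iterate_succ_apply]; exact ih (Dy_an hF)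

lemma Dy_Dxk {F : ℝ × ℝ → ℝ} (hF : AnalyticOnNhd ℝ F univ) (k : ℕ) :
    Dy (Dx^[k] F) = Dx^[k] (Dy F) := by
  induction k generalizing F with
  | zero => rfl
  | succ k ih =>
      rw [Function.iterate_succ_apply, Function.iterate_succ_apply, ih (Dx_an hF), clairaut_s14 hF]

section
variable {ψ : ℝ → ℝ → ℝ} (hψ : AnalyticOnNhd ℝ (fun q : ℝ × ℝ => ψ q.1 q.2) univ)
include hψ

lemma pd_eq : ∀ k l : ℕ, (fun p : ℝ × ℝ => pd ψ k l p.1 p.2)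
    = Dx^[k] (Dy^[l] (fun q : ℝ × ℝ => ψ q.1 q.2)) := by
  have base : ∀ l : ℕ, (fun p : ℝ × ℝ => pd ψ 0 l p.1 p.2)
      = Dy^[l] (fun q : ℝ × ℝ => ψ q.1 q.2) := by
    intro l
    induction l with
    | zero => funext p; simp [pd]
    | succ l ih =>
        funext p
        have h1 : (fun t => pd ψ 0 l p.1 t) = (fun t => Dy^[l] (fun q : ℝ × ℝ => ψ q.1 q.2) (p.1, t)) := by
          funext t; exact congrFun ih (p.1, t)
        have h2 : pd ψ 0 (l+1) p.1 p.2 = deriv (fun t => pd ψ 0 l p.1 t) p.2 := by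
          simp only [pd, iteratedDeriv_zero]
          rw [iteratedDeriv_succ]
        rw [Function.iterate_succ_apply']
        have := (slice_y (Dyl_an hψ l) p.1 p.2).deriv
        calc (fun p : ℝ × ℝ => pd ψ 0 (l+1) p.1 p.2) p = pd ψ 0 (l+1) p.1 p.2 := rfl
          _ = deriv (fun t => pd ψ 0 l p.1 t) p.2 := h2
          _ = deriv (fun t => Dy^[l] (fun q : ℝ × ℝ => ψ q.1 q.2) (p.1, t)) p.2 := by rw [h1]
          _ = Dy (Dy^[l] (fun q : ℝ × ℝ => ψ q.1 q.2)) (p.1, p.2) := this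
  intro k l
  induction k with
  | zero => exact base l
  | succ k ih =>
      funext p
      have h1 : (fun s => pd ψ k l s p.2)
          = (fun s => Dx^[k] (Dy^[l] (fun q : ℝ × ℝ => ψ q.1 q.2)) (s, p.2)) := by
        funext s; exact congrFun ih (s, p.2)
      have h2 : pd ψ (k+1) l p.1 p.2 = deriv (fun s => pd ψ k l s p.2) p.1 := by
        simp only [pd]; rw [iteratedDeriv_succ]
      rw [Function.iterate_succ_apply']
      have := (slice_x (Dxk_an (Dyl_an hψ l) k) p.1 p.2).deriv
      calc (fun p : ℝ × ℝ => pd ψ (k+1) l p.1 p.2) p = pd ψ (k+1) l p.1 p.2 := rfl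
        _ = deriv (fun s => pd ψ k l s p.2) p.1 := h2
        _ = deriv (fun s => Dx^[k] (Dy^[l] (fun q : ℝ × ℝ => ψ q.1 q.2)) (s, p.2)) p.1 := by rw [h1]
        _ = Dx (Dx^[k] (Dy^[l] (fun q : ℝ × ℝ => ψ q.1 q.2))) (p.1, p.2) := this

lemma pd_an (k l : ℕ) : AnalyticOnNhd ℝ (fun p : ℝ × ℝ => pd ψ k l p.1 p.2) univ := by
  rw [pd_eq hψ]; exact Dxk_an (Dyl_an hψ l) k

lemma pd_hasDerivAt_s (k l : ℕ) (x y : ℝ) :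
    HasDerivAt (fun x' => pd ψ k l x' y) (pd ψ (k+1) l x y) x := by
  have h1 := slice_x (Dxk_an (Dyl_an hψ l) k) x y
  have e1 : (fun s => Dx^[k] (Dy^[l] (fun q : ℝ × ℝ => ψ q.1 q.2)) (s, y)) = fun x' => pd ψ k l x' y := by
    funext s; exact (congrFun (pd_eq hψ k l) (s, y)).symm
  have e2 : Dx (Dx^[k] (Dy^[l] (fun q : ℝ × ℝ => ψ q.1 q.2))) (x, y) = pd ψ (k+1) l x y := by
    rw [← Function.iterate_succ_apply' Dx k (Dy^[l] (fun q : ℝ × ℝ => ψ q.1 q.2))]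
    exact (congrFun (pd_eq hψ (k+1) l) (x, y)).symm
  rw [e1, e2] at h1; exact h1

lemma pd_hasDerivAt_t (k l : ℕ) (x y : ℝ) :
    HasDerivAt (fun y' => pd ψ k l x y') (pd ψ k (l+1) x y) y := by
  have h1 := slice_y (Dxk_an (Dyl_an hψ l) k) x y
  have e1 : (fun t => Dx^[k] (Dy^[l] (fun q : ℝ × ℝ => ψ q.1 q.2)) (x, t)) = fun y' => pd ψ k l x y' := by
    funext t; exact (congrFun (pd_eq hψ k l) (x, t)).symm
  have e2 : Dy (Dx^[k] (Dy^[l] (fun q : ℝ × ℝ => ψ q.1 q.2))) (x, y) = pd ψ k (l+1) x y := by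
    rw [Dy_Dxk (Dyl_an hψ l) k, ← Function.iterate_succ_apply' Dy l (fun q : ℝ × ℝ => ψ q.1 q.2)]
    exact (congrFun (pd_eq hψ k (l+1)) (x, y)).symm
  rw [e1, e2] at h1; exact h1

end

lemma iteratedDeriv_add' (n m : ℕ) (f : ℝ → ℝ) :
    iteratedDeriv (n + m) f = iteratedDeriv n (iteratedDeriv m f) := by
  induction m generalizing f with
  | zero => simp
  | succ m ih =>
      rw [show n + (m+1) = (n + m) + 1 by ring, iteratedDeriv_succ', ih (deriv f),
        ← iteratedDeriv_succ']

/-- An entire 1D analytic function vanishing to infinite order at a point is zero. -/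
lemma oneD_vanish {f : ℝ → ℝ} (hf : AnalyticOnNhd ℝ f univ) (a : ℝ)
    (h : ∀ n, iteratedDeriv n f a = 0) : ∀ x, f x = 0 := by
  have hev : f =ᶠ[nhds a] 0 := by
    obtain ⟨p, r, hp⟩ := hf a trivial
    have hz : ∀ y ∈ Metric.eball (0:ℝ) r, f (a + y) = 0 := by
      intro y hy
      have hs := hp.hasSum_iteratedFDeriv hy
      have hzero : ∀ n : ℕ, ((n.factorial : ℝ)⁻¹ • (iteratedFDeriv ℝ n f a) fun _ => y) = 0 := by
        intro n
        have : (iteratedFDeriv ℝ n f a : (Fin n → ℝ) → ℝ) (fun _ => y)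
            = (∏ _i : Fin n, y) • iteratedDeriv n f a :=
          iteratedFDeriv_apply_eq_iteratedDeriv_mul_prod
        rw [this, h n]; simp
      have h0 : HasSum (fun n : ℕ => ((n.factorial : ℝ)⁻¹ • (iteratedFDeriv ℝ n f a) fun _ => y)) 0 := by
        simp only [hzero]; exact hasSum_zero
      exact hs.unique h0
    have hball : Metric.eball a r ∈ nhds a := EMetric.ball_mem_nhds a hp.r_pos
    filter_upwards [hball] with x hx
    have : x - a ∈ Metric.eball (0:ℝ) r := by
      simpa [Metric.mem_eball, edist_eq_enorm_sub] using hx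
    simpa using hz (x - a) this
  have := hf.eqOn_zero_of_preconnected_of_eventuallyEq_zero isPreconnected_univ
    (mem_univ a) hev
  exact fun x => this (mem_univ x)

/-- An entire periodic function whose derivatives of order ≥ 2 all vanish at a point
has vanishing first derivative there. -/
lemma oneD_periodic {f : ℝ → ℝ} (hf : AnalyticOnNhd ℝ f univ)
    (hper : ∀ x, f (x + 1) = f x) (a : ℝ)
    (h : ∀ n, 2 ≤ n → iteratedDeriv n f a = 0) : deriv f a = 0 := by
  set g := iteratedDeriv 2 f with hg
  have hga : AnalyticOnNhd ℝ g univ := by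
    rw [hg, iteratedDeriv_succ, iteratedDeriv_one]
    exact hf.deriv.deriv
  have hg0 : ∀ x, g x = 0 := by
    apply oneD_vanish hga a
    intro n
    rw [hg, ← iteratedDeriv_add']
    exact h (n + 2) (by omega)
  -- deriv f is constant
  have hdf : Differentiable ℝ (deriv f) := fun x => (hf.deriv x trivial).differentiableAt
  have hdd : ∀ x, deriv (deriv f) x = 0 := by
    intro x
    have : deriv (deriv f) x = iteratedDeriv 2 f x := by
      rw [iteratedDeriv_succ, iteratedDeriv_one]
    rw [this]; exact hg0 x
  have hconst : ∀ x y : ℝ, deriv f x = deriv f y :=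
    fun x y => is_const_of_deriv_eq_zero hdf hdd x y
  -- hence f x = f a + c (x - a) where c = deriv f a
  set c := deriv f a with hc
  have hlin : ∀ x, f x = f a + c * (x - a) := by
    intro x
    have hdiff : Differentiable ℝ f := fun x => (hf x trivial).differentiableAt
    have hF : Differentiable ℝ (fun x => f x - c * x) :=
      hdiff.sub ((differentiable_const c).mul differentiable_id)
    have hF' : ∀ x, deriv (fun x => f x - c * x) x = 0 := by
      intro x
      have hmul : DifferentiableAt ℝ (fun x : ℝ => c * x) x :=
        ((differentiable_const c).mul differentiable_id) x
      rw [deriv_fun_sub (hdiff x) hmul]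
      have : deriv (fun x => c * x) x = c := by
        simp [deriv_const_mul, mul_comm]
      rw [this, hconst x a, ← hc, sub_self]
    have := is_const_of_deriv_eq_zero hF hF' x a
    nlinarith [this]
  have h1 := hlin (a + 1)
  rw [hper a] at h1
  have : c = 0 := by nlinarith
  rw [hc] at this; exact this

lemma an_slice_y {G : ℝ × ℝ → ℝ} (hG : AnalyticOnNhd ℝ G univ) (x₀ : ℝ) :
    AnalyticOnNhd ℝ (fun t => G (x₀, t)) univ := fun t _ =>
  (hG (x₀, t) trivial).comp ((analyticAt_const).prod analyticAt_id)

lemma an_slice_x {G : ℝ × ℝ → ℝ} (hG : AnalyticOnNhd ℝ G univ) (y₀ : ℝ) :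
    AnalyticOnNhd ℝ (fun s => G (s, y₀)) univ := by
  intro s _
  have h1 : AnalyticAt ℝ (fun s' : ℝ => (s', y₀)) s :=
    (analyticAt_id : AnalyticAt ℝ (fun s' : ℝ => s') s).prod analyticAt_const
  have h2 := AnalyticAt.comp (f := fun s' : ℝ => ((s' : ℝ), y₀)) (hG (s, y₀) trivial) h1
  exact h2

section
variable {ψ : ℝ → ℝ → ℝ} (hψ : AnalyticOnNhd ℝ (fun q : ℝ × ℝ => ψ q.1 q.2) univ)
include hψ

lemma iter_pd_t (n k l : ℕ) (x y : ℝ) :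
    iteratedDeriv n (fun t => pd ψ k l x t) y = pd ψ k (l + n) x y := by
  induction n generalizing l with
  | zero => simp
  | succ n ih =>
      rw [iteratedDeriv_succ']
      have hd : deriv (fun t => pd ψ k l x t) = fun t => pd ψ k (l+1) x t := by
        funext t; exact (pd_hasDerivAt_t hψ k l x t).deriv
      rw [hd, ih (l+1), show l + 1 + n = l + (n+1) by ring]

lemma iter_pd_s (n k l : ℕ) (x y : ℝ) :
    iteratedDeriv n (fun s => pd ψ k l s y) x = pd ψ (k + n) l x y := by
  induction n generalizing k with
  | zero => simp
  | succ n ih =>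
      rw [iteratedDeriv_succ']
      have hd : deriv (fun s => pd ψ k l s y) = fun s => pd ψ (k+1) l s y := by
        funext s; exact (pd_hasDerivAt_s hψ k l s y).deriv
      rw [hd, ih (k+1), show k + 1 + n = k + (n+1) by ring]

lemma exists_m (hp2 : ∀ s t : ℝ, ψ s (t + 1) = ψ s t) (x₀ y₀ : ℝ)
    (hst : pd ψ 1 1 x₀ y₀ ≠ 0) : ∃ m, 2 ≤ m ∧ pd ψ 1 m x₀ y₀ ≠ 0 := by
  by_contra hcon
  push_neg at hcon
  set u : ℝ → ℝ := fun t => pd ψ 1 0 x₀ t with hu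
  have hua : AnalyticOnNhd ℝ u univ := an_slice_y (pd_an hψ 1 0) x₀
  have huper : ∀ t, u (t + 1) = u t := by
    intro t
    simp only [hu, pd, iteratedDeriv_zero]
    congr 1
    funext s
    exact hp2 s t
  have hvan : ∀ n, 2 ≤ n → iteratedDeriv n u y₀ = 0 := by
    intro n hn
    rw [hu, iter_pd_t hψ n 1 0 x₀ y₀, Nat.zero_add]
    exact hcon n hn
  have := oneD_periodic hua huper y₀ hvan
  apply hst
  have h1 : deriv u y₀ = pd ψ 1 1 x₀ y₀ := (pd_hasDerivAt_t hψ 1 0 x₀ y₀).deriv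
  rw [← h1]; exact this

lemma exists_n (hp1 : ∀ s t : ℝ, ψ (s + 1) t = ψ s t) (x₀ y₀ : ℝ)
    (hst : pd ψ 1 1 x₀ y₀ ≠ 0) : ∃ n, 2 ≤ n ∧ pd ψ n 1 x₀ y₀ ≠ 0 := by
  by_contra hcon
  push_neg at hcon
  set w : ℝ → ℝ := fun s => pd ψ 0 1 s y₀ with hw
  have hwa : AnalyticOnNhd ℝ w univ := an_slice_x (pd_an hψ 0 1) y₀
  have hwper : ∀ s, w (s + 1) = w s := by
    intro s
    simp only [hw, pd, iteratedDeriv_zero]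
    congr 1
    funext t
    exact hp1 s t
  have hvan : ∀ n, 2 ≤ n → iteratedDeriv n w x₀ = 0 := by
    intro n hn
    rw [hw, iter_pd_s hψ n 0 1 x₀ y₀]
    simpa using hcon n hn
  have := oneD_periodic hwa hwper x₀ hvan
  apply hst
  have h1 : deriv w x₀ = pd ψ 1 1 x₀ y₀ := by
    have := (pd_hasDerivAt_s hψ 0 1 x₀ y₀).deriv
    simpa [hw] using this
  rw [← h1]; exact this

lemma vanish_i (x₀ y₀ : ℝ) (h0 : ∀ m, 2 ≤ m → pd ψ 0 m x₀ y₀ = 0)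
    {m₀ : ℕ} (hm : 2 ≤ m₀) : ∀ y, pd ψ 0 m₀ x₀ y = 0 := by
  have hfa : AnalyticOnNhd ℝ (fun y => pd ψ 0 m₀ x₀ y) univ := an_slice_y (pd_an hψ 0 m₀) x₀
  apply oneD_vanish hfa y₀
  intro n
  rw [iter_pd_t hψ n 0 m₀ x₀ y₀]
  exact h0 (m₀ + n) (by omega)

lemma vanish_ii (x₀ y₀ : ℝ) (h0 : ∀ n, 2 ≤ n → pd ψ n 0 x₀ y₀ = 0)
    {n₀ : ℕ} (hn : 2 ≤ n₀) : ∀ x, pd ψ n₀ 0 x y₀ = 0 := by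
  have hfa : AnalyticOnNhd ℝ (fun x => pd ψ 0 0 x y₀) univ := an_slice_x (pd_an hψ 0 0) y₀
  have key : ∀ n x, iteratedDeriv n (fun x => pd ψ 0 0 x y₀) x = pd ψ n 0 x y₀ := by
    intro n x
    have := iter_pd_s hψ n 0 0 x y₀
    simpa using this
  set g : ℝ → ℝ := iteratedDeriv 2 (fun x => pd ψ 0 0 x y₀) with hg
  have hga : AnalyticOnNhd ℝ g univ := by
    rw [hg, iteratedDeriv_succ, iteratedDeriv_one]
    exact hfa.deriv.deriv
  have hg0 : ∀ x, g x = 0 := by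
    apply oneD_vanish hga x₀
    intro n
    rw [hg, ← iteratedDeriv_add']
    rw [key (n+2) x₀]
    exact h0 (n+2) (by omega)
  intro x
  rw [← key n₀ x, show n₀ = (n₀ - 2) + 2 by omega, iteratedDeriv_add', ← hg]
  have : g = fun _ => (0:ℝ) := funext hg0
  rw [this]
  have hz : ∀ k : ℕ, iteratedDeriv k (fun _ : ℝ => (0:ℝ)) = fun _ => (0:ℝ) := by
    intro k
    induction k with
    | zero => simp
    | succ k ih => rw [iteratedDeriv_succ, ih]; funext x; simp
  rw [hz]

end

lemma mvt_zero {G G' : ℝ → ℝ} {a : ℝ} (hG : ∀ u, HasDerivAt G (G' u) u) (h0 : G a = 0)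
    {x : ℝ} (hx : x ≠ a) : ∃ ξ, |ξ - a| < |x - a| ∧ G x = G' ξ * (x - a) := by
  rcases lt_or_gt_of_ne hx with h | h
  · obtain ⟨ξ, hξ, hs⟩ := exists_hasDerivAt_eq_slope G G' h
      (fun u _ => (hG u).continuousAt.continuousWithinAt) (fun u _ => hG u)
    refine ⟨ξ, ?_, ?_⟩
    · rw [abs_sub_comm, abs_of_pos (by linarith [hξ.2] : 0 < a - ξ),
        abs_sub_comm, abs_of_pos (by linarith : 0 < a - x)]
      linarith [hξ.1]
    · rw [h0] at hs
      have hne : a - x ≠ 0 := by intro hc; apply hx; linarith [sub_eq_zero.mp hc]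
      field_simp at hs
      nlinarith [hs]
  · obtain ⟨ξ, hξ, hs⟩ := exists_hasDerivAt_eq_slope G G' h
      (fun u _ => (hG u).continuousAt.continuousWithinAt) (fun u _ => hG u)
    refine ⟨ξ, ?_, ?_⟩
    · rw [abs_of_pos (by linarith [hξ.1] : 0 < ξ - a), abs_of_pos (by linarith : 0 < x - a)]
      linarith [hξ.2]
    · rw [h0] at hs
      have hne : x - a ≠ 0 := by intro hc; apply hx; linarith [sub_eq_zero.mp hc]
      field_simp at hs
      nlinarith [hs]

end Aux

section Main
open Set

/-- continuity: values stay ε-close on a small ball -/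
lemma near {G : ℝ × ℝ → ℝ} (hG : AnalyticOnNhd ℝ G univ) (x₀ y₀ : ℝ) {ε : ℝ} (hε : 0 < ε) :
    ∃ r > 0, ∀ x y : ℝ, max |x - x₀| |y - y₀| < r → |G (x, y) - G (x₀, y₀)| < ε := by
  have hc : ContinuousAt G (x₀, y₀) := (hG (x₀, y₀) trivial).continuousAt
  rw [Metric.continuousAt_iff] at hc
  obtain ⟨δ, hδ, h⟩ := hc ε hε
  refine ⟨δ, hδ, fun x y hxy => ?_⟩
  have hd : dist (x, y) (x₀, y₀) < δ := by
    rw [Prod.dist_eq]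
    simpa [Real.dist_eq] using hxy
  have := h hd
  rwa [Real.dist_eq] at this


/-- Stable two-sided derivative bounds near a point with ψ_{st} ≠ 0 and ψ_{tt} = 0. -/
theorem stmt14 (ψ : ℝ → ℝ → ℝ)
    (hψa : ∀ p : ℝ × ℝ, AnalyticAt ℝ (fun q : ℝ × ℝ => ψ q.1 q.2) p)
    (hp1 : ∀ s t : ℝ, ψ (s + 1) t = ψ s t)
    (hp2 : ∀ s t : ℝ, ψ s (t + 1) = ψ s t)
    (x₀ y₀ : ℝ)
    (hst : pd ψ 1 1 x₀ y₀ ≠ 0)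
    (htt : pd ψ 0 2 x₀ y₀ = 0) :
    ∃ m₀ n₀ : ℕ, 2 ≤ m₀ ∧ 2 ≤ n₀ ∧ ∃ rs : ℝ, 0 < rs ∧
      ∀ x y : ℝ, max |x - x₀| |y - y₀| < rs →
        -- (i)
        ((pd ψ 0 m₀ x₀ y₀ ≠ 0 ∧
            |pd ψ 0 m₀ x₀ y₀| / 2 ≤ |pd ψ 0 m₀ x y| ∧
            |pd ψ 0 m₀ x y| ≤ 2 * |pd ψ 0 m₀ x₀ y₀|) ∨
         (pd ψ 1 m₀ x₀ y₀ ≠ 0 ∧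
            (1 / 2) * |pd ψ 1 m₀ x₀ y₀| * |x - x₀| ≤ |pd ψ 0 m₀ x y| ∧
            |pd ψ 0 m₀ x y| ≤ 2 * |pd ψ 1 m₀ x₀ y₀| * |x - x₀|)) ∧
        -- (ii)
        ((pd ψ n₀ 0 x₀ y₀ ≠ 0 ∧
            |pd ψ n₀ 0 x₀ y₀| / 2 ≤ |pd ψ n₀ 0 x y| ∧
            |pd ψ n₀ 0 x y| ≤ 2 * |pd ψ n₀ 0 x₀ y₀|) ∨
         (pd ψ n₀ 1 x₀ y₀ ≠ 0 ∧
            (1 / 2) * |pd ψ n₀ 1 x₀ y₀| * |y - y₀| ≤ |pd ψ n₀ 0 x y| ∧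
            |pd ψ n₀ 0 x y| ≤ 2 * |pd ψ n₀ 1 x₀ y₀| * |y - y₀|)) ∧
        -- (iii)
        (|pd ψ 1 1 x₀ y₀| / 2 ≤ |pd ψ 1 1 x y| ∧
         |pd ψ 1 1 x y| ≤ 2 * |pd ψ 1 1 x₀ y₀|) := by
  have hΨ : AnalyticOnNhd ℝ (fun q : ℝ × ℝ => ψ q.1 q.2) univ := fun p _ => hψa p
  -- part (iii)
  obtain ⟨r₃, hr₃, h₃⟩ := near (pd_an hΨ 1 1) x₀ y₀
    (div_pos (abs_pos.mpr hst) two_pos)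
  -- part (i)
  have HI : ∃ m₀, 2 ≤ m₀ ∧ ∃ r₁ > 0, ∀ x y : ℝ, max |x - x₀| |y - y₀| < r₁ →
      ((pd ψ 0 m₀ x₀ y₀ ≠ 0 ∧
          |pd ψ 0 m₀ x₀ y₀| / 2 ≤ |pd ψ 0 m₀ x y| ∧
          |pd ψ 0 m₀ x y| ≤ 2 * |pd ψ 0 m₀ x₀ y₀|) ∨
       (pd ψ 1 m₀ x₀ y₀ ≠ 0 ∧
          (1 / 2) * |pd ψ 1 m₀ x₀ y₀| * |x - x₀| ≤ |pd ψ 0 m₀ x y| ∧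
          |pd ψ 0 m₀ x y| ≤ 2 * |pd ψ 1 m₀ x₀ y₀| * |x - x₀|)) := by
    by_cases hA : ∃ m, 2 ≤ m ∧ pd ψ 0 m x₀ y₀ ≠ 0
    · obtain ⟨m₀, hm₀, hAm⟩ := hA
      obtain ⟨r₁, hr₁, h₁⟩ := near (pd_an hΨ 0 m₀) x₀ y₀
        (div_pos (abs_pos.mpr hAm) two_pos)
      refine ⟨m₀, hm₀, r₁, hr₁, fun x y hxy => Or.inl ⟨hAm, ?_, ?_⟩⟩ <;>
      · have hp := h₁ x y hxy
        have h1 : |pd ψ 0 m₀ x y| - |pd ψ 0 m₀ x₀ y₀| ≤ |pd ψ 0 m₀ x y - pd ψ 0 m₀ x₀ y₀| :=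
          abs_sub_abs_le_abs_sub _ _
        have h2 : |pd ψ 0 m₀ x₀ y₀| - |pd ψ 0 m₀ x y| ≤ |pd ψ 0 m₀ x y - pd ψ 0 m₀ x₀ y₀| := by
          rw [abs_sub_comm]; exact abs_sub_abs_le_abs_sub _ _
        linarith
    · push_neg at hA
      obtain ⟨m₀, hm₀, hc⟩ := exists_m hΨ hp2 x₀ y₀ hst
      obtain ⟨r₁, hr₁, h₁⟩ := near (pd_an hΨ 1 m₀) x₀ y₀
        (div_pos (abs_pos.mpr hc) two_pos)
      have hvan : ∀ y, pd ψ 0 m₀ x₀ y = 0 := vanish_i hΨ x₀ y₀ hA hm₀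
      refine ⟨m₀, hm₀, r₁, hr₁, fun x y hxy => Or.inr ⟨hc, ?_, ?_⟩⟩ <;>
      · by_cases hx : x = x₀
        · subst hx
          rw [hvan y]
          simp
        · obtain ⟨ξ, hξlt, heq⟩ := mvt_zero
            (G := fun x' => pd ψ 0 m₀ x' y) (G' := fun x' => pd ψ 1 m₀ x' y)
            (fun u => pd_hasDerivAt_s hΨ 0 m₀ u y) (hvan y) hx
          have hξy : max |ξ - x₀| |y - y₀| < r₁ := by
            have := lt_of_lt_of_le hξlt (le_max_left |x - x₀| |y - y₀|)
            exact max_lt (lt_trans this hxy) (lt_of_le_of_lt (le_max_right _ _) hxy)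
          have hp := h₁ ξ y hξy
          have h1 : |pd ψ 1 m₀ ξ y| - |pd ψ 1 m₀ x₀ y₀| ≤ |pd ψ 1 m₀ ξ y - pd ψ 1 m₀ x₀ y₀| :=
            abs_sub_abs_le_abs_sub _ _
          have h2 : |pd ψ 1 m₀ x₀ y₀| - |pd ψ 1 m₀ ξ y| ≤ |pd ψ 1 m₀ ξ y - pd ψ 1 m₀ x₀ y₀| := by
            rw [abs_sub_comm]; exact abs_sub_abs_le_abs_sub _ _
          have habs : |pd ψ 0 m₀ x y| = |pd ψ 1 m₀ ξ y| * |x - x₀| := by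
            rw [heq, abs_mul]
          rw [habs]
          nlinarith [abs_nonneg (x - x₀), abs_nonneg (pd ψ 1 m₀ ξ y)]
  -- part (ii)
  have HII : ∃ n₀, 2 ≤ n₀ ∧ ∃ r₂ > 0, ∀ x y : ℝ, max |x - x₀| |y - y₀| < r₂ →
      ((pd ψ n₀ 0 x₀ y₀ ≠ 0 ∧
          |pd ψ n₀ 0 x₀ y₀| / 2 ≤ |pd ψ n₀ 0 x y| ∧
          |pd ψ n₀ 0 x y| ≤ 2 * |pd ψ n₀ 0 x₀ y₀|) ∨
       (pd ψ n₀ 1 x₀ y₀ ≠ 0 ∧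
          (1 / 2) * |pd ψ n₀ 1 x₀ y₀| * |y - y₀| ≤ |pd ψ n₀ 0 x y| ∧
          |pd ψ n₀ 0 x y| ≤ 2 * |pd ψ n₀ 1 x₀ y₀| * |y - y₀|)) := by
    by_cases hB : ∃ n, 2 ≤ n ∧ pd ψ n 0 x₀ y₀ ≠ 0
    · obtain ⟨n₀, hn₀, hBn⟩ := hB
      obtain ⟨r₂, hr₂, h₂⟩ := near (pd_an hΨ n₀ 0) x₀ y₀
        (div_pos (abs_pos.mpr hBn) two_pos)
      refine ⟨n₀, hn₀, r₂, hr₂, fun x y hxy => Or.inl ⟨hBn, ?_, ?_⟩⟩ <;>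
      · have hp := h₂ x y hxy
        have h1 : |pd ψ n₀ 0 x y| - |pd ψ n₀ 0 x₀ y₀| ≤ |pd ψ n₀ 0 x y - pd ψ n₀ 0 x₀ y₀| :=
          abs_sub_abs_le_abs_sub _ _
        have h2 : |pd ψ n₀ 0 x₀ y₀| - |pd ψ n₀ 0 x y| ≤ |pd ψ n₀ 0 x y - pd ψ n₀ 0 x₀ y₀| := by
          rw [abs_sub_comm]; exact abs_sub_abs_le_abs_sub _ _
        linarith
    · push_neg at hB
      obtain ⟨n₀, hn₀, hc⟩ := exists_n hΨ hp1 x₀ y₀ hst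
      obtain ⟨r₂, hr₂, h₂⟩ := near (pd_an hΨ n₀ 1) x₀ y₀
        (div_pos (abs_pos.mpr hc) two_pos)
      have hvan : ∀ x, pd ψ n₀ 0 x y₀ = 0 := vanish_ii hΨ x₀ y₀ hB hn₀
      refine ⟨n₀, hn₀, r₂, hr₂, fun x y hxy => Or.inr ⟨hc, ?_, ?_⟩⟩ <;>
      · by_cases hy : y = y₀
        · subst hy
          rw [hvan x]
          simp
        · obtain ⟨ξ, hξlt, heq⟩ := mvt_zero
            (G := fun y' => pd ψ n₀ 0 x y') (G' := fun y' => pd ψ n₀ 1 x y')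
            (fun u => pd_hasDerivAt_t hΨ n₀ 0 x u) (hvan x) hy
          have hξy : max |x - x₀| |ξ - y₀| < r₂ := by
            have := lt_of_lt_of_le hξlt (le_max_right |x - x₀| |y - y₀|)
            exact max_lt (lt_of_le_of_lt (le_max_left _ _) hxy) (lt_trans this hxy)
          have hp := h₂ x ξ hξy
          have h1 : |pd ψ n₀ 1 x ξ| - |pd ψ n₀ 1 x₀ y₀| ≤ |pd ψ n₀ 1 x ξ - pd ψ n₀ 1 x₀ y₀| :=
            abs_sub_abs_le_abs_sub _ _
          have h2 : |pd ψ n₀ 1 x₀ y₀| - |pd ψ n₀ 1 x ξ| ≤ |pd ψ n₀ 1 x ξ - pd ψ n₀ 1 x₀ y₀| := by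
            rw [abs_sub_comm]; exact abs_sub_abs_le_abs_sub _ _
          have habs : |pd ψ n₀ 0 x y| = |pd ψ n₀ 1 x ξ| * |y - y₀| := by
            rw [heq, abs_mul]
          rw [habs]
          nlinarith [abs_nonneg (y - y₀), abs_nonneg (pd ψ n₀ 1 x ξ)]
  obtain ⟨m₀, hm₀, r₁, hr₁, H₁⟩ := HI
  obtain ⟨n₀, hn₀, r₂, hr₂, H₂⟩ := HII
  refine ⟨m₀, n₀, hm₀, hn₀, min (min r₁ r₂) r₃, by positivity, fun x y hxy => ?_⟩
  have hx1 : max |x - x₀| |y - y₀| < r₁ :=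
    lt_of_lt_of_le hxy (le_trans (min_le_left _ _) (min_le_left _ _))
  have hx2 : max |x - x₀| |y - y₀| < r₂ :=
    lt_of_lt_of_le hxy (le_trans (min_le_left _ _) (min_le_right _ _))
  have hx3 : max |x - x₀| |y - y₀| < r₃ := lt_of_lt_of_le hxy (min_le_right _ _)
  refine ⟨H₁ x y hx1, H₂ x y hx2, ?_, ?_⟩ <;>
  · have hp := h₃ x y hx3
    have h1 : |pd ψ 1 1 x y| - |pd ψ 1 1 x₀ y₀| ≤ |pd ψ 1 1 x y - pd ψ 1 1 x₀ y₀| :=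
      abs_sub_abs_le_abs_sub _ _
    have h2 : |pd ψ 1 1 x₀ y₀| - |pd ψ 1 1 x y| ≤ |pd ψ 1 1 x y - pd ψ 1 1 x₀ y₀| := by
      rw [abs_sub_comm]; exact abs_sub_abs_le_abs_sub _ _
    linarith

end Main
end
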